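/- arXiv:math/0508369 — 5 statements merged into one kernel-verified Lean document; each statement's English description precedes it below -/
import Mathlib

section
/- The set of quasi-uniform probability measures on [0,1] is closed with respect to the topology of weak convergence of probability measures. -/
open MeasureTheory Filter Topology Set
open scoped ENNReal NNReal


/-- A probability measure `μ` on `[0,1]` is quasi-uniform if
`μ {x ∈ [0,1] : μ[0,x) ≤ x ≤ μ[0,x]} = 1`. -/
def QuasiUniform (μ : ProbabilityMeasure (Set.Icc (0:ℝ) 1)) : Prop :=
  (μ : Measure (Set.Icc (0:ℝ) 1))
      {x : Set.Icc (0:ℝ) 1 |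
        (μ : Measure (Set.Icc (0:ℝ) 1)) {y : Set.Icc (0:ℝ) 1 | (y : ℝ) < (x : ℝ)}
            ≤ ENNReal.ofReal (x : ℝ) ∧
          ENNReal.ofReal (x : ℝ)
            ≤ (μ : Measure (Set.Icc (0:ℝ) 1)) {y : Set.Icc (0:ℝ) 1 | (y : ℝ) ≤ (x : ℝ)}} = 1

namespace QUAux

abbrev I01 : Type := Set.Icc (0:ℝ) 1

lemma measurable_le (c : ℝ) : MeasurableSet {y : I01 | (y:ℝ) ≤ c} :=
  measurableSet_le (continuous_subtype_val.measurable) measurable_const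

lemma closed_le (c : ℝ) : IsClosed {y : I01 | (y:ℝ) ≤ c} :=
  isClosed_Iic.preimage continuous_subtype_val

lemma open_lt (c : ℝ) : IsOpen {y : I01 | (y:ℝ) < c} :=
  isOpen_Iio.preimage continuous_subtype_val

lemma open_between (a b : ℝ) : IsOpen {y : I01 | a < (y:ℝ) ∧ (y:ℝ) < b} :=
  (isOpen_Ioo (a := a) (b := b)).preimage continuous_subtype_val


lemma null_of_bad {ν : ProbabilityMeasure I01} (hν : QuasiUniform ν) {U : Set I01}
    (hU : MeasurableSet U)
    (h : ∀ x ∈ U, ¬ ((ν : Measure I01) {y : I01 | (y:ℝ) < (x:ℝ)} ≤ ENNReal.ofReal (x:ℝ) ∧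
        ENNReal.ofReal (x:ℝ) ≤ (ν : Measure I01) {y : I01 | (y:ℝ) ≤ (x:ℝ)})) :
    (ν : Measure I01) U = 0 := by
  have hsub : {x : I01 |
      (ν : Measure I01) {y : I01 | (y:ℝ) < (x:ℝ)} ≤ ENNReal.ofReal (x:ℝ) ∧
        ENNReal.ofReal (x:ℝ) ≤ (ν : Measure I01) {y : I01 | (y:ℝ) ≤ (x:ℝ)}} ⊆ Uᶜ :=
    fun x hx hxU => h x hxU hx
  have h1 : (1:ℝ≥0∞) ≤ (ν : Measure I01) Uᶜ := hν ▸ measure_mono hsub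
  have h2 := measure_add_measure_compl (μ := (ν : Measure I01)) hU
  by_contra hne
  have hpos : 0 < (ν : Measure I01) U := pos_iff_ne_zero.mpr hne
  have : (1:ℝ≥0∞) < (ν : Measure I01) U + (ν : Measure I01) Uᶜ :=
    lt_of_lt_of_le (by simpa using (ENNReal.add_lt_add_right (by simp) hpos)) (by
      exact add_le_add le_rfl h1)
  rw [h2] at this
  simp at this


lemma exists_gt_cdf_lt {μ : ProbabilityMeasure I01} {x c : ℝ}
    (h : (μ : Measure I01) {y : I01 | (y:ℝ) ≤ x} < ENNReal.ofReal c) :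
    ∃ x' : ℝ, x < x' ∧ (μ : Measure I01) {y : I01 | (y:ℝ) ≤ x'} < ENNReal.ofReal c := by
  set A : ℕ → Set I01 := fun n => {y : I01 | (y:ℝ) ≤ x + 1/(n+1)} with hAdef
  have hA : ⋂ n, A n = {y : I01 | (y:ℝ) ≤ x} := by
    ext y
    simp only [mem_iInter, hAdef, mem_setOf_eq]
    constructor
    · intro h'
      refine le_of_forall_pos_le_add fun ε hε => ?_
      obtain ⟨n, hn⟩ := exists_nat_one_div_lt hε
      exact (h' n).trans (by linarith)
    · intro h' n
      have h0 : (0:ℝ) < 1/((n:ℝ)+1) := by positivity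
      linarith
  have anti : Antitone A := by
    intro n m hnm y hy
    simp only [hAdef, mem_setOf_eq] at hy ⊢
    have h1 : 1/((m:ℝ)+1) ≤ 1/((n:ℝ)+1) := by
      apply one_div_le_one_div_of_le (by positivity)
      exact_mod_cast Nat.succ_le_succ hnm
    linarith
  have htd := tendsto_measure_iInter_atTop (μ := (μ : Measure I01))
    (fun n => (measurable_le _).nullMeasurableSet) anti ⟨0, measure_ne_top _ _⟩
  rw [hA] at htd
  have hev := htd.eventually_lt_const h
  obtain ⟨n, hn⟩ := hev.exists
  exact ⟨x + 1/(n+1), lt_add_of_pos_right x (by positivity), hn⟩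

lemma exists_lt_cdf_gt {μ : ProbabilityMeasure I01} {x c : ℝ}
    (h : ENNReal.ofReal c < (μ : Measure I01) {y : I01 | (y:ℝ) < x}) :
    ∃ x' : ℝ, x' < x ∧ ENNReal.ofReal c < (μ : Measure I01) {y : I01 | (y:ℝ) ≤ x'} := by
  set B : ℕ → Set I01 := fun n => {y : I01 | (y:ℝ) ≤ x - 1/(n+1)} with hBdef
  have hB : ⋃ n, B n = {y : I01 | (y:ℝ) < x} := by
    ext y
    simp only [mem_iUnion, hBdef, mem_setOf_eq]
    constructor
    · rintro ⟨n, hn⟩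
      have h0 : (0:ℝ) < 1/((n:ℝ)+1) := by positivity
      linarith
    · intro h'
      obtain ⟨n, hn⟩ := exists_nat_one_div_lt (sub_pos.mpr h')
      exact ⟨n, by linarith⟩
  have mono : Monotone B := by
    intro n m hnm y hy
    simp only [hBdef, mem_setOf_eq] at hy ⊢
    have h1 : 1/((m:ℝ)+1) ≤ 1/((n:ℝ)+1) := by
      apply one_div_le_one_div_of_le (by positivity)
      exact_mod_cast Nat.succ_le_succ hnm
    linarith
  have htd := tendsto_measure_iUnion_atTop (μ := (μ : Measure I01)) mono
  rw [hB] at htd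
  obtain ⟨n, hn⟩ := (htd.eventually_const_lt h).exists
  exact ⟨x - 1/(n+1), sub_lt_self x (by positivity), hn⟩


lemma case_le {μ : ProbabilityMeasure I01} {L : Filter (ProbabilityMeasure I01)} [L.NeBot]
    (hT : Tendsto (id : ProbabilityMeasure I01 → ProbabilityMeasure I01) L (𝓝 μ))
    (hev : ∀ᶠ ν in L, QuasiUniform ν) {x : I01}
    (hx : (μ : Measure I01) {y : I01 | (y:ℝ) ≤ (x:ℝ)} < ENNReal.ofReal (x:ℝ)) :
    ∃ U : Set I01, IsOpen U ∧ x ∈ U ∧ (μ : Measure I01) U = 0 := by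
  obtain ⟨x', hxx', hμx'⟩ := exists_gt_cdf_lt hx
  set v := (μ : Measure I01) {y : I01 | (y:ℝ) ≤ x'} with hv
  have hvne : v ≠ ∞ := measure_ne_top _ _
  have hvt : v.toReal < (x:ℝ) := ENNReal.toReal_lt_of_lt_ofReal hμx'
  have hvnn : 0 ≤ v.toReal := ENNReal.toReal_nonneg
  have hx0 : (0:ℝ) ≤ (x:ℝ) := x.2.1
  set c : ℝ := (v.toReal + x)/2 with hcdef
  have hc1 : v.toReal < c := by rw [hcdef]; linarith
  have hc2 : c < (x:ℝ) := by rw [hcdef]; linarith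
  have hvc : v < ENNReal.ofReal c := by
    rw [ENNReal.lt_ofReal_iff_toReal_lt hvne]; exact hc1
  have hls := ProbabilityMeasure.limsup_measure_closed_le_of_tendsto hT (closed_le x')
  simp only [id_eq] at hls
  have hev2 : ∀ᶠ (ν : ProbabilityMeasure I01) in L, (ν : Measure I01) {y : I01 | (y:ℝ) ≤ x'} < ENNReal.ofReal c :=
    eventually_lt_of_limsup_lt (lt_of_le_of_lt hls hvc)
  set U : Set I01 := {y : I01 | c < (y:ℝ) ∧ (y:ℝ) < x'} with hUdef
  have hUopen := open_between c x'
  have hevU : ∀ᶠ (ν : ProbabilityMeasure I01) in L, (ν : Measure I01) U = 0 := by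
    filter_upwards [hev, hev2] with ν h1 h2
    apply null_of_bad h1 hUopen.measurableSet
    rintro y ⟨hy1, hy2⟩ ⟨_, hgood⟩
    have hlt : (ν : Measure I01) {z : I01 | (z:ℝ) ≤ (y:ℝ)} < ENNReal.ofReal (y:ℝ) :=
      calc (ν : Measure I01) {z : I01 | (z:ℝ) ≤ (y:ℝ)}
          ≤ (ν : Measure I01) {z : I01 | (z:ℝ) ≤ x'} :=
            measure_mono (fun z hz => le_trans hz hy2.le)
        _ < ENNReal.ofReal c := h2
        _ ≤ ENNReal.ofReal (y:ℝ) := ENNReal.ofReal_le_ofReal hy1.le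
    exact absurd hgood (not_le.mpr hlt)
  have hop := ProbabilityMeasure.le_liminf_measure_open_of_tendsto hT hUopen
  simp only [id_eq] at hop
  have hlim : liminf (fun ν : ProbabilityMeasure I01 => (ν : Measure I01) U) L = 0 := by
    rw [liminf_congr hevU, liminf_const]
  refine ⟨U, hUopen, ⟨hc2, hxx'⟩, le_antisymm ?_ zero_le⟩
  rw [← hlim]; exact hop

lemma case_lt {μ : ProbabilityMeasure I01} {L : Filter (ProbabilityMeasure I01)} [L.NeBot]
    (hT : Tendsto (id : ProbabilityMeasure I01 → ProbabilityMeasure I01) L (𝓝 μ))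
    (hev : ∀ᶠ ν in L, QuasiUniform ν) {x : I01}
    (hx : ENNReal.ofReal (x:ℝ) < (μ : Measure I01) {y : I01 | (y:ℝ) < (x:ℝ)}) :
    ∃ U : Set I01, IsOpen U ∧ x ∈ U ∧ (μ : Measure I01) U = 0 := by
  obtain ⟨x', hx'x, hμx'⟩ := exists_lt_cdf_gt hx
  set x'' : ℝ := (x' + x)/2 with hxdef
  have hx''1 : x' < x'' := by rw [hxdef]; linarith
  have hx''2 : x'' < (x:ℝ) := by rw [hxdef]; linarith
  have hx0 : (0:ℝ) ≤ (x:ℝ) := x.2.1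
  set V : Set I01 := {y : I01 | (y:ℝ) < x''} with hVdef
  have hVopen := open_lt x''
  have hμV : ENNReal.ofReal (x:ℝ) < (μ : Measure I01) V :=
    lt_of_lt_of_le hμx' (measure_mono (fun z hz => lt_of_le_of_lt hz hx''1))
  have hVne : (μ : Measure I01) V ≠ ∞ := measure_ne_top _ _
  have ht : (x:ℝ) < ((μ : Measure I01) V).toReal := by
    rw [← ENNReal.ofReal_lt_iff_lt_toReal hx0 hVne]; exact hμV
  set w : ℝ := ((x:ℝ) + ((μ : Measure I01) V).toReal)/2 with hwdef
  have hw1 : (x:ℝ) < w := by rw [hwdef]; linarith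
  have hw2 : w < ((μ : Measure I01) V).toReal := by rw [hwdef]; linarith
  have hw0 : (0:ℝ) ≤ w := by rw [hwdef]; linarith
  have hwV : ENNReal.ofReal w < (μ : Measure I01) V := by
    rw [ENNReal.ofReal_lt_iff_lt_toReal hw0 hVne]; exact hw2
  have hop := ProbabilityMeasure.le_liminf_measure_open_of_tendsto hT hVopen
  simp only [id_eq] at hop
  have hev2 : ∀ᶠ (ν : ProbabilityMeasure I01) in L, ENNReal.ofReal w < (ν : Measure I01) V :=
    eventually_lt_of_lt_liminf (lt_of_lt_of_le hwV hop)
  set U : Set I01 := {y : I01 | x'' < (y:ℝ) ∧ (y:ℝ) < w} with hUdef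
  have hUopen := open_between x'' w
  have hevU : ∀ᶠ (ν : ProbabilityMeasure I01) in L, (ν : Measure I01) U = 0 := by
    filter_upwards [hev, hev2] with ν h1 h2
    apply null_of_bad h1 hUopen.measurableSet
    rintro y ⟨hy1, hy2⟩ ⟨hgood, _⟩
    have hlt : ENNReal.ofReal (y:ℝ) < (ν : Measure I01) {z : I01 | (z:ℝ) < (y:ℝ)} :=
      calc ENNReal.ofReal (y:ℝ) ≤ ENNReal.ofReal w := ENNReal.ofReal_le_ofReal hy2.le
        _ < (ν : Measure I01) V := h2
        _ ≤ (ν : Measure I01) {z : I01 | (z:ℝ) < (y:ℝ)} :=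
            measure_mono (fun z hz => lt_of_lt_of_le hz hy1.le)
    exact absurd hgood (not_le.mpr hlt)
  have hopU := ProbabilityMeasure.le_liminf_measure_open_of_tendsto hT hUopen
  simp only [id_eq] at hopU
  have hlim : liminf (fun ν : ProbabilityMeasure I01 => (ν : Measure I01) U) L = 0 := by
    rw [liminf_congr hevU, liminf_const]
  refine ⟨U, hUopen, ⟨hx''2, hw1⟩, le_antisymm ?_ zero_le⟩
  rw [← hlim]; exact hopU


theorem isClosed' :
    IsClosed {μ : ProbabilityMeasure I01 | QuasiUniform μ} := by
  apply isClosed_of_closure_subset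
  intro μ hμ
  have hne : (𝓝[{ν : ProbabilityMeasure I01 | QuasiUniform ν}] μ).NeBot :=
    mem_closure_iff_nhdsWithin_neBot.mp hμ
  set L := 𝓝[{ν : ProbabilityMeasure I01 | QuasiUniform ν}] μ with hL
  have hT : Tendsto (id : ProbabilityMeasure I01 → ProbabilityMeasure I01) L (𝓝 μ) :=
    tendsto_id.mono_left nhdsWithin_le_nhds
  have hev : ∀ᶠ ν in L, QuasiUniform ν := eventually_mem_nhdsWithin
  show QuasiUniform μ
  set G := {x : I01 | (μ : Measure I01) {y : I01 | (y:ℝ) < (x:ℝ)} ≤ ENNReal.ofReal (x:ℝ) ∧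
      ENNReal.ofReal (x:ℝ) ≤ (μ : Measure I01) {y : I01 | (y:ℝ) ≤ (x:ℝ)}} with hG
  have hGc : (μ : Measure I01) Gᶜ = 0 := by
    apply measure_null_of_locally_null
    intro x hx
    rw [hG, mem_compl_iff, mem_setOf_eq, not_and_or] at hx
    have hU : ∃ U : Set I01, IsOpen U ∧ x ∈ U ∧ (μ : Measure I01) U = 0 := by
      rcases hx with hx | hx
      · exact case_lt hT hev (not_le.mp hx)
      · exact case_le hT hev (not_le.mp hx)
    obtain ⟨U, hUo, hxU, hU0⟩ := hU
    exact ⟨U, nhdsWithin_le_nhds (hUo.mem_nhds hxU), hU0⟩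
  show (μ : Measure I01) G = 1
  have h1 : (1:ℝ≥0∞) ≤ (μ : Measure I01) G := by
    have hle := measure_union_le (μ := (μ : Measure I01)) G Gᶜ
    rw [union_compl_self, measure_univ, hGc, add_zero] at hle
    exact hle
  exact le_antisymm (le_trans (measure_mono (subset_univ _)) (le_of_eq measure_univ)) h1

end QUAux

/-- The set of quasi-uniform probability measures on `[0,1]` is closed in the topology of
weak convergence of probability measures. -/
theorem quasiUniform_isClosed :
    IsClosed {μ : ProbabilityMeasure (Set.Icc (0:ℝ) 1) | QuasiUniform μ} :=
  QUAux.isClosed'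
end

section
/- Let (Z_n)_{n ∈ ℤ} be i.i.d. {0,1}-valued random variables and define a random strict total order ⊲ on ℤ by: m ⊲ n iff (Z_m = Z_n and m < n) or Z_m < Z_n. Then the law of ⊲ is invariant under every strictly increasing map f : ℤ → ℤ, i.e., the order defined by m ⊲̂ n iff f(m) ⊲ f(n) has the same law as ⊲. -/
open MeasureTheory ProbabilityTheory

/-- A `Bool`-valued relation on `ℤ` is a strict total order. -/
def IsStrictTotalBool (R : ℤ → ℤ → Bool) : Prop :=
  (∀ a, R a a = false) ∧
  (∀ a b c, R a b = true → R b c = true → R a c = true) ∧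
  (∀ a b, a ≠ b → R a b = !R b a)

/-- Product formula for an independent family reindexed along an injective map. -/
lemma indep_prod_formula_aux {Ω : Type*} [MeasurableSpace Ω] {P : Measure Ω}
    (Z : ℤ → Ω → Bool) (hindep : iIndepFun Z P)
    (f : ℤ → ℤ) (hf : Function.Injective f) (t : Finset ℤ) (u : ℤ → Set Bool) :
    P (⋂ i ∈ t, Z (f i) ⁻¹' u i) = ∏ i ∈ t, P (Z (f i) ⁻¹' u i) := by
  classical
  have hinv : ∀ i, Function.invFun f (f i) = i := fun i => Function.leftInverse_invFun hf i
  have h := hindep.measure_inter_preimage_eq_mul (t.image f)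
      (sets := fun j => u (Function.invFun f j)) (fun i _ => .of_discrete)
  calc P (⋂ i ∈ t, Z (f i) ⁻¹' u i)
      = P (⋂ j ∈ t.image f, Z j ⁻¹' u (Function.invFun f j)) := by
        congr 1
        rw [Finset.set_biInter_finset_image]
        exact Set.iInter₂_congr fun i _ => by rw [hinv]
    _ = ∏ j ∈ t.image f, P (Z j ⁻¹' u (Function.invFun f j)) := h
    _ = ∏ i ∈ t, P (Z (f i) ⁻¹' u i) := by
        rw [Finset.prod_image (fun i _ j _ h => hf h)]
        exact Finset.prod_congr rfl fun i _ => by rw [hinv]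

/-- The joint law of an i.i.d. family is invariant under injective reindexing. -/
lemma joint_law_eq {Ω : Type*} [MeasurableSpace Ω] (P : Measure Ω) [IsProbabilityMeasure P]
    (Z : ℤ → Ω → Bool) (hmeas : ∀ n, Measurable (Z n))
    (hindep : iIndepFun Z P)
    (hident : ∀ m n : ℤ, P.map (Z m) = P.map (Z n))
    (f : ℤ → ℤ) (hf : Function.Injective f) :
    P.map (fun ω => fun i => Z (f i) ω) = P.map (fun ω => fun i => Z i ω) := by
  classical
  have hJ : Measurable (fun ω => fun i => Z i ω) :=
    measurable_pi_lambda _ hmeas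
  have hJf : Measurable (fun ω => fun i => Z (f i) ω) :=
    measurable_pi_lambda _ (fun i => hmeas (f i))
  have : IsProbabilityMeasure (P.map (fun ω => fun i => Z (f i) ω)) :=
    Measure.isProbabilityMeasure_map hJf.aemeasurable
  set m : ℤ → MeasurableSpace (ℤ → Bool) :=
    fun i => MeasurableSpace.comap (fun x : ℤ → Bool => x i) inferInstance with hm
  refine ext_of_generate_finite
      (piiUnionInter (fun i => {s | MeasurableSet[m i] s}) Set.univ) ?_ ?_ ?_ ?_
  · rw [generateFrom_piiUnionInter_measurableSet m Set.univ, iSup_univ]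
    rfl
  · exact isPiSystem_piiUnionInter _ (fun i => @MeasurableSpace.isPiSystem_measurableSet _ (m i)) _
  · rintro s ⟨t, -, g, hg, rfl⟩
    have hg' : ∀ i ∈ t, ∃ v : Set Bool, (fun x : ℤ → Bool => x i) ⁻¹' v = g i := by
      intro i hi
      obtain ⟨v, -, hv⟩ := MeasurableSpace.measurableSet_comap.mp (hg i hi)
      exact ⟨v, hv⟩
    set u : ℤ → Set Bool := fun i =>
      if h : ∃ v : Set Bool, (fun x : ℤ → Bool => x i) ⁻¹' v = g i then h.choose else ∅ with hu
    have hu' : ∀ i ∈ t, (fun x : ℤ → Bool => x i) ⁻¹' (u i) = g i := by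
      intro i hi
      simp only [hu, dif_pos (hg' i hi)]
      exact (hg' i hi).choose_spec
    have hs_eq : (⋂ i ∈ t, g i) = ⋂ i ∈ t, (fun x : ℤ → Bool => x i) ⁻¹' (u i) :=
      (Set.iInter₂_congr hu').symm
    have hsm : MeasurableSet (⋂ i ∈ t, g i) := by
      rw [hs_eq]
      exact Finset.measurableSet_biInter _ fun i _ => (measurable_pi_apply i) .of_discrete
    rw [Measure.map_apply hJf hsm, Measure.map_apply hJ hsm, hs_eq]
    have hpre1 : (fun ω => fun i => Z (f i) ω) ⁻¹'
        (⋂ i ∈ t, (fun x : ℤ → Bool => x i) ⁻¹' (u i)) = ⋂ i ∈ t, Z (f i) ⁻¹' u i := by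
      simp only [Set.preimage_iInter]; rfl
    have hpre2 : (fun ω => fun i => Z i ω) ⁻¹'
        (⋂ i ∈ t, (fun x : ℤ → Bool => x i) ⁻¹' (u i)) = ⋂ i ∈ t, Z i ⁻¹' u i := by
      simp only [Set.preimage_iInter]; rfl
    rw [hpre1, hpre2]
    have hid := indep_prod_formula_aux Z hindep id Function.injective_id t u
    simp only [id_eq] at hid
    rw [indep_prod_formula_aux Z hindep f hf t u, hid]
    refine Finset.prod_congr rfl fun i _ => ?_
    have h1 : P (Z (f i) ⁻¹' u i) = (P.map (Z (f i))) (u i) :=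
      (Measure.map_apply (hmeas (f i)) .of_discrete).symm
    have h2 : P (Z i ⁻¹' u i) = (P.map (Z i)) (u i) :=
      (Measure.map_apply (hmeas i) .of_discrete).symm
    rw [h1, h2, hident (f i) i]
  · have : IsProbabilityMeasure (P.map (fun ω => fun i => Z i ω)) :=
      Measure.isProbabilityMeasure_map hJ.aemeasurable
    simp [measure_univ]

/-- Let `(Z_n)_{n ∈ ℤ}` be i.i.d. `{0,1}`-valued random variables and order `ℤ` by
`m ⊲ n` iff (`Z_m = Z_n` and `m < n`) or `Z_m < Z_n`.  Then `⊲` is a strict total order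
and its law is invariant under every strictly increasing `f : ℤ → ℤ`. -/
theorem iid_two_class_order_I_invariant
    {Ω : Type*} [MeasurableSpace Ω] (P : Measure Ω) [IsProbabilityMeasure P]
    (Z : ℤ → Ω → Bool) (hmeas : ∀ n, Measurable (Z n))
    (hindep : iIndepFun Z P)
    (hident : ∀ m n : ℤ, P.map (Z m) = P.map (Z n))
    (T : Ω → ℤ → ℤ → Bool)
    (hT : ∀ ω m n, T ω m n = decide ((Z m ω = Z n ω ∧ m < n) ∨ Z m ω < Z n ω)) :
    (∀ ω, IsStrictTotalBool (T ω)) ∧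
      ∀ f : ℤ → ℤ, StrictMono f →
        P.map (fun ω => fun m n => T ω (f m) (f n)) = P.map T := by
  constructor
  · intro ω
    refine ⟨fun a => by simp [hT], ?_, ?_⟩
    · intro a b c hab hbc
      simp only [hT, decide_eq_true_eq] at *
      cases hZa : Z a ω <;> cases hZb : Z b ω <;> cases hZc : Z c ω <;>
        simp_all [Bool.lt_iff] <;> omega
    · intro a b hab
      have hab' : a < b ∨ b < a := by omega
      simp only [hT]
      cases hZa : Z a ω <;> cases hZb : Z b ω <;>
        rcases hab' with h | h <;> simp_all [Bool.lt_iff] <;> omega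
  · intro f hf
    set Φ : (ℤ → Bool) → (ℤ → ℤ → Bool) :=
      fun z => fun m n => decide ((z m = z n ∧ m < n) ∨ z m < z n) with hΦdef
    have hΦ : Measurable Φ := by
      apply measurable_pi_lambda; intro m
      apply measurable_pi_lambda; intro n
      have h1 : Measurable (fun z : ℤ → Bool => (z m, z n)) :=
        (measurable_pi_apply m).prodMk (measurable_pi_apply n)
      exact (measurable_of_countable
          (fun p : Bool × Bool => decide ((p.1 = p.2 ∧ m < n) ∨ p.1 < p.2))).comp h1
    have hJ : Measurable (fun ω => fun i => Z i ω) := measurable_pi_lambda _ hmeas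
    have hJf : Measurable (fun ω => fun i => Z (f i) ω) :=
      measurable_pi_lambda _ (fun i => hmeas (f i))
    have hT1 : T = fun ω => Φ (fun i => Z i ω) := by
      funext ω m n; rw [hT]
    have hT2 : (fun ω => fun m n => T ω (f m) (f n)) =
        fun ω => Φ (fun i => Z (f i) ω) := by
      funext ω m n
      rw [hT]
      exact decide_eq_decide.mpr (by rw [hf.lt_iff_lt])
    rw [hT2, hT1]
    calc P.map (fun ω => Φ (fun i => Z (f i) ω))
        = (P.map (fun ω => fun i => Z (f i) ω)).map Φ :=
          (Measure.map_map hΦ hJf).symm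
      _ = (P.map (fun ω => fun i => Z i ω)).map Φ := by
          rw [joint_law_eq P Z hmeas hindep hident f hf.injective]
      _ = P.map (fun ω => Φ (fun i => Z i ω)) := Measure.map_map hΦ hJ
end

section
/- Fix a strict total order ⊲ on ℤ. For n ∈ ℤ define X̄_n = limsup_{N→∞} (1/N) Σ_{k=1}^N 1_{k ⊲ n} and X̲_n = liminf_{N→∞} (1/N) Σ_{k=1}^N 1_{k ⊲ n}. If the empirical measures ν^N given by ν^N[0,x] = (1/N) Σ_{k=1}^N 1_{X̄_k ≤ x} converge weakly to a probability measure ν on [0,1], then ν[0, X̄_1) ≤ X̲_1 ≤ X̄_1 ≤ ν[0, X̄_1]. -/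
open MeasureTheory Filter

/-- `X̄_n`, the limsup relative rank of `n` under the order `R`. -/
noncomputable def Xbar (R : ℤ → ℤ → Bool) (n : ℤ) : ℝ :=
  limsup (fun N : ℕ => (N : ℝ)⁻¹ * ∑ k ∈ Finset.Icc (1:ℤ) (N:ℤ), if R k n then (1:ℝ) else 0)
    atTop

/-- `X̲_n`, the liminf relative rank of `n` under the order `R`. -/
noncomputable def Xlow (R : ℤ → ℤ → Bool) (n : ℤ) : ℝ :=
  liminf (fun N : ℕ => (N : ℝ)⁻¹ * ∑ k ∈ Finset.Icc (1:ℤ) (N:ℤ), if R k n then (1:ℝ) else 0)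
    atTop

/-! ### Auxiliary definitions and lemmas -/

/-- The empirical rank sequence. -/
noncomputable def empS (R : ℤ → ℤ → Bool) (n : ℤ) (N : ℕ) : ℝ :=
  (N : ℝ)⁻¹ * ∑ k ∈ Finset.Icc (1:ℤ) (N:ℤ), if R k n then (1:ℝ) else 0

lemma Xbar_eq_limsup (R : ℤ → ℤ → Bool) (n : ℤ) : Xbar R n = limsup (empS R n) atTop := rfl

lemma Xlow_eq_liminf (R : ℤ → ℤ → Bool) (n : ℤ) : Xlow R n = liminf (empS R n) atTop := rfl

lemma avg_nonneg {f : ℤ → ℝ} (hf : ∀ k, 0 ≤ f k) (N : ℕ) :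
    0 ≤ (N : ℝ)⁻¹ * ∑ k ∈ Finset.Icc (1:ℤ) (N:ℤ), f k := by
  apply mul_nonneg (by positivity)
  exact Finset.sum_nonneg fun i _ => hf i

lemma avg_le_one {f : ℤ → ℝ} (hf : ∀ k, f k ≤ 1) (N : ℕ) :
    (N : ℝ)⁻¹ * ∑ k ∈ Finset.Icc (1:ℤ) (N:ℤ), f k ≤ 1 := by
  rcases Nat.eq_zero_or_pos N with h | h
  · simp [h]
  · have hcard : ((Finset.Icc (1:ℤ) (N:ℤ)).card : ℝ) = N := by
      rw [Int.card_Icc]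
      simp
    have hsum : (∑ k ∈ Finset.Icc (1:ℤ) (N:ℤ), f k) ≤ N := by
      calc (∑ k ∈ Finset.Icc (1:ℤ) (N:ℤ), f k)
          ≤ ∑ _k ∈ Finset.Icc (1:ℤ) (N:ℤ), (1:ℝ) := Finset.sum_le_sum fun i _ => hf i
        _ = ((Finset.Icc (1:ℤ) (N:ℤ)).card : ℝ) := by simp
        _ = N := hcard
    have hN : (0:ℝ) < N := by exact_mod_cast h
    calc (N : ℝ)⁻¹ * ∑ k ∈ Finset.Icc (1:ℤ) (N:ℤ), f k
        ≤ (N : ℝ)⁻¹ * N := by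
          exact mul_le_mul_of_nonneg_left hsum (by positivity)
      _ = 1 := by field_simp

lemma empS_nonneg (R : ℤ → ℤ → Bool) (n : ℤ) (N : ℕ) : 0 ≤ empS R n N :=
  avg_nonneg (fun k => by split <;> norm_num) N

lemma empS_le_one (R : ℤ → ℤ → Bool) (n : ℤ) (N : ℕ) : empS R n N ≤ 1 :=
  avg_le_one (fun k => by split <;> norm_num) N

lemma Xbar_mono (R : ℤ → ℤ → Bool) (a b : ℤ) (h : ∀ j, R j a = true → R j b = true) :
    Xbar R a ≤ Xbar R b := by
  rw [Xbar_eq_limsup, Xbar_eq_limsup]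
  refine limsup_le_limsup (Eventually.of_forall fun N => ?_)
    ((isBoundedUnder_of ⟨0, empS_nonneg R a⟩).isCoboundedUnder_le)
    (isBoundedUnder_of ⟨1, empS_le_one R b⟩)
  unfold empS
  apply mul_le_mul_of_nonneg_left _ (by positivity)
  apply Finset.sum_le_sum
  intro i _
  by_cases hi : R i a = true
  · simp [hi, h i hi]
  · simp only [Bool.not_eq_true] at hi
    simp only [hi, Bool.false_eq_true, if_false]
    split <;> norm_num

lemma key_le (R : ℤ → ℤ → Bool) (hR : IsStrictTotalBool R) (k : ℤ) (hk : R k 1 = true) :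
    Xbar R k ≤ Xbar R 1 :=
  Xbar_mono R k 1 fun j hj => hR.2.1 j k 1 hj hk

lemma key_ge (R : ℤ → ℤ → Bool) (hR : IsStrictTotalBool R) (k : ℤ) (hk : ¬ R k 1 = true) :
    Xbar R 1 ≤ Xbar R k := by
  by_cases h1 : k = 1
  · subst h1; exact le_refl _
  · have hkf : R k 1 = false := by simpa using hk
    have h1k : R 1 k = true := by
      have := hR.2.2 k 1 h1
      rw [hkf] at this
      simpa using this.symm
    exact Xbar_mono R 1 k fun j hj => hR.2.1 j 1 k hj h1k

/-- A piecewise-linear bump: equal to `1` on `Iic y`, `0` on `Ici x` (when `y < x`). -/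
noncomputable def bump (y x : ℝ) : BoundedContinuousFunction ℝ ℝ :=
  BoundedContinuousFunction.mkOfBound
    ⟨fun t => max 0 (min 1 ((x - t) / (x - y))), by fun_prop⟩ 1
    (by
      intro s t
      have hmem : ∀ u : ℝ, max 0 (min 1 ((x - u) / (x - y))) ∈ Set.Icc (0:ℝ) 1 :=
        fun u => ⟨le_max_left _ _, max_le zero_le_one (min_le_left _ _)⟩
      have := Real.dist_le_of_mem_Icc (hmem s) (hmem t)
      simpa using this)

lemma bump_apply (y x t : ℝ) : bump y x t = max 0 (min 1 ((x - t) / (x - y))) := rfl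

lemma bump_nonneg (y x t : ℝ) : 0 ≤ bump y x t := le_max_left _ _

lemma bump_le_one (y x t : ℝ) : bump y x t ≤ 1 :=
  max_le zero_le_one (min_le_left _ _)

lemma bump_eq_one {y x t : ℝ} (h : y < x) (ht : t ≤ y) : bump y x t = 1 := by
  rw [bump_apply]
  have hpos : 0 < x - y := sub_pos.2 h
  have h1 : (1:ℝ) ≤ (x - t) / (x - y) := (one_le_div hpos).2 (by linarith)
  rw [min_eq_left h1, max_eq_right zero_le_one]

lemma bump_eq_zero {y x t : ℝ} (h : y < x) (ht : x ≤ t) : bump y x t = 0 := by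
  rw [bump_apply]
  have hpos : 0 < x - y := sub_pos.2 h
  have h1 : (x - t) / (x - y) ≤ 0 := div_nonpos_of_nonpos_of_nonneg (by linarith) hpos.le
  rw [max_eq_left (le_trans (min_le_right _ _) h1)]

/-- Fix a strict total order `R` on `ℤ`.  If the empirical measures
`ν^N = (1/N) Σ_{k=1}^N δ_{X̄_k}` converge weakly to a probability measure `ν` on `[0,1]`,
then `ν[0, X̄₁) ≤ X̲₁ ≤ X̄₁ ≤ ν[0, X̄₁]`. -/
theorem empirical_bounds (R : ℤ → ℤ → Bool) (hR : IsStrictTotalBool R)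
    (ν : Measure ℝ) (hν : IsProbabilityMeasure ν) (hνsupp : ν (Set.Icc (0:ℝ) 1)ᶜ = 0)
    (hweak : ∀ g : BoundedContinuousFunction ℝ ℝ,
      Tendsto (fun N : ℕ => (N : ℝ)⁻¹ * ∑ k ∈ Finset.Icc (1:ℤ) (N:ℤ), g (Xbar R k)) atTop
        (nhds (∫ t, g t ∂ν))) :
    (ν (Set.Ico 0 (Xbar R 1))).toReal ≤ Xlow R 1 ∧
      Xlow R 1 ≤ Xbar R 1 ∧
      Xbar R 1 ≤ (ν (Set.Icc 0 (Xbar R 1))).toReal := by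
  haveI := hν
  set x := Xbar R 1 with hxdef
  have hbddA : IsBoundedUnder (· ≤ ·) atTop (empS R 1) := isBoundedUnder_of ⟨1, empS_le_one R 1⟩
  have hbddB : IsBoundedUnder (· ≥ ·) atTop (empS R 1) := isBoundedUnder_of ⟨0, empS_nonneg R 1⟩
  -- middle inequality
  have hmid : Xlow R 1 ≤ Xbar R 1 := by
    rw [Xbar_eq_limsup, Xlow_eq_liminf]
    exact liminf_le_limsup hbddA hbddB
  have hXlow_nonneg : (0:ℝ) ≤ Xlow R 1 := by
    rw [Xlow_eq_liminf]
    exact le_liminf_of_le hbddA.isCoboundedUnder_ge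
      (Eventually.of_forall (empS_nonneg R 1))
  have hx0 : (0:ℝ) ≤ x := le_trans hXlow_nonneg hmid
  have hIio0 : ν (Set.Iio 0) = 0 := by
    refine measure_mono_null (fun t ht => ?_) hνsupp
    simp only [Set.mem_compl_iff, Set.mem_Icc, not_and_or, not_le]
    exact Or.inl (Set.mem_Iio.1 ht)
  -- Part 1 : ν [0, x) ≤ Xlow
  have hkey1 : ∀ y, y < x → (ν (Set.Iic y)).toReal ≤ Xlow R 1 := by
    intro y hy
    set g := bump y x with hg
    have hgle : ∀ N : ℕ, (N:ℝ)⁻¹ * ∑ k ∈ Finset.Icc (1:ℤ) (N:ℤ), g (Xbar R k) ≤ empS R 1 N := by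
      intro N
      unfold empS
      apply mul_le_mul_of_nonneg_left _ (by positivity)
      apply Finset.sum_le_sum
      intro k _
      by_cases hk : R k 1 = true
      · simp only [hk, if_true]
        exact bump_le_one y x _
      · have hgk : g (Xbar R k) = 0 := bump_eq_zero hy (key_ge R hR k hk)
        simp [hgk, hk]
    have hgnn : ∀ N : ℕ, 0 ≤ (N:ℝ)⁻¹ * ∑ k ∈ Finset.Icc (1:ℤ) (N:ℤ), g (Xbar R k) :=
      fun N => avg_nonneg (fun k => bump_nonneg y x _) N
    have hlim := hweak g
    have hint_le : ∫ t, g t ∂ν ≤ Xlow R 1 := by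
      rw [Xlow_eq_liminf, ← hlim.liminf_eq]
      exact liminf_le_liminf (Eventually.of_forall hgle)
        (isBoundedUnder_of ⟨0, hgnn⟩) hbddA.isCoboundedUnder_ge
    refine le_trans ?_ hint_le
    rw [← measureReal_def, ← integral_indicator_one measurableSet_Iic]
    refine integral_mono ((integrable_const (1:ℝ)).indicator measurableSet_Iic)
      (g.integrable ν) (fun t => ?_)
    by_cases ht : t ∈ Set.Iic y
    · rw [Set.indicator_of_mem ht]
      exact le_of_eq (bump_eq_one hy ht).symm
    · rw [Set.indicator_of_notMem ht]
      exact bump_nonneg y x t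
  have hpart1 : (ν (Set.Ico 0 x)).toReal ≤ Xlow R 1 := by
    have hIco : ν (Set.Ico 0 x) = ν (Set.Iio x) := by
      refine le_antisymm (measure_mono Set.Ico_subset_Iio_self) ?_
      calc ν (Set.Iio x) ≤ ν (Set.Ico 0 x ∪ Set.Iio 0) := by
            refine measure_mono fun t ht => ?_
            rcases le_or_gt 0 t with h0 | h0
            · exact Or.inl ⟨h0, ht⟩
            · exact Or.inr h0
        _ ≤ ν (Set.Ico 0 x) + ν (Set.Iio 0) := measure_union_le _ _
        _ = ν (Set.Ico 0 x) := by rw [hIio0, add_zero]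
    rw [hIco]
    have hmono : Monotone (fun m : ℕ => Set.Iic (x - 1/((m:ℝ)+1))) := by
      intro a b hab
      apply Set.Iic_subset_Iic.2
      have : 1/((b:ℝ)+1) ≤ 1/((a:ℝ)+1) := by
        apply one_div_le_one_div_of_le (by positivity)
        exact_mod_cast Nat.succ_le_succ hab
      linarith
    have hunion : (⋃ m : ℕ, Set.Iic (x - 1/((m:ℝ)+1))) = Set.Iio x := by
      ext t
      simp only [Set.mem_iUnion, Set.mem_Iic, Set.mem_Iio]
      constructor
      · rintro ⟨m, hm⟩
        have : 0 < 1/((m:ℝ)+1) := by positivity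
        linarith
      · intro ht
        obtain ⟨m, hm⟩ := exists_nat_one_div_lt (sub_pos.2 ht)
        exact ⟨m, by linarith⟩
    have htend := tendsto_measure_iUnion_atTop (μ := ν) hmono
    rw [hunion] at htend
    have hfin : ν (Set.Iio x) ≠ ⊤ := (measure_lt_top ν _).ne
    have htendR := (ENNReal.tendsto_toReal hfin).comp htend
    refine le_of_tendsto htendR (Eventually.of_forall fun m => ?_)
    have h1pos : (0:ℝ) < 1/((m:ℝ)+1) := by positivity
    exact hkey1 _ (by linarith)
  -- Part 3 : x ≤ ν [0, x]
  have hkey2 : ∀ z, x < z → x ≤ (ν (Set.Iic z)).toReal := by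
    intro z hz
    set g := bump x z with hg
    have hge : ∀ N : ℕ, empS R 1 N ≤ (N:ℝ)⁻¹ * ∑ k ∈ Finset.Icc (1:ℤ) (N:ℤ), g (Xbar R k) := by
      intro N
      unfold empS
      apply mul_le_mul_of_nonneg_left _ (by positivity)
      apply Finset.sum_le_sum
      intro k _
      by_cases hk : R k 1 = true
      · have hle : Xbar R k ≤ x := key_le R hR k hk
        rw [bump_eq_one hz hle]
        simp [hk]
      · simp only [hk, if_false]
        exact bump_nonneg x z _
    have hlim := hweak g
    have hx_le : x ≤ ∫ t, g t ∂ν := by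
      rw [hxdef, Xbar_eq_limsup, ← hlim.limsup_eq]
      exact limsup_le_limsup (Eventually.of_forall hge)
        hbddB.isCoboundedUnder_le
        (isBoundedUnder_of ⟨1, fun N => avg_le_one (fun k => bump_le_one x z _) N⟩)
    refine le_trans hx_le ?_
    rw [← measureReal_def, ← integral_indicator_one measurableSet_Iic]
    refine integral_mono (g.integrable ν)
      ((integrable_const (1:ℝ)).indicator measurableSet_Iic) (fun t => ?_)
    by_cases ht : t ∈ Set.Iic z
    · rw [Set.indicator_of_mem ht]
      exact bump_le_one x z t
    · rw [Set.indicator_of_notMem ht]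
      have htz : z ≤ t := le_of_lt (lt_of_not_ge ht)
      exact le_of_eq (bump_eq_zero hz htz)
  have hpart3 : x ≤ (ν (Set.Icc 0 x)).toReal := by
    have hIcc : ν (Set.Icc 0 x) = ν (Set.Iic x) := by
      refine le_antisymm (measure_mono Set.Icc_subset_Iic_self) ?_
      calc ν (Set.Iic x) ≤ ν (Set.Icc 0 x ∪ Set.Iio 0) := by
            refine measure_mono fun t ht => ?_
            rcases le_or_gt 0 t with h0 | h0
            · exact Or.inl ⟨h0, ht⟩
            · exact Or.inr h0
        _ ≤ ν (Set.Icc 0 x) + ν (Set.Iio 0) := measure_union_le _ _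
        _ = ν (Set.Icc 0 x) := by rw [hIio0, add_zero]
    rw [hIcc]
    have hanti : Antitone (fun m : ℕ => Set.Iic (x + 1/((m:ℝ)+1))) := by
      intro a b hab
      apply Set.Iic_subset_Iic.2
      have : 1/((b:ℝ)+1) ≤ 1/((a:ℝ)+1) := by
        apply one_div_le_one_div_of_le (by positivity)
        exact_mod_cast Nat.succ_le_succ hab
      linarith
    have hinter : (⋂ m : ℕ, Set.Iic (x + 1/((m:ℝ)+1))) = Set.Iic x := by
      ext t
      simp only [Set.mem_iInter, Set.mem_Iic]
      constructor
      · intro h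
        by_contra ht
        push_neg at ht
        obtain ⟨m, hm⟩ := exists_nat_one_div_lt (sub_pos.2 ht)
        have := h m
        linarith
      · intro ht m
        have : 0 < 1/((m:ℝ)+1) := by positivity
        linarith
    have htend := tendsto_measure_iInter_atTop (μ := ν)
      (fun m => measurableSet_Iic.nullMeasurableSet) hanti ⟨0, (measure_lt_top ν _).ne⟩
    rw [hinter] at htend
    have hfin : ν (Set.Iic x) ≠ ⊤ := (measure_lt_top ν _).ne
    have htendR := (ENNReal.tendsto_toReal hfin).comp htend
    refine ge_of_tendsto htendR (Eventually.of_forall fun m => ?_)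
    have h1pos : (0:ℝ) < 1/((m:ℝ)+1) := by positivity
    exact hkey2 _ (by linarith)
  exact ⟨hpart1, hmid, hpart3⟩
end

section
/- If ⊲ is a random strict total order on ℤ whose law is invariant under all strictly increasing maps f : ℤ → ℤ, then the family of {0,1}-valued random variables (1_{k ⊲ 0} : k > 0) is exchangeable. -/
open MeasureTheory

namespace IndExch

variable {Ω : Type*} [MeasurableSpace Ω]

/-- The cylinder event determined by a finite set of coordinates and a pattern. -/
def EvF (F : Ω → ℤ → Bool) (s : Finset ℤ) (e : ℤ → Bool) : Set Ω :=
  {ω | ∀ k ∈ s, F ω k = e k}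

lemma EvF_meas {F : Ω → ℤ → Bool} (hF : Measurable F) (s : Finset ℤ) (e : ℤ → Bool) :
    MeasurableSet (EvF F s e) := by
  have h : EvF F s e = ⋂ k ∈ (s : Set ℤ), (fun ω => F ω k) ⁻¹' {e k} := by
    ext ω; simp [EvF]
  rw [h]
  exact MeasurableSet.biInter s.countable_toSet fun k _ =>
    ((measurable_pi_apply k).comp hF) (measurableSet_singleton _)

variable (P : Measure Ω)

lemma split {F : Ω → ℤ → Bool} (hF : Measurable F) {j : ℤ} {s : Finset ℤ} (hj : j ∉ s)
    (e : ℤ → Bool) :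
    P (EvF F s e) = P (EvF F (insert j s) (Function.update e j true))
      + P (EvF F (insert j s) (Function.update e j false)) := by
  have hdisj : Disjoint (EvF F (insert j s) (Function.update e j true))
      (EvF F (insert j s) (Function.update e j false)) := by
    rw [Set.disjoint_left]
    intro ω h1 h2
    have e1 := h1 j (s.mem_insert_self j)
    have e2 := h2 j (s.mem_insert_self j)
    rw [Function.update_self] at e1 e2
    rw [e1] at e2
    exact Bool.noConfusion e2
  have hun : EvF F s e = EvF F (insert j s) (Function.update e j true)
      ∪ EvF F (insert j s) (Function.update e j false) := by
    ext ω
    simp only [EvF, Set.mem_setOf_eq, Set.mem_union]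
    constructor
    · intro h
      cases hb : F ω j
      · right
        intro k hk
        rcases Finset.mem_insert.mp hk with rfl | hk'
        · rw [Function.update_self]; exact hb
        · rw [Function.update_of_ne (by rintro rfl; exact hj hk')]
          exact h k hk'
      · left
        intro k hk
        rcases Finset.mem_insert.mp hk with rfl | hk'
        · rw [Function.update_self]; exact hb
        · rw [Function.update_of_ne (by rintro rfl; exact hj hk')]
          exact h k hk'
    · rintro (h | h) <;> intro k hk <;>
      · have h2 := h k (Finset.mem_insert_of_mem hk)
        rwa [Function.update_of_ne (by rintro rfl; exact hj hk)] at h2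
  rw [hun, measure_union hdisj (EvF_meas hF _ _)]

variable (T : Ω → ℤ → ℤ → Bool)

/-- The indicator family. -/
def X : Ω → ℤ → Bool := fun ω k => T ω k 0

lemma meas_comp (hmeas : Measurable T) (u : ℤ → ℤ) :
    Measurable (fun ω => fun k : ℤ => T ω (u k) 0) :=
  measurable_pi_lambda _ fun k =>
    (measurable_pi_apply (0 : ℤ)).comp ((measurable_pi_apply (u k)).comp hmeas)

lemma meas_X (hmeas : Measurable T) : Measurable (X T) := meas_comp T hmeas id

lemma spread (hmeas : Measurable T)
    (hinv : ∀ f : ℤ → ℤ, StrictMono f →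
      P.map (fun ω => fun m n => T ω (f m) (f n)) = P.map T)
    {f : ℤ → ℤ} (hf : StrictMono f) (hf0 : f 0 = 0) (s : Finset ℤ) (e : ℤ → Bool) :
    P (EvF (X T) (s.image f) e) = P (EvF (X T) s fun k => e (f k)) := by
  have hA : MeasurableSet {g : ℤ → ℤ → Bool | ∀ k ∈ s, g k 0 = e (f k)} := by
    have h : {g : ℤ → ℤ → Bool | ∀ k ∈ s, g k 0 = e (f k)}
        = ⋂ k ∈ (s : Set ℤ), (fun g : ℤ → ℤ → Bool => g k 0) ⁻¹' {e (f k)} := by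
      ext g; simp
    rw [h]
    exact MeasurableSet.biInter s.countable_toSet fun k _ =>
      ((measurable_pi_apply (0 : ℤ)).comp (measurable_pi_apply k)) (measurableSet_singleton _)
  have hF : Measurable fun ω => fun m n => T ω (f m) (f n) :=
    measurable_pi_lambda _ fun m => measurable_pi_lambda _ fun n =>
      (measurable_pi_apply (f n)).comp ((measurable_pi_apply (f m)).comp hmeas)
  have h1 := congrArg
    (fun μ : Measure (ℤ → ℤ → Bool) => μ {g | ∀ k ∈ s, g k 0 = e (f k)}) (hinv f hf)
  rw [Measure.map_apply hF hA, Measure.map_apply hmeas hA] at h1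
  have hL : (fun ω => fun m n => T ω (f m) (f n)) ⁻¹' {g | ∀ k ∈ s, g k 0 = e (f k)}
      = EvF (X T) (s.image f) e := by
    ext ω
    simp only [Set.mem_preimage, Set.mem_setOf_eq, EvF, Finset.forall_mem_image, X, hf0]
  have hR : T ⁻¹' {g | ∀ k ∈ s, g k 0 = e (f k)} = EvF (X T) s fun k => e (f k) := rfl
  rw [hL, hR] at h1
  exact h1

/-- The strictly increasing map skipping the value `i`. -/
def fskip (i : ℤ) : ℤ → ℤ := fun k => if k < i then k else k + 1

lemma fskip_mono (i : ℤ) : StrictMono (fskip i) := by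
  intro a b h; simp only [fskip]; split_ifs <;> omega

lemma fskip_zero {i : ℤ} (hi : 1 ≤ i) : fskip i 0 = 0 := by
  simp only [fskip]; rw [if_pos]; omega

lemma fskip_ne (i k : ℤ) : fskip i k ≠ i := by
  simp only [fskip]; split_ifs <;> omega

lemma skip (hmeas : Measurable T)
    (hinv : ∀ f : ℤ → ℤ, StrictMono f →
      P.map (fun ω => fun m n => T ω (f m) (f n)) = P.map T)
    (i : ℤ) (hi : 1 ≤ i) (u : Finset ℤ) (e : ℤ → Bool) :
    P (EvF (X T) u fun k => e (fskip i k)) =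
      P (EvF (X T) (insert i (u.image (fskip i))) (Function.update e i true))
        + P (EvF (X T) (insert i (u.image (fskip i))) (Function.update e i false)) := by
  have hnot : i ∉ u.image (fskip i) := by
    simp only [Finset.mem_image]
    rintro ⟨k, hk, hki⟩
    exact fskip_ne i k hki
  rw [← spread P T hmeas hinv (fskip_mono i) (fskip_zero hi) u e]
  exact split P (meas_X T hmeas) hnot e

lemma adj_core [IsProbabilityMeasure P] (hmeas : Measurable T)
    (hinv : ∀ f : ℤ → ℤ, StrictMono f →
      P.map (fun ω => fun m n => T ω (f m) (f n)) = P.map T)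
    (i : ℤ) (hi : 1 ≤ i) (s : Finset ℤ) (his : i ∈ s) (hi1 : i + 1 ∈ s)
    (e : ℤ → Bool) (hei : e i = true) (hei1 : e (i + 1) = false) :
    P (EvF (X T) s (Function.update (Function.update e i false) (i + 1) true))
      = P (EvF (X T) s e) := by
  set r : ℤ → ℤ := fun k => if k ≤ i then k else k - 1 with hr
  set u : Finset ℤ := s.image r with hu
  have him1 : insert i (u.image (fskip i)) = s := by
    have h1 : u.image (fskip i) = s.erase i := by
      rw [hu, Finset.image_image]
      have hcomp : (fskip i ∘ r) = fun k => if k = i then i + 1 else k := by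
        funext k; simp only [Function.comp, fskip, hr]; split_ifs <;> omega
      rw [hcomp]
      ext m
      simp only [Finset.mem_image, Finset.mem_erase]
      constructor
      · rintro ⟨k, hk, rfl⟩
        split_ifs with h
        · exact ⟨by omega, hi1⟩
        · exact ⟨h, hk⟩
      · rintro ⟨hmi, hms⟩
        exact ⟨m, hms, if_neg hmi⟩
    rw [h1, Finset.insert_erase his]
  have him2 : insert (i + 1) (u.image (fskip (i + 1))) = s := by
    have h1 : u.image (fskip (i + 1)) = s.erase (i + 1) := by
      rw [hu, Finset.image_image]
      have hcomp : (fskip (i + 1) ∘ r) = fun k => if k = i + 1 then i else k := by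
        funext k; simp only [Function.comp, fskip, hr]; split_ifs <;> omega
      rw [hcomp]
      ext m
      simp only [Finset.mem_image, Finset.mem_erase]
      constructor
      · rintro ⟨k, hk, rfl⟩
        split_ifs with h
        · exact ⟨by omega, his⟩
        · exact ⟨h, hk⟩
      · rintro ⟨hmi, hms⟩
        exact ⟨m, hms, if_neg hmi⟩
    rw [h1, Finset.insert_erase hi1]
  have key1 := skip P T hmeas hinv i hi u e
  rw [him1] at key1
  set e' : ℤ → Bool := Function.update e i false with he'
  have key2 := skip P T hmeas hinv (i + 1) (by omega) u e'
  rw [him2] at key2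
  have heq : (fun k => e (fskip i k)) = fun k => e' (fskip (i + 1) k) := by
    funext k
    rcases lt_trichotomy k i with hlt | heqk | hgt
    · simp only [fskip, if_pos hlt, if_pos (show k < i + 1 by omega)]
      rw [he', Function.update_of_ne (by omega)]
    · subst heqk
      simp only [fskip, if_neg (lt_irrefl k), if_pos (show k < k + 1 by omega)]
      rw [he', Function.update_self]
      exact hei1
    · simp only [fskip, if_neg (show ¬ k < i by omega), if_neg (show ¬ k < i + 1 by omega)]
      rw [he', Function.update_of_ne (by omega)]
  rw [heq] at key1
  have hue : Function.update e i true = e := by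
    rw [← hei]; exact Function.update_eq_self i e
  have hue2 : Function.update e' (i + 1) false = e' := by
    have h2 : e' (i + 1) = false := by
      rw [he', Function.update_of_ne (by omega)]; exact hei1
    rw [← h2]; exact Function.update_eq_self (i + 1) e'
  rw [hue] at key1
  rw [hue2] at key2
  have hfin : P (EvF (X T) s e') ≠ ⊤ := measure_ne_top P _
  have hmain : P (EvF (X T) s (Function.update e' (i + 1) true)) + P (EvF (X T) s e')
      = P (EvF (X T) s e) + P (EvF (X T) s e') := by
    rw [← key2, key1]
  exact (ENNReal.add_left_inj hfin).mp hmain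

lemma adjacent [IsProbabilityMeasure P] (hmeas : Measurable T)
    (hinv : ∀ f : ℤ → ℤ, StrictMono f →
      P.map (fun ω => fun m n => T ω (f m) (f n)) = P.map T)
    (i : ℤ) (hi : 1 ≤ i) (s : Finset ℤ) (his : i ∈ s) (hi1 : i + 1 ∈ s) (e : ℤ → Bool) :
    P (EvF (X T) s fun k => e (Equiv.swap i (i + 1) k)) = P (EvF (X T) s e) := by
  by_cases h01 : e i = e (i + 1)
  · have h : (fun k => e (Equiv.swap i (i + 1) k)) = e := by
      funext k
      rcases eq_or_ne k i with rfl | hki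
      · rw [Equiv.swap_apply_left]; exact h01.symm
      rcases eq_or_ne k (i + 1) with rfl | hki1
      · rw [Equiv.swap_apply_right]; exact h01
      · rw [Equiv.swap_apply_of_ne_of_ne hki hki1]
    rw [h]
  · cases hei : e i
    · -- e i = false, e (i+1) = true
      have hei1 : e (i + 1) = true := by
        cases hb : e (i + 1)
        · exact absurd (hei.trans hb.symm) h01
        · rfl
      set e2 : ℤ → Bool := fun k => e (Equiv.swap i (i + 1) k) with he2
      have h2i : e2 i = true := by rw [he2]; simp only [Equiv.swap_apply_left]; exact hei1
      have h2i1 : e2 (i + 1) = false := by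
        rw [he2]; simp only [Equiv.swap_apply_right]; exact hei
      have hcore := adj_core P T hmeas hinv i hi s his hi1 e2 h2i h2i1
      have hupd : Function.update (Function.update e2 i false) (i + 1) true = e := by
        funext k
        rcases eq_or_ne k (i + 1) with rfl | hk1
        · rw [Function.update_self, hei1]
        rcases eq_or_ne k i with rfl | hk2
        · rw [Function.update_of_ne hk1, Function.update_self, hei]
        · rw [Function.update_of_ne hk1, Function.update_of_ne hk2, he2]
          simp only
          rw [Equiv.swap_apply_of_ne_of_ne hk2 hk1]
      rw [hupd] at hcore
      exact hcore.symm
    · -- e i = true, e (i+1) = false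
      have hei1 : e (i + 1) = false := by
        cases hb : e (i + 1)
        · rfl
        · exact absurd (hei.trans hb.symm) h01
      have hcore := adj_core P T hmeas hinv i hi s his hi1 e hei hei1
      have hupd : (fun k => e (Equiv.swap i (i + 1) k))
          = Function.update (Function.update e i false) (i + 1) true := by
        funext k
        rcases eq_or_ne k (i + 1) with rfl | hk1
        · rw [Function.update_self, Equiv.swap_apply_right, hei]
        rcases eq_or_ne k i with rfl | hk2
        · rw [Function.update_of_ne hk1, Function.update_self, Equiv.swap_apply_left, hei1]
        · rw [Function.update_of_ne hk1, Function.update_of_ne hk2,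
            Equiv.swap_apply_of_ne_of_ne hk2 hk1]
      rw [hupd]
      exact hcore

/-- The key exchangeability predicate. -/
def Pred (σ : Equiv.Perm ℤ) : Prop :=
  ∀ (s : Finset ℤ) (e : ℤ → Bool),
    P (EvF (fun ω k => T ω (σ k) 0) s e) = P (EvF (X T) s e)

lemma pred_one : Pred P T 1 := fun _ _ => rfl

lemma pred_comp {σ τ : Equiv.Perm ℤ} (hσ : Pred P T σ) (hτ : Pred P T τ) :
    Pred P T (τ * σ) := by
  intro s e
  have h1 : EvF (fun ω k => T ω ((τ * σ) k) 0) s e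
      = EvF (fun ω k => T ω (τ k) 0) (s.image fun k => σ k) fun j => e (σ.symm j) := by
    ext ω
    simp [EvF, Finset.forall_mem_image, Equiv.Perm.mul_apply]
  have h2 : EvF (X T) (s.image fun k => σ k) (fun j => e (σ.symm j))
      = EvF (fun ω k => T ω (σ k) 0) s e := by
    ext ω
    simp [EvF, X, Finset.forall_mem_image]
  rw [h1, hτ, h2, hσ]

lemma two_insert {F G : Ω → ℤ → Bool} (hF : Measurable F) (hG : Measurable G) (a b : ℤ)
    (H : ∀ s e, a ∈ s → b ∈ s → P (EvF F s e) = P (EvF G s e)) :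
    ∀ s e, P (EvF F s e) = P (EvF G s e) := by
  have H1 : ∀ s e, a ∈ s → P (EvF F s e) = P (EvF G s e) := by
    intro s e ha
    by_cases hb : b ∈ s
    · exact H s e ha hb
    · rw [split P hF hb e, split P hG hb e,
        H _ _ (Finset.mem_insert_of_mem ha) (s.mem_insert_self b),
        H _ _ (Finset.mem_insert_of_mem ha) (s.mem_insert_self b)]
  intro s e
  by_cases ha : a ∈ s
  · exact H1 s e ha
  · rw [split P hF ha e, split P hG ha e, H1 _ _ (s.mem_insert_self a),
      H1 _ _ (s.mem_insert_self a)]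

lemma pred_swap_adj [IsProbabilityMeasure P] (hmeas : Measurable T)
    (hinv : ∀ f : ℤ → ℤ, StrictMono f →
      P.map (fun ω => fun m n => T ω (f m) (f n)) = P.map T)
    (i : ℤ) (hi : 1 ≤ i) : Pred P T (Equiv.swap i (i + 1)) := by
  apply two_insert P (meas_comp T hmeas fun k => Equiv.swap i (i + 1) k) (meas_X T hmeas) i (i + 1)
  intro s e his hi1
  have hsw : ∀ j ∈ s, Equiv.swap i (i + 1) j ∈ s := by
    intro j hj
    rcases eq_or_ne j i with rfl | h1
    · rw [Equiv.swap_apply_left]; exact hi1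
    rcases eq_or_ne j (i + 1) with rfl | h2
    · rw [Equiv.swap_apply_right]; exact his
    · rw [Equiv.swap_apply_of_ne_of_ne h1 h2]; exact hj
  have h1 : EvF (fun ω k => T ω (Equiv.swap i (i + 1) k) 0) s e
      = EvF (X T) s fun k => e (Equiv.swap i (i + 1) k) := by
    ext ω
    simp only [EvF, Set.mem_setOf_eq, X]
    constructor
    · intro h j hj
      have h2 := h (Equiv.swap i (i + 1) j) (hsw j hj)
      rwa [Equiv.swap_apply_self] at h2
    · intro h k hk
      have h2 := h (Equiv.swap i (i + 1) k) (hsw k hk)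
      rwa [Equiv.swap_apply_self] at h2
  rw [h1]
  exact adjacent P T hmeas hinv i hi s his hi1 e

lemma pred_swap [IsProbabilityMeasure P] (hmeas : Measurable T)
    (hinv : ∀ f : ℤ → ℤ, StrictMono f →
      P.map (fun ω => fun m n => T ω (f m) (f n)) = P.map T)
    (a b : ℤ) (ha : 1 ≤ a) (hb : 1 ≤ b) (hab : a ≠ b) : Pred P T (Equiv.swap a b) := by
  have main : ∀ n : ℕ, ∀ a b : ℤ, 1 ≤ a → a < b → b ≤ a + n → Pred P T (Equiv.swap a b) := by
    intro n
    induction n with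
    | zero => intro a b _ h1 h2; omega
    | succ n ih =>
      intro a b ha hab hbound
      rcases eq_or_ne b (a + 1) with rfl | hne
      · exact pred_swap_adj P T hmeas hinv a ha
      · have h1 : Pred P T (Equiv.swap a (a + 1)) := pred_swap_adj P T hmeas hinv a ha
        have h2 : Pred P T (Equiv.swap (a + 1) b) := ih (a + 1) b (by omega) (by omega) (by omega)
        have h3 : Equiv.swap a b
            = Equiv.swap (a + 1) a * Equiv.swap b (a + 1) * Equiv.swap (a + 1) a := by
          rw [Equiv.swap_mul_swap_mul_swap (by omega : b ≠ a + 1) (by omega : b ≠ a)]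
        rw [h3, Equiv.swap_comm (a + 1) a, Equiv.swap_comm b (a + 1)]
        exact pred_comp P T h1 (pred_comp P T h2 h1)
  rcases lt_or_gt_of_ne hab with h | h
  · exact main (b - a).toNat a b ha h (by omega)
  · rw [Equiv.swap_comm]
    exact main (a - b).toNat b a hb h (by omega)

lemma pred_all [IsProbabilityMeasure P] (hmeas : Measurable T)
    (hinv : ∀ f : ℤ → ℤ, StrictMono f →
      P.map (fun ω => fun m n => T ω (f m) (f n)) = P.map T) :
    ∀ n : ℕ, ∀ σ : Equiv.Perm ℤ, ∀ h : {k : ℤ | σ k ≠ k}.Finite,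
      h.toFinset.card ≤ n → (∀ k : ℤ, k ≤ 0 → σ k = k) → Pred P T σ := by
  intro n
  induction n with
  | zero =>
    intro σ h hcard _
    have hone : σ = 1 := by
      ext k
      by_contra hk
      have hmem : k ∈ h.toFinset := by
        rw [Set.Finite.mem_toFinset]; exact hk
      have : h.toFinset = ∅ := Finset.card_eq_zero.mp (Nat.le_zero.mp hcard)
      rw [this] at hmem
      exact absurd hmem (Finset.notMem_empty k)
    rw [hone]
    exact pred_one P T
  | succ n ih =>
    intro σ h hcard hfix
    by_cases h1 : σ = 1
    · rw [h1]; exact pred_one P T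
    · obtain ⟨a, ha⟩ : ∃ a, σ a ≠ a := by
        by_contra hc
        push_neg at hc
        exact h1 (Equiv.ext hc)
      have ha1 : 1 ≤ a := by
        by_contra hc
        exact ha (hfix a (by omega))
      have hb1 : 1 ≤ σ a := by
        by_contra hc
        have h3 := hfix (σ a) (by omega)
        have h4 := congrArg σ.symm h3
        simp only [Equiv.symm_apply_apply] at h4
        exact ha h4
      set σ' := Equiv.swap a (σ a) * σ with hσ'
      have hfix' : ∀ k : ℤ, k ≤ 0 → σ' k = k := by
        intro k hk
        rw [hσ', Equiv.Perm.mul_apply, hfix k hk,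
          Equiv.swap_apply_of_ne_of_ne (by omega) (by omega)]
      have hsub : {k : ℤ | σ' k ≠ k} ⊆ {k : ℤ | σ k ≠ k} \ {a} := by
        intro k hk
        simp only [Set.mem_setOf_eq, hσ', Equiv.Perm.mul_apply] at hk
        constructor
        · intro hkk
          apply hk
          rw [hkk]
          apply Equiv.swap_apply_of_ne_of_ne
          · rintro rfl; exact ha hkk
          · rintro rfl; exact ha (σ.injective hkk)
        · simp only [Set.mem_singleton_iff]
          intro hka
          subst hka
          exact hk (Equiv.swap_apply_right _ _)
      have h' : {k : ℤ | σ' k ≠ k}.Finite :=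
        Set.Finite.subset h (hsub.trans Set.diff_subset)
      have hcard' : h'.toFinset.card ≤ n := by
        have hss : h'.toFinset ⊆ h.toFinset.erase a := by
          intro k hk
          rw [Set.Finite.mem_toFinset] at hk
          have h2 := hsub hk
          rw [Finset.mem_erase, Set.Finite.mem_toFinset]
          exact ⟨h2.2, h2.1⟩
        have hma : a ∈ h.toFinset := by rw [Set.Finite.mem_toFinset]; exact ha
        have := Finset.card_le_card hss
        rw [Finset.card_erase_of_mem hma] at this
        omega
      have hps : Pred P T (Equiv.swap a (σ a)) :=
        pred_swap P T hmeas hinv a (σ a) ha1 hb1 (Ne.symm ha)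
      have hpσ' : Pred P T σ' := ih σ' h' hcard' hfix'
      have hdecomp : σ = Equiv.swap a (σ a) * σ' := by
        rw [hσ', ← mul_assoc, Equiv.swap_mul_self, one_mul]
      rw [hdecomp]
      exact pred_comp P T hpσ' hps

end IndExch

/-- If `⊲` is a random strict total order on `ℤ` whose law is invariant under all strictly
increasing maps `f : ℤ → ℤ`, then the family `(1_{k ⊲ 0} : k > 0)` is exchangeable:
its law is invariant under every finite permutation of the positive integers. -/
theorem indicators_exchangeable
    {Ω : Type*} [MeasurableSpace Ω] (P : Measure Ω) [IsProbabilityMeasure P]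
    (T : Ω → ℤ → ℤ → Bool) (hmeas : Measurable T)
    (hSTO : ∀ ω, IsStrictTotalBool (T ω))
    (hinv : ∀ f : ℤ → ℤ, StrictMono f →
      P.map (fun ω => fun m n => T ω (f m) (f n)) = P.map T) :
    ∀ σ : Equiv.Perm ℤ, {k : ℤ | σ k ≠ k}.Finite → (∀ k : ℤ, k ≤ 0 → σ k = k) →
      P.map (fun ω => fun k : ℤ => T ω (σ k) 0) = P.map (fun ω => fun k : ℤ => T ω k 0) := by
  intro σ hfin hfix
  have hpred : IndExch.Pred P T σ :=
    IndExch.pred_all P T hmeas hinv hfin.toFinset.card σ hfin le_rfl hfix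
  have hFσ : Measurable fun ω => fun k : ℤ => T ω (σ k) 0 := IndExch.meas_comp T hmeas _
  have hFi : Measurable fun ω => fun k : ℤ => T ω k 0 := IndExch.meas_comp T hmeas id
  set C : Set (Set (ℤ → Bool)) :=
    {A | ∃ (J : Finset ℤ) (y : ℤ → Bool), A = {g | ∀ k ∈ J, g k = y k}} with hC
  have hCmeas : ∀ A ∈ C, MeasurableSet A := by
    rintro A ⟨J, y, rfl⟩
    have h : {g : ℤ → Bool | ∀ k ∈ J, g k = y k}
        = ⋂ k ∈ (J : Set ℤ), (fun g : ℤ → Bool => g k) ⁻¹' {y k} := by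
      ext g; simp
    rw [h]
    exact MeasurableSet.biInter J.countable_toSet fun k _ =>
      (measurable_pi_apply k) (measurableSet_singleton _)
  have hgen : (inferInstance : MeasurableSpace (ℤ → Bool)) = MeasurableSpace.generateFrom C := by
    refine le_antisymm ?_ (MeasurableSpace.generateFrom_le hCmeas)
    have hpi_eq : (inferInstance : MeasurableSpace (ℤ → Bool))
        = ⨆ k : ℤ, MeasurableSpace.comap (fun g : ℤ → Bool => g k) inferInstance := rfl
    rw [hpi_eq]
    refine iSup_le fun k => ?_
    intro A hA
    obtain ⟨s', -, rfl⟩ := hA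
    have hU : (fun g : ℤ → Bool => g k) ⁻¹' s' = ⋃ b ∈ s', {g : ℤ → Bool | g k = b} := by
      ext g; simp
    rw [hU]
    exact MeasurableSet.biUnion (Set.to_countable s')
      (fun b _ => MeasurableSpace.measurableSet_generateFrom ⟨{k}, fun _ => b, by ext g; simp⟩)
  have hpi : IsPiSystem C := by
    rintro A ⟨J1, y1, rfl⟩ B ⟨J2, y2, rfl⟩ hne
    obtain ⟨g0, hg1, hg2⟩ := hne
    refine ⟨J1 ∪ J2, fun k => if k ∈ J1 then y1 k else y2 k, ?_⟩
    ext g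
    simp only [Set.mem_inter_iff, Set.mem_setOf_eq, Finset.mem_union]
    constructor
    · rintro ⟨hA, hB⟩ k hk
      by_cases h1 : k ∈ J1
      · rw [if_pos h1]; exact hA k h1
      · rw [if_neg h1]; exact hB k (hk.resolve_left h1)
    · intro hg
      constructor
      · intro k hk
        have h2 := hg k (Or.inl hk)
        rwa [if_pos hk] at h2
      · intro k hk
        by_cases h1 : k ∈ J1
        · have e1 : y1 k = y2 k := (hg1 k h1).symm.trans (hg2 k hk)
          have h2 := hg k (Or.inl h1)
          rw [if_pos h1] at h2
          exact h2.trans e1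
        · have h2 := hg k (Or.inr hk)
          rwa [if_neg h1] at h2
  haveI : IsProbabilityMeasure (P.map fun ω => fun k : ℤ => T ω (σ k) 0) :=
    Measure.isProbabilityMeasure_map hFσ.aemeasurable
  haveI : IsProbabilityMeasure (P.map fun ω => fun k : ℤ => T ω k 0) :=
    Measure.isProbabilityMeasure_map hFi.aemeasurable
  apply MeasureTheory.ext_of_generate_finite C hgen hpi
  · rintro A ⟨J, y, rfl⟩
    rw [Measure.map_apply hFσ (hCmeas _ ⟨J, y, rfl⟩),
      Measure.map_apply hFi (hCmeas _ ⟨J, y, rfl⟩)]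
    exact hpred J y
  · simp [measure_univ]
end

section
/- If ⊲ is a random strict total order on ℤ whose law is invariant under all strictly increasing maps of ℤ, then almost surely for every n the limits X_n = lim_{N→∞} (1/N) Σ_{k=-N}^{n} 1_{k ⊲ n} and Y_n = lim_{N→∞} (1/N) Σ_{k=n}^{N} 1_{k ⊲ n} exist, and for all m < n, m ⊲ n holds if and only if X_m < X_n, or Y_m < Y_n, or (X_m = X_n and Y_m = Y_n and X_m > Y_m). -/
open MeasureTheory Filter

open Finset

namespace IIOR

/-- real indicator of a Bool -/
def bre (b : Bool) : ℝ := if b then 1 else 0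

lemma bre_nonneg (b : Bool) : 0 ≤ bre b := by unfold bre; split <;> norm_num
lemma bre_le_one (b : Bool) : bre b ≤ 1 := by unfold bre; split <;> norm_num
lemma bre_mem (b : Bool) : bre b = 0 ∨ bre b = 1 := by unfold bre; split <;> simp
lemma bre_abs_le (b : Bool) : |bre b| ≤ 1 := by
  rw [abs_of_nonneg (bre_nonneg b)]; exact bre_le_one b
lemma bre_true {b : Bool} (h : b = true) : bre b = 1 := by simp [bre, h]
lemma bre_false {b : Bool} (h : b = false) : bre b = 0 := by simp [bre, h]
lemma bre_le_bre {a b : Bool} (h : a = true → b = true) : bre a ≤ bre b := by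
  unfold bre; rcases a with _|_ <;> rcases b with _|_ <;> simp_all

noncomputable def avg (u : ℕ → ℝ) (N : ℕ) : ℝ := (N : ℝ)⁻¹ * ∑ j ∈ range N, u j

lemma avg_nonneg {u : ℕ → ℝ} (hu : ∀ j, 0 ≤ u j) (N : ℕ) : 0 ≤ avg u N := by
  unfold avg
  apply mul_nonneg (by positivity) (Finset.sum_nonneg fun j _ => hu j)

lemma sum_le_card {u : ℕ → ℝ} (h1 : ∀ j, u j ≤ 1) (N : ℕ) :
    ∑ j ∈ range N, u j ≤ N := by
  calc ∑ j ∈ range N, u j ≤ ∑ _j ∈ range N, (1:ℝ) := Finset.sum_le_sum fun j _ => h1 j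
  _ = N := by simp

lemma avg_le_one {u : ℕ → ℝ} (h1 : ∀ j, u j ≤ 1) (N : ℕ) : avg u N ≤ 1 := by
  rcases Nat.eq_zero_or_pos N with h | h
  · simp [avg, h]
  · unfold avg
    rw [inv_mul_le_iff₀ (by positivity), mul_one]
    exact sum_le_card h1 N

lemma avg_mono {u w : ℕ → ℝ} (h : ∀ j, u j ≤ w j) (N : ℕ) : avg u N ≤ avg w N := by
  unfold avg
  apply mul_le_mul_of_nonneg_left (Finset.sum_le_sum fun j _ => h j) (by positivity)

lemma abs_avg_le_one {u : ℕ → ℝ} (h0 : ∀ j, 0 ≤ u j) (h1 : ∀ j, u j ≤ 1) (N : ℕ) :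
    |avg u N| ≤ 1 := by
  rw [abs_of_nonneg (avg_nonneg h0 N)]; exact avg_le_one h1 N

noncomputable def limA (u : ℕ → ℝ) : ℝ :=
  (limsup (fun N => ENNReal.ofReal (u N)) atTop).toReal

lemma limA_spec {u : ℕ → ℝ} {L : ℝ} (hL : 0 ≤ L) (h : Tendsto u atTop (nhds L)) :
    limA u = L := by
  have h2 : Tendsto (fun N => ENNReal.ofReal (u N)) atTop (nhds (ENNReal.ofReal L)) :=
    (ENNReal.continuous_ofReal.tendsto L).comp h
  rw [limA, h2.limsup_eq, ENNReal.toReal_ofReal hL]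

/-- Key Cesàro comparison: if `u` eventually agrees with a shift of `v`,
convergence of averages transfers. -/
lemma cesaro_congr {u v : ℕ → ℝ} {L : ℝ} (j₀ δ : ℕ)
    (hu : ∀ j, |u j| ≤ 1) (hv : ∀ j, |v j| ≤ 1)
    (he : ∀ j, j₀ ≤ j → u j = v (j + δ))
    (hconv : Tendsto (avg v) atTop (nhds L)) :
    Tendsto (avg u) atTop (nhds L) := by
  set E₀ : ℝ := (∑ j ∈ range j₀, u j) - ∑ j ∈ range (j₀ + δ), v j with hE₀
  have key : ∀ N, j₀ ≤ N →
      avg u N = ((N:ℝ) + δ)/(N:ℝ) * avg v (N + δ) + E₀ / N := by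
    intro N hN
    have hsum : ∑ j ∈ range N, u j = (∑ j ∈ range (N + δ), v j) + E₀ := by
      have h1 : ∑ j ∈ range j₀, u j + ∑ j ∈ Ico j₀ N, u j = ∑ j ∈ range N, u j := by
        simp only [range_eq_Ico]
        exact Finset.sum_Ico_consecutive u (Nat.zero_le _) hN
      have h2 : ∑ j ∈ Ico j₀ N, u j = ∑ j ∈ Ico (j₀ + δ) (N + δ), v j := by
        rw [← Finset.sum_Ico_add v j₀ N δ]
        apply Finset.sum_congr rfl
        intro j hj
        rw [Finset.mem_Ico] at hj
        rw [he j hj.1, add_comm δ j]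
      have h3 : ∑ j ∈ range (j₀ + δ), v j + ∑ j ∈ Ico (j₀ + δ) (N + δ), v j
          = ∑ j ∈ range (N + δ), v j := by
        simp only [range_eq_Ico]
        exact Finset.sum_Ico_consecutive v (Nat.zero_le _) (by omega)
      rw [← h1, h2, hE₀]; linarith
    rcases Nat.eq_zero_or_pos N with h | h
    · subst h
      simp only [Nat.cast_zero, div_zero, zero_mul, zero_add, avg]
      simp
    · have hN0 : (N:ℝ) ≠ 0 := by positivity
      have hNδ : ((N + δ : ℕ):ℝ) ≠ 0 := by positivity
      unfold avg
      rw [hsum]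
      push_cast
      field_simp
  have t1 : Tendsto (fun N : ℕ => ((N:ℝ) + δ)/(N:ℝ) * avg v (N + δ) + E₀ / N)
      atTop (nhds L) := by
    have ha : Tendsto (fun N : ℕ => ((N:ℝ) + δ)/(N:ℝ)) atTop (nhds 1) := by
      have : (fun N : ℕ => ((N:ℝ) + δ)/(N:ℝ)) =ᶠ[atTop] fun N : ℕ => 1 + δ/(N:ℝ) := by
        filter_upwards [eventually_ge_atTop 1] with N hN
        have : (N:ℝ) ≠ 0 := by positivity
        field_simp
      rw [tendsto_congr' this]
      have := Tendsto.const_div_atTop (tendsto_natCast_atTop_atTop (R := ℝ)) (δ:ℝ)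
      have h2 := Tendsto.const_add (1:ℝ) this
      simpa using h2
    have hb : Tendsto (fun N : ℕ => avg v (N + δ)) atTop (nhds L) :=
      hconv.comp (tendsto_add_atTop_nat δ)
    have hc : Tendsto (fun N : ℕ => E₀ / (N:ℝ)) atTop (nhds 0) :=
      Tendsto.const_div_atTop (tendsto_natCast_atTop_atTop (R := ℝ)) E₀
    have := (ha.mul hb).add hc
    simpa using this
  apply t1.congr'
  filter_upwards [eventually_ge_atTop j₀] with N hN
  exact (key N hN).symm

/-- Dilation: if averages converge and `m N / N → 1`, the rescaled partial sums converge. -/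
lemma cesaro_dil {u : ℕ → ℝ} {L : ℝ}
    (hconv : Tendsto (avg u) atTop (nhds L)) (m : ℕ → ℕ)
    (hm : Tendsto (fun N : ℕ => ((m N : ℝ)/(N:ℝ))) atTop (nhds 1)) :
    Tendsto (fun N : ℕ => (N:ℝ)⁻¹ * ∑ j ∈ range (m N), u j) atTop (nhds L) := by
  have hminf : Tendsto m atTop atTop := by
    rw [tendsto_atTop_atTop]
    intro b
    have : ∀ᶠ N : ℕ in atTop, (1:ℝ)/2 < (m N : ℝ)/(N:ℝ) :=
      hm.eventually (eventually_gt_nhds (by norm_num))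
    rcases (this.and (eventually_ge_atTop (2*b))).exists_forall_of_atTop with ⟨N₀, hN₀⟩
    refine ⟨N₀, fun a ha => ?_⟩
    have h1 := (hN₀ a ha).1
    have h2 := (hN₀ a ha).2
    by_contra hcon
    push_neg at hcon
    have hb1 : 1 ≤ b := by omega
    have : (m a : ℝ) ≤ (b:ℝ) - 1 := by
      have : m a ≤ b - 1 := by omega
      calc (m a : ℝ) ≤ ((b - 1 : ℕ) : ℝ) := by exact_mod_cast this
      _ = (b:ℝ) - 1 := by
        have : (1:ℕ) ≤ b := hb1
        push_cast [this]; ring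
    have ha' : (2*b : ℝ) ≤ (a : ℝ) := by exact_mod_cast h2
    have hapos : (0:ℝ) < a := by
      have : (1:ℝ) ≤ (2*b:ℝ) := by push_cast; nlinarith [hb1]
      linarith
    rw [div_lt_div_iff₀ (by norm_num) hapos] at h1
    nlinarith
  have key : ∀ᶠ N : ℕ in atTop,
      (N:ℝ)⁻¹ * ∑ j ∈ range (m N), u j = ((m N:ℝ)/(N:ℝ)) * avg u (m N) := by
    have : ∀ᶠ N : ℕ in atTop, (1:ℝ)/2 < (m N : ℝ)/(N:ℝ) :=
      hm.eventually (eventually_gt_nhds (by norm_num))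
    filter_upwards [this, eventually_ge_atTop 1] with N h1 hN1
    have hmN : m N ≠ 0 := by
      intro h; rw [h] at h1; simp at h1; linarith
    have : ((m N:ℕ):ℝ) ≠ 0 := by
      simpa using hmN
    unfold avg
    field_simp
  have t2 : Tendsto (fun N => ((m N:ℝ)/(N:ℝ)) * avg u (m N)) atTop (nhds L) := by
    have := hm.mul (hconv.comp hminf)
    simpa using this
  exact t2.congr' (by filter_upwards [key] with N h using h.symm)





lemma avg_diff_bound {u : ℕ → ℝ} (h0 : ∀ j, 0 ≤ u j) (h1 : ∀ j, u j ≤ 1)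
    {M N : ℕ} (hMN : M ≤ N) (hM : 1 ≤ M) :
    |avg u N - avg u M| ≤ 2 * ((N:ℝ) - M)/N := by
  have ha : (0:ℝ) < M := by exact_mod_cast hM
  have hb : (0:ℝ) < N := by exact_mod_cast (lt_of_lt_of_le hM hMN)
  set SM := ∑ j ∈ range M, u j with hSM
  set SN := ∑ j ∈ range N, u j with hSN
  have hSM0 : 0 ≤ SM := Finset.sum_nonneg fun j _ => h0 j
  have hSMa : SM ≤ M := by
    calc SM ≤ ∑ _j ∈ range M, (1:ℝ) := Finset.sum_le_sum fun j _ => h1 j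
    _ = M := by simp
  have hD : SN - SM = ∑ j ∈ Ico M N, u j := by
    rw [hSN, hSM]
    simp only [range_eq_Ico]
    rw [← Finset.sum_Ico_consecutive u (Nat.zero_le M) hMN]
    ring
  have hD0 : 0 ≤ SN - SM := by rw [hD]; exact Finset.sum_nonneg fun j _ => h0 j
  have hD1 : SN - SM ≤ (N:ℝ) - M := by
    rw [hD]
    calc ∑ j ∈ Ico M N, u j ≤ ∑ _j ∈ Ico M N, (1:ℝ) := Finset.sum_le_sum fun j _ => h1 j
    _ = ((N - M : ℕ) : ℝ) := by simp [Nat.card_Ico]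
    _ = (N:ℝ) - M := by push_cast [hMN]; ring
  have hkey : avg u N - avg u M = (SN - SM)/N + SM * ((N:ℝ)⁻¹ - (M:ℝ)⁻¹) := by
    unfold avg
    rw [← hSM, ← hSN]
    field_simp
    ring
  rw [hkey]
  have e1 : |(SN - SM)/N| ≤ ((N:ℝ) - M)/N := by
    rw [abs_of_nonneg (by positivity)]
    gcongr
  have e2 : |SM * ((N:ℝ)⁻¹ - (M:ℝ)⁻¹)| ≤ ((N:ℝ) - M)/N := by
    have hinv : (N:ℝ)⁻¹ ≤ (M:ℝ)⁻¹ := by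
      apply inv_anti₀ ha
      exact_mod_cast hMN
    rw [abs_of_nonpos (by nlinarith)]
    calc -(SM * ((N:ℝ)⁻¹ - (M:ℝ)⁻¹)) = SM * ((M:ℝ)⁻¹ - (N:ℝ)⁻¹) := by ring
    _ ≤ (M:ℝ) * ((M:ℝ)⁻¹ - (N:ℝ)⁻¹) := by
        apply mul_le_mul_of_nonneg_right hSMa (by linarith)
    _ = ((N:ℝ) - M)/N := by field_simp
  calc |(SN - SM)/N + SM * ((N:ℝ)⁻¹ - (M:ℝ)⁻¹)|
      ≤ |(SN - SM)/N| + |SM * ((N:ℝ)⁻¹ - (M:ℝ)⁻¹)| := abs_add_le _ _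
  _ ≤ ((N:ℝ) - M)/N + ((N:ℝ) - M)/N := add_le_add e1 e2
  _ = 2 * ((N:ℝ) - M)/N := by ring

lemma tendsto_sqrt_atTop : Tendsto (fun N : ℕ => Nat.sqrt N) atTop atTop := by
  rw [tendsto_atTop_atTop]
  intro b
  exact ⟨b*b, fun a ha => Nat.le_sqrt.2 ha⟩

set_option maxHeartbeats 1000000 in
lemma tendsto_avg_of_sq {u : ℕ → ℝ} (h0 : ∀ j, 0 ≤ u j) (h1 : ∀ j, u j ≤ 1) {L : ℝ}
    (hb : Tendsto (fun j => avg u ((j+1)^2)) atTop (nhds L)) :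
    Tendsto (avg u) atTop (nhds L) := by
  have hcomp : Tendsto (fun N : ℕ => avg u ((Nat.sqrt N)^2)) atTop (nhds L) := by
    have h2 : Tendsto (fun N : ℕ => Nat.sqrt N - 1) atTop atTop := by
      apply tendsto_atTop_atTop.2
      intro b
      refine ⟨(b+1)*(b+1), fun a ha => ?_⟩
      have := Nat.le_sqrt.2 ha
      omega
    have h3 := hb.comp h2
    apply h3.congr'
    filter_upwards [eventually_ge_atTop 1] with N hN
    have hs : 1 ≤ Nat.sqrt N := Nat.le_sqrt.2 (by omega)
    have : Nat.sqrt N - 1 + 1 = Nat.sqrt N := by omega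
    simp only [Function.comp_apply, this]
  have hbound : ∀ᶠ N : ℕ in atTop,
      |avg u N - avg u ((Nat.sqrt N)^2)| ≤ 6 / (Nat.sqrt N : ℝ) := by
    filter_upwards [eventually_ge_atTop 1] with N hN
    set s := Nat.sqrt N with hsdef
    have hs1 : 1 ≤ s := Nat.le_sqrt.2 (by omega)
    have hsN : s^2 ≤ N := Nat.sqrt_le' N
    have hNs : N < (s+1)^2 := by
      simpa [Nat.succ_eq_add_one] using Nat.lt_succ_sqrt' N
    have hsr : (1:ℝ) ≤ (s:ℝ) := by exact_mod_cast hs1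
    have hNr : (0:ℝ) < (N:ℝ) := by
      have : 1 ≤ N := hN
      exact_mod_cast Nat.lt_of_lt_of_le Nat.zero_lt_one this
    have h1s : 1 ≤ s^2 := by
      calc 1 = 1^2 := rfl
      _ ≤ s^2 := Nat.pow_le_pow_left hs1 2
    have h1' : |avg u N - avg u (s^2)| ≤ 2 * ((N:ℝ) - (s^2:ℕ))/N :=
      avg_diff_bound h0 h1 hsN h1s
    have hsq : ((s^2 : ℕ):ℝ) = (s:ℝ)^2 := by push_cast; ring
    have hgapn : N ≤ s^2 + 2*s := by
      have hexp : (s+1)^2 = s^2 + 2*s + 1 := by ring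
      omega
    have hgap : (N:ℝ) - ((s^2:ℕ):ℝ) ≤ 2*(s:ℝ) := by
      have : (N:ℝ) ≤ ((s^2 + 2*s : ℕ):ℝ) := by exact_mod_cast hgapn
      push_cast at this ⊢
      linarith
    have hs2N : (s:ℝ)^2 ≤ (N:ℝ) := by
      rw [← hsq]; exact_mod_cast hsN
    calc |avg u N - avg u (s^2)| ≤ 2 * ((N:ℝ) - (s^2:ℕ))/N := h1'
    _ ≤ 2*(2*(s:ℝ))/N := by gcongr
    _ = 4*(s:ℝ)/N := by ring
    _ ≤ 4*(s:ℝ)/(s:ℝ)^2 := by gcongr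
    _ = 4/(s:ℝ) := by
        have hs0 : (s:ℝ) ≠ 0 := by positivity
        field_simp
    _ ≤ 6/(s:ℝ) := by gcongr <;> norm_num
  have hzero : Tendsto (fun N : ℕ => (6:ℝ)/(Nat.sqrt N : ℝ)) atTop (nhds 0) :=
    Tendsto.const_div_atTop (tendsto_natCast_atTop_atTop.comp tendsto_sqrt_atTop) 6
  have hdiff : Tendsto (fun N : ℕ => avg u N - avg u ((Nat.sqrt N)^2)) atTop (nhds 0) := by
    apply squeeze_zero_norm' _ hzero
    filter_upwards [hbound] with N h
    rwa [Real.norm_eq_abs]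
  have := hcomp.add hdiff
  simpa using this


/-- backward shift version -/
lemma cesaro_congr' {u v : ℕ → ℝ} {L : ℝ} (δ : ℕ)
    (hu : ∀ j, |u j| ≤ 1)
    (he : ∀ i, v i = u (i + δ))
    (hconv : Tendsto (avg v) atTop (nhds L)) :
    Tendsto (avg u) atTop (nhds L) := by
  set C : ℝ := ∑ j ∈ range δ, u j with hC
  have key : ∀ N, δ ≤ N →
      avg u N = ((N:ℝ) - δ)/(N:ℝ) * avg v (N - δ) + C / N := by
    intro N hN
    have h1 : ∑ j ∈ range δ, u j + ∑ j ∈ Ico δ N, u j = ∑ j ∈ range N, u j := by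
      simp only [range_eq_Ico]
      exact Finset.sum_Ico_consecutive u (Nat.zero_le _) hN
    have h2 : ∑ j ∈ Ico δ N, u j = ∑ i ∈ range (N - δ), v i := by
      rw [Finset.sum_congr rfl (fun i (_ : i ∈ range (N-δ)) => he i)]
      rw [show (Ico δ N) = Ico (0 + δ) ((N-δ) + δ) by congr 1 <;> omega]
      rw [← Finset.sum_Ico_add u 0 (N-δ) δ]
      rw [range_eq_Ico]
      apply Finset.sum_congr rfl
      intro i _
      rw [add_comm]
    have hN0 : (0:ℕ) < N ∨ N = 0 := by omega
    rcases Nat.eq_zero_or_pos N with h | h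
    · subst h
      simp only [avg]
      have : δ = 0 := by omega
      subst this
      simp [hC]
    · have hNr : (N:ℝ) ≠ 0 := by positivity
      have hcast : ((N - δ : ℕ):ℝ) = (N:ℝ) - δ := by
        push_cast [hN]; ring
      unfold avg
      rw [← h1, h2, hcast, ← hC]
      rcases Nat.eq_zero_or_pos (N - δ) with h2' | h2'
      · rw [h2']
        have : (N:ℝ) - (δ:ℝ) = 0 := by
          have : N = δ := by omega
          rw [this]; ring
        rw [this]
        simp [div_eq_mul_inv, mul_comm]
      · have : ((N - δ:ℕ):ℝ) ≠ 0 := by positivity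
        rw [hcast] at this
        field_simp
        ring
  have t1 : Tendsto (fun N : ℕ => ((N:ℝ) - δ)/(N:ℝ) * avg v (N - δ) + C / N)
      atTop (nhds L) := by
    have ha : Tendsto (fun N : ℕ => ((N:ℝ) - δ)/(N:ℝ)) atTop (nhds 1) := by
      have he' : (fun N : ℕ => ((N:ℝ) - δ)/(N:ℝ)) =ᶠ[atTop] fun N : ℕ => 1 - δ/(N:ℝ) := by
        filter_upwards [eventually_ge_atTop 1] with N hN
        have : (N:ℝ) ≠ 0 := by positivity
        field_simp
      rw [tendsto_congr' he']
      have h3 := Tendsto.const_div_atTop (tendsto_natCast_atTop_atTop (R := ℝ)) (δ:ℝ)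
      have h4 := Tendsto.const_sub (1:ℝ) h3
      simpa using h4
    have hb : Tendsto (fun N : ℕ => avg v (N - δ)) atTop (nhds L) :=
      hconv.comp (tendsto_sub_atTop_nat δ)
    have hc2 : Tendsto (fun N : ℕ => C / (N:ℝ)) atTop (nhds 0) :=
      Tendsto.const_div_atTop (tendsto_natCast_atTop_atTop (R := ℝ)) C
    have := (ha.mul hb).add hc2
    simpa using this
  apply t1.congr'
  filter_upwards [eventually_ge_atTop δ] with N hN
  exact (key N hN).symm

lemma avg_sub (u w : ℕ → ℝ) (N : ℕ) :
    avg (fun j => u j - w j) N = avg u N - avg w N := by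
  unfold avg
  rw [Finset.sum_sub_distrib]
  ring

lemma avg_le_avg_tail {A B : ℕ → ℝ} (j₀ : ℕ) (hA : ∀ j, |A j| ≤ 1) (hB : ∀ j, |B j| ≤ 1)
    (h : ∀ j, j₀ ≤ j → A j ≤ B j) (N : ℕ) :
    avg A N ≤ avg B N + 2*(j₀:ℝ)/N := by
  rcases Nat.eq_zero_or_pos N with h0 | h0
  · subst h0; simp [avg]
  · have hNr : (0:ℝ) < N := by exact_mod_cast h0
    have hsum : ∑ j ∈ range N, A j ≤ (∑ j ∈ range N, B j) + 2*(j₀:ℝ) := by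
      have : ∑ j ∈ range N, (A j - B j) ≤ 2*(j₀:ℝ) := by
        calc ∑ j ∈ range N, (A j - B j)
            ≤ ∑ j ∈ range N, (if j < j₀ then 2 else 0) := by
              apply Finset.sum_le_sum
              intro j _
              by_cases hj : j < j₀
              · rw [if_pos hj]
                have h1' := abs_le.1 (hA j)
                have h2' := abs_le.1 (hB j)
                linarith [h1'.1, h1'.2, h2'.1, h2'.2]
              · rw [if_neg hj]
                have := h j (by omega)
                linarith
        _ ≤ ∑ j ∈ range j₀, (2:ℝ) := by
              rw [Finset.sum_ite, Finset.sum_const_zero, add_zero]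
              apply Finset.sum_le_sum_of_subset_of_nonneg
              · intro x hx
                simp only [Finset.mem_filter, Finset.mem_range] at hx ⊢
                exact hx.2
              · intro i _ _; norm_num
              -- subset : filter (· < j₀) (range N) ⊆ range j₀
        _ = 2*(j₀:ℝ) := by simp [mul_comm]
      rw [Finset.sum_sub_distrib] at this
      linarith
    unfold avg
    rw [div_eq_mul_inv, mul_comm (2*(j₀:ℝ)) _]
    calc (N:ℝ)⁻¹ * ∑ j ∈ range N, A j
        ≤ (N:ℝ)⁻¹ * ((∑ j ∈ range N, B j) + 2*(j₀:ℝ)) := by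
          apply mul_le_mul_of_nonneg_left hsum (by positivity)
    _ = (N:ℝ)⁻¹ * (∑ j ∈ range N, B j) + (N:ℝ)⁻¹ * (2*(j₀:ℝ)) := by ring

section L2

variable {Ω : Type*} [MeasurableSpace Ω] (P : Measure Ω) [IsProbabilityMeasure P]

set_option maxHeartbeats 1000000 in
theorem L2main (A : ℕ → Ω → ℝ) (hAm : ∀ i, Measurable (A i))
    (hA01 : ∀ i ω, A i ω = 0 ∨ A i ω = 1)
    (p c : ℝ) (hp : ∀ i, ∫ ω, A i ω ∂P = p)
    (hc : ∀ i j, i ≠ j → ∫ ω, A i ω * A j ω ∂P = c) :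
    ∀ᵐ ω ∂P, ∃ L, Tendsto (avg (fun j => A j ω)) atTop (nhds L) := by
  have h0 : ∀ i ω, 0 ≤ A i ω := fun i ω => by rcases hA01 i ω with h|h <;> simp [h]
  have h1 : ∀ i ω, A i ω ≤ 1 := fun i ω => by rcases hA01 i ω with h|h <;> simp [h]
  have hInt : ∀ i, Integrable (A i) P := by
    intro i
    apply Integrable.mono' (integrable_const (1:ℝ)) (hAm i).aestronglyMeasurable
    filter_upwards with ω
    rw [Real.norm_eq_abs, abs_of_nonneg (h0 i ω)]; exact h1 i ω
  have hIntM : ∀ i j, Integrable (fun ω => A i ω * A j ω) P := by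
    intro i j
    apply Integrable.mono' (integrable_const (1:ℝ)) ((hAm i).mul (hAm j)).aestronglyMeasurable
    filter_upwards with ω
    rw [Real.norm_eq_abs, Pi.mul_apply, abs_of_nonneg (mul_nonneg (h0 i ω) (h0 j ω))]
    exact mul_le_one₀ (h1 i ω) (h0 j ω) (h1 j ω)
  have hprod : ∀ i j, ∫ ω, A i ω * A j ω ∂P = if i = j then p else c := by
    intro i j
    by_cases h : i = j
    · subst h
      have e : (fun ω => A i ω * A i ω) = fun ω => A i ω := by
        funext ω; rcases hA01 i ω with h|h <;> rw [h] <;> ring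
      rw [e, hp i]; simp
    · rw [hc i j h, if_neg h]
  set S : ℕ → Ω → ℝ := fun N ω => ∑ i ∈ range N, A i ω with hS
  have hSS : ∀ {N M : ℕ}, M ≤ N →
      ∫ ω, S N ω * S M ω ∂P = (M:ℝ) * p + ((N:ℝ)*(M:ℝ) - (M:ℝ)) * c := by
    intro N M hMN
    have e1 : (fun ω => S N ω * S M ω)
        = fun ω => ∑ i ∈ range N, ∑ j ∈ range M, A i ω * A j ω := by
      funext ω; rw [hS]; exact Finset.sum_mul_sum _ _ _ _
    rw [e1, integral_finset_sum _
      (fun i _ => integrable_finset_sum _ (fun j _ => hIntM i j))]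
    have e2 : ∀ i ∈ range N, ∫ ω, ∑ j ∈ range M, A i ω * A j ω ∂P
        = (M:ℝ) * c + (if i ∈ range M then p - c else 0) := by
      intro i _
      rw [integral_finset_sum _ (fun j _ => hIntM i j)]
      have e3 : ∀ j ∈ range M, ∫ ω, A i ω * A j ω ∂P
          = c + (if j = i then p - c else 0) := by
        intro j _
        rw [hprod i j]
        by_cases h : i = j
        · subst h; simp
        · rw [if_neg h, if_neg (fun hji => h hji.symm)]; ring
      rw [Finset.sum_congr rfl e3, Finset.sum_add_distrib,
        Finset.sum_ite_eq' (range M) i (fun _ => p - c)]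
      simp [mul_comm]
    rw [Finset.sum_congr rfl e2, Finset.sum_add_distrib]
    have e4 : ∑ i ∈ range N, (if i ∈ range M then p - c else 0) = (M:ℝ) * (p - c) := by
      rw [Finset.sum_ite_mem]
      have : range N ∩ range M = range M := by
        ext x; simp only [Finset.mem_inter, Finset.mem_range]; omega
      rw [this, Finset.sum_const, Finset.card_range, nsmul_eq_mul]
    rw [e4]
    simp only [Finset.sum_const, Finset.card_range, nsmul_eq_mul]
    ring
  set va : ℕ → Ω → ℝ := fun N ω => avg (fun i => A i ω) N with hva_def
  have hva_eq : ∀ N ω, va N ω = (N:ℝ)⁻¹ * S N ω := fun N ω => rfl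
  have hvam : ∀ N, Measurable (va N) := by
    intro N
    apply Measurable.const_mul
    exact Finset.measurable_sum _ (fun i _ => hAm i)
  have hIS : ∀ K, Integrable (S K) P := fun K => integrable_finset_sum _ (fun i _ => hInt i)
  have hISS : ∀ K L' : ℕ, Integrable (fun ω => S K ω * S L' ω) P := by
    intro K L'
    have e : (fun ω => S K ω * S L' ω)
        = fun ω => ∑ i ∈ range K, ∑ j ∈ range L', A i ω * A j ω := by
      funext ω; rw [hS]; exact Finset.sum_mul_sum _ _ _ _
    rw [e]
    exact integrable_finset_sum _
      (fun i _ => integrable_finset_sum _ (fun j _ => hIntM i j))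
  have hvar : ∀ {N M : ℕ}, 1 ≤ M → M ≤ N →
      ∫ ω, (va N ω - va M ω)^2 ∂P = (p - c) * ((M:ℝ)⁻¹ - (N:ℝ)⁻¹) := by
    intro N M hM hMN
    have hN1 : 1 ≤ N := le_trans hM hMN
    have hMr : (0:ℝ) < M := by exact_mod_cast hM
    have hNr : (0:ℝ) < N := by exact_mod_cast hN1
    have hrw : (fun ω => (va N ω - va M ω)^2)
        = fun ω => ((N:ℝ)⁻¹*(N:ℝ)⁻¹)*(S N ω * S N ω)
            - (2*((N:ℝ)⁻¹*(M:ℝ)⁻¹))*(S N ω * S M ω)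
            + ((M:ℝ)⁻¹*(M:ℝ)⁻¹)*(S M ω * S M ω) := by
      funext ω
      rw [hva_eq, hva_eq]
      ring
    rw [hrw]
    have hint1 : Integrable (fun ω => ((N:ℝ)⁻¹*(N:ℝ)⁻¹)*(S N ω * S N ω)
        - (2*((N:ℝ)⁻¹*(M:ℝ)⁻¹))*(S N ω * S M ω)) P :=
      Integrable.sub ((hISS N N).const_mul ((N:ℝ)⁻¹*(N:ℝ)⁻¹))
        ((hISS N M).const_mul (2*((N:ℝ)⁻¹*(M:ℝ)⁻¹)))
    have hint2 : Integrable (fun ω => ((M:ℝ)⁻¹*(M:ℝ)⁻¹)*(S M ω * S M ω)) P :=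
      (hISS M M).const_mul ((M:ℝ)⁻¹*(M:ℝ)⁻¹)
    have hint3 : Integrable (fun ω => ((N:ℝ)⁻¹*(N:ℝ)⁻¹)*(S N ω * S N ω)) P :=
      (hISS N N).const_mul ((N:ℝ)⁻¹*(N:ℝ)⁻¹)
    have hint4 : Integrable (fun ω => (2*((N:ℝ)⁻¹*(M:ℝ)⁻¹))*(S N ω * S M ω)) P :=
      (hISS N M).const_mul (2*((N:ℝ)⁻¹*(M:ℝ)⁻¹))
    rw [integral_add hint1 hint2, integral_sub hint3 hint4,
      integral_const_mul, integral_const_mul, integral_const_mul,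
      hSS (le_refl N), hSS hMN, hSS (le_refl M)]
    field_simp
    ring
  have hpc : 0 ≤ p - c := by
    have h2 := hvar (le_refl 1) (by norm_num : (1:ℕ) ≤ 2)
    have h3 : 0 ≤ ∫ ω, (va 2 ω - va 1 ω)^2 ∂P := integral_nonneg (fun ω => sq_nonneg _)
    rw [h2] at h3
    norm_num at h3
    linarith
  -- the dyadic-square differences
  set d : ℕ → Ω → ℝ := fun j ω => va ((j+2)^2) ω - va ((j+1)^2) ω with hd
  have hdm : ∀ j, Measurable (d j) := fun j => (hvam _).sub (hvam _)
  have hdInt : ∀ j, Integrable (d j) P := by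
    intro j
    apply Integrable.mono' (integrable_const (2:ℝ)) (hdm j).aestronglyMeasurable
    filter_upwards with ω
    rw [Real.norm_eq_abs, hd]
    have b1 := abs_avg_le_one (fun i => h0 i ω) (fun i => h1 i ω) ((j+2)^2)
    have b2 := abs_avg_le_one (fun i => h0 i ω) (fun i => h1 i ω) ((j+1)^2)
    calc |va ((j+2)^2) ω - va ((j+1)^2) ω|
        ≤ |va ((j+2)^2) ω| + |va ((j+1)^2) ω| := abs_sub _ _
    _ ≤ 2 := by
        have := b1; have := b2
        simp only [hva_def] at *
        linarith
  have hd2 : ∀ j, ∫ ω, (d j ω)^2 ∂P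
      = (p - c) * ((((j:ℝ)+1)^2)⁻¹ - (((j:ℝ)+2)^2)⁻¹) := by
    intro j
    have hM : 1 ≤ (j+1)^2 := by
      calc 1 = 1^2 := rfl
      _ ≤ (j+1)^2 := Nat.pow_le_pow_left (by omega) 2
    have hMN : (j+1)^2 ≤ (j+2)^2 := Nat.pow_le_pow_left (by omega) 2
    have := hvar hM hMN
    have c1 : (((j+1)^2 : ℕ):ℝ) = ((j:ℝ)+1)^2 := by push_cast; ring
    have c2 : (((j+2)^2 : ℕ):ℝ) = ((j:ℝ)+2)^2 := by push_cast; ring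
    rw [c1, c2] at this
    exact this
  have hL1 : ∀ j, ∫ ω, |d j ω| ∂P
      ≤ Real.sqrt ((p - c) * ((((j:ℝ)+1)^2)⁻¹ - (((j:ℝ)+2)^2)⁻¹)) := by
    intro j
    set e : ℝ := (p - c) * ((((j:ℝ)+1)^2)⁻¹ - (((j:ℝ)+2)^2)⁻¹) with hedef
    have hbr : (0:ℝ) ≤ (((j:ℝ)+1)^2)⁻¹ - (((j:ℝ)+2)^2)⁻¹ := by
      have : (((j:ℝ)+2)^2)⁻¹ ≤ (((j:ℝ)+1)^2)⁻¹ := by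
        apply inv_anti₀ (by positivity)
        nlinarith [Nat.cast_nonneg (α := ℝ) j]
      linarith
    have he0 : 0 ≤ e := mul_nonneg hpc hbr
    by_cases hez : e = 0
    · have hz : ∫ ω, (d j ω)^2 ∂P = 0 := by rw [hd2 j, ← hedef, hez]
      have hsqInt : Integrable (fun ω => (d j ω)^2) P := by
        have : (fun ω => (d j ω)^2) = fun ω => d j ω * d j ω := by funext ω; ring
        rw [this]
        apply Integrable.mono' (integrable_const (4:ℝ))
          ((hdm j).mul (hdm j)).aestronglyMeasurable
        filter_upwards with ω
        have hb : |d j ω| ≤ 2 := by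
          rw [hd]
          have b1 := abs_avg_le_one (fun i => h0 i ω) (fun i => h1 i ω) ((j+2)^2)
          have b2 := abs_avg_le_one (fun i => h0 i ω) (fun i => h1 i ω) ((j+1)^2)
          calc |va ((j+2)^2) ω - va ((j+1)^2) ω|
              ≤ |va ((j+2)^2) ω| + |va ((j+1)^2) ω| := abs_sub _ _
          _ ≤ 2 := by simp only [hva_def] at *; linarith
        rw [Real.norm_eq_abs, Pi.mul_apply, abs_mul]
        calc |d j ω| * |d j ω| ≤ 2 * 2 :=
          mul_le_mul hb hb (abs_nonneg _) (by norm_num)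
        _ = 4 := by norm_num
      have := (integral_eq_zero_iff_of_nonneg (fun ω => sq_nonneg (d j ω)) hsqInt).1 hz
      have hdz : ∀ᵐ ω ∂P, |d j ω| = 0 := by
        filter_upwards [this] with ω hω
        have : (d j ω)^2 = 0 := hω
        have : d j ω = 0 := by
          nlinarith [sq_nonneg (d j ω)]
        simp [this]
      rw [integral_congr_ae hdz]
      simp [Real.sqrt_nonneg]
    · have hepos : 0 < e := lt_of_le_of_ne he0 (Ne.symm hez)
      set t : ℝ := Real.sqrt e with htdef
      have ht0 : 0 < t := Real.sqrt_pos.2 hepos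
      have ht2 : t^2 = e := Real.sq_sqrt he0
      have hptw : ∀ ω, |d j ω| ≤ (d j ω)^2/(2*t) + t/2 := by
        intro ω
        rw [div_add_div _ _ (by positivity : (2*t) ≠ 0) (by norm_num : (2:ℝ) ≠ 0),
          le_div_iff₀ (by positivity)]
        nlinarith [sq_nonneg (|d j ω| - t), sq_abs (d j ω)]
      have hrhsInt : Integrable (fun ω => (d j ω)^2/(2*t) + t/2) P := by
        apply Integrable.add _ (integrable_const _)
        have : (fun ω => (d j ω)^2/(2*t)) = fun ω => (2*t)⁻¹ * (d j ω * d j ω) := by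
          funext ω; field_simp
        rw [this]
        apply Integrable.const_mul
        apply Integrable.mono' (integrable_const (4:ℝ))
          ((hdm j).mul (hdm j)).aestronglyMeasurable
        filter_upwards with ω
        have hb : |d j ω| ≤ 2 := by
          rw [hd]
          have b1 := abs_avg_le_one (fun i => h0 i ω) (fun i => h1 i ω) ((j+2)^2)
          have b2 := abs_avg_le_one (fun i => h0 i ω) (fun i => h1 i ω) ((j+1)^2)
          calc |va ((j+2)^2) ω - va ((j+1)^2) ω|
              ≤ |va ((j+2)^2) ω| + |va ((j+1)^2) ω| := abs_sub _ _
          _ ≤ 2 := by simp only [hva_def] at *; linarith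
        rw [Real.norm_eq_abs, Pi.mul_apply, abs_mul]
        calc |d j ω| * |d j ω| ≤ 2 * 2 :=
          mul_le_mul hb hb (abs_nonneg _) (by norm_num)
        _ = 4 := by norm_num
      calc ∫ ω, |d j ω| ∂P ≤ ∫ ω, ((d j ω)^2/(2*t) + t/2) ∂P := by
            apply integral_mono ((hdInt j).abs) hrhsInt
            intro ω; exact hptw ω
      _ = (2*t)⁻¹ * (∫ ω, (d j ω)^2 ∂P) + t/2 := by
          rw [integral_add _ (integrable_const _)]
          · congr 1
            · have : (fun ω => (d j ω)^2/(2*t)) = fun ω => (2*t)⁻¹ * (d j ω)^2 := by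
                funext ω; field_simp
              rw [this, integral_const_mul]
            · simp
          · have : (fun ω => (d j ω)^2/(2*t)) = fun ω => (2*t)⁻¹ * (d j ω * d j ω) := by
              funext ω; field_simp
            rw [this]
            apply Integrable.const_mul
            apply Integrable.mono' (integrable_const (4:ℝ))
              ((hdm j).mul (hdm j)).aestronglyMeasurable
            filter_upwards with ω
            have hb : |d j ω| ≤ 2 := by
              rw [hd]
              have b1 := abs_avg_le_one (fun i => h0 i ω) (fun i => h1 i ω) ((j+2)^2)
              have b2 := abs_avg_le_one (fun i => h0 i ω) (fun i => h1 i ω) ((j+1)^2)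
              calc |va ((j+2)^2) ω - va ((j+1)^2) ω|
                  ≤ |va ((j+2)^2) ω| + |va ((j+1)^2) ω| := abs_sub _ _
              _ ≤ 2 := by simp only [hva_def] at *; linarith
            rw [Real.norm_eq_abs, Pi.mul_apply, abs_mul]
            calc |d j ω| * |d j ω| ≤ 2 * 2 :=
              mul_le_mul hb hb (abs_nonneg _) (by norm_num)
            _ = 4 := by norm_num
      _ = (2*t)⁻¹ * e + t/2 := by rw [hd2 j, ← hedef]
      _ = t := by
          rw [← ht2]; field_simp; ring

  -- telescoping bound on sqrt terms
  set K4 : ℝ := 4 * Real.sqrt (p - c) with hK4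
  have hK40 : 0 ≤ K4 := by rw [hK4]; positivity
  set g : ℕ → ℝ := fun j => K4 * (Real.sqrt ((j:ℝ)+1))⁻¹ with hg
  have hsb : ∀ j : ℕ, Real.sqrt ((p - c) * ((((j:ℝ)+1)^2)⁻¹ - (((j:ℝ)+2)^2)⁻¹))
      ≤ g j - g (j+1) := by
    intro j
    have hx10 : (0:ℝ) < (j:ℝ)+1 := by positivity
    have hx20 : (0:ℝ) < (j:ℝ)+2 := by positivity
    set a := Real.sqrt ((j:ℝ)+1) with ha
    set b := Real.sqrt ((j:ℝ)+2) with hb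
    have ha0 : 0 < a := Real.sqrt_pos.2 hx10
    have hb0 : 0 < b := Real.sqrt_pos.2 hx20
    have ha2 : a^2 = (j:ℝ)+1 := Real.sq_sqrt hx10.le
    have hb2 : b^2 = (j:ℝ)+2 := Real.sq_sqrt hx20.le
    have hb2a : b^2 = a^2 + 1 := by rw [ha2, hb2]; ring
    have ha1 : 1 ≤ a := by nlinarith [Nat.cast_nonneg (α := ℝ) j]
    have hab : a ≤ b := by rw [ha, hb]; exact Real.sqrt_le_sqrt (by linarith)
    have hgj : g (j+1) = K4 * b⁻¹ := by
      have hcast : ((j+1:ℕ):ℝ) + 1 = (j:ℝ)+2 := by push_cast; ring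
      simp only [hg, hcast, hb]
    have hgdiff : g j - g (j+1) = K4 * (a⁻¹ - b⁻¹) := by
      rw [hgj, hg, ha]; ring
    rw [hgdiff]
    have hrhs0 : 0 ≤ K4 * (a⁻¹ - b⁻¹) := by
      apply mul_nonneg hK40
      have : b⁻¹ ≤ a⁻¹ := inv_anti₀ ha0 hab
      linarith
    rw [Real.sqrt_le_left hrhs0]
    have hK2 : (Real.sqrt (p-c))^2 = p - c := Real.sq_sqrt hpc
    have hrhseq : (K4*(a⁻¹ - b⁻¹))^2 = (p-c)*(16*((b-a)^2/(a^2*b^2))) := by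
      rw [hK4]
      have h1 : (4 * Real.sqrt (p-c) * (a⁻¹ - b⁻¹))^2
          = 16 * (Real.sqrt (p-c))^2 * (a⁻¹ - b⁻¹)^2 := by ring
      rw [h1, hK2, inv_sub_inv ha0.ne' hb0.ne', div_pow]
      have h2 : (a*b)^2 = a^2*b^2 := by ring
      rw [h2]
      ring
    rw [hrhseq]
    apply mul_le_mul_of_nonneg_left _ hpc
    -- goal : ((j+1)^2)⁻¹ - ((j+2)^2)⁻¹ ≤ 16*((b-a)^2/(a^2*b^2))
    rw [← ha2, ← hb2]
    have h4 : (0:ℝ) < (a^2)^2 := by positivity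
    have h5 : (0:ℝ) < (b^2)^2 := by positivity
    rw [inv_sub_inv h4.ne' h5.ne', ← mul_div_assoc,
      div_le_div_iff₀ (by positivity) (by positivity)]
    -- goal: ((b^2)^2 - (a^2)^2) * (a^2*b^2) ≤ 16*(b-a)^2 * ((a^2)^2*((b^2)^2))
    have hba1 : (b-a)*(a+b) = 1 := by linear_combination hb2a
    have hba2 : (b-a)^2*(a+b)^2 = 1 := by linear_combination ((b-a)*(a+b)+1)*hba1
    have hL : (b^2)^2 - (a^2)^2 = 2*a^2+1 := by linear_combination (b^2+a^2+1)*hb2a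
    have p1 : (a+b)^2 ≤ 4*b^2 := by nlinarith
    have p2 : 2*a^2+1 ≤ 2*b^2 := by nlinarith
    have p3 : b^2 ≤ 2*a^2 := by nlinarith
    have P : (2*a^2+1)*((a+b)^2) ≤ 16*(a^2*b^2) := by
      have q1 : (2*a^2+1)*((a+b)^2) ≤ (2*b^2)*(4*b^2) :=
        mul_le_mul p2 p1 (by positivity) (by positivity)
      have q2 : (8:ℝ)*b^2*b^2 ≤ 8*b^2*(2*a^2) :=
        mul_le_mul_of_nonneg_left p3 (by positivity)
      nlinarith [q1, q2]
    rw [← mul_le_mul_iff_of_pos_right (show (0:ℝ) < (a+b)^2 by positivity), hL]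
    have hgoal2 : 16*(b-a)^2*((a^2)^2*(b^2)^2)*(a+b)^2 = 16*((a^2)^2*(b^2)^2) := by
      linear_combination (16*((a^2)^2*(b^2)^2)) * hba2
    calc (2*a^2+1)*(a^2*b^2)*(a+b)^2
        = ((2*a^2+1)*((a+b)^2))*(a^2*b^2) := by ring
    _ ≤ (16*(a^2*b^2))*(a^2*b^2) :=
        mul_le_mul_of_nonneg_right P (by positivity)
    _ = 16*((a^2)^2*(b^2)^2) := by ring
    _ = 16*(b-a)^2*((a^2)^2*(b^2)^2)*(a+b)^2 := hgoal2.symm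
  have hgm : ∀ j, 0 ≤ g j - g (j+1) := fun j => le_trans (Real.sqrt_nonneg _) (hsb j)
  have habs0 : ∀ j, 0 ≤ ∫ ω, |d j ω| ∂P := fun j => integral_nonneg (fun ω => abs_nonneg _)
  have hIb : ∀ j, ∫ ω, |d j ω| ∂P ≤ g j - g (j+1) := fun j => le_trans (hL1 j) (hsb j)
  have hg0 : ∀ n, 0 ≤ g n := by
    intro n; rw [hg]
    apply mul_nonneg hK40
    positivity
  have hsumI : Summable (fun j => ∫ ω, |d j ω| ∂P) := by
    apply summable_of_sum_range_le habs0
    intro n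
    calc ∑ i ∈ range n, ∫ ω, |d i ω| ∂P ≤ ∑ i ∈ range n, (g i - g (i+1)) :=
      Finset.sum_le_sum (fun i _ => hIb i)
    _ = g 0 - g n := Finset.sum_range_sub' g n
    _ ≤ g 0 := by linarith [hg0 n]
  have hsumg : Summable (fun j => g j - g (j+1)) := by
    apply summable_of_sum_range_le hgm
    intro n
    calc ∑ i ∈ range n, (g i - g (i+1)) = g 0 - g n := Finset.sum_range_sub' g n
    _ ≤ g 0 := by linarith [hg0 n]
  have hmeasabs : ∀ j, Measurable (fun ω => ENNReal.ofReal |d j ω|) :=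
    fun j => ENNReal.measurable_ofReal.comp (hdm j).abs
  have hlintsum : ∫⁻ ω, (∑' j, ENNReal.ofReal |d j ω|) ∂P ≠ ⊤ := by
    apply ne_of_lt
    rw [lintegral_tsum (fun j => (hmeasabs j).aemeasurable)]
    have heach : ∀ j, ∫⁻ ω, ENNReal.ofReal |d j ω| ∂P = ENNReal.ofReal (∫ ω, |d j ω| ∂P) :=
      fun j => (ofReal_integral_eq_lintegral_ofReal (hdInt j).abs
        (Filter.Eventually.of_forall (fun ω => abs_nonneg _))).symm
    calc ∑' j, ∫⁻ ω, ENNReal.ofReal |d j ω| ∂P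
        = ∑' j, ENNReal.ofReal (∫ ω, |d j ω| ∂P) := tsum_congr heach
    _ ≤ ∑' j, ENNReal.ofReal (g j - g (j+1)) :=
        ENNReal.tsum_le_tsum (fun j => ENNReal.ofReal_le_ofReal (hIb j))
    _ = ENNReal.ofReal (∑' j, (g j - g (j+1))) :=
        (ENNReal.ofReal_tsum_of_nonneg hgm hsumg).symm
    _ < ⊤ := ENNReal.ofReal_lt_top
  have hae1 : ∀ᵐ ω ∂P, (∑' j, ENNReal.ofReal |d j ω|) < ⊤ :=
    ae_lt_top (Measurable.ennreal_tsum hmeasabs) hlintsum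
  filter_upwards [hae1] with ω hω
  have hsummable : Summable (fun j => |d j ω|) := by
    have h6 := ENNReal.summable_toReal hω.ne
    apply h6.congr
    intro j
    exact ENNReal.toReal_ofReal (abs_nonneg _)
  have hcauchy : CauchySeq (fun j => va ((j+1)^2) ω) := by
    apply cauchySeq_of_summable_dist
    apply hsummable.congr
    intro j
    rw [Real.dist_eq, abs_sub_comm]
  obtain ⟨L, hLim⟩ := cauchySeq_tendsto_of_complete hcauchy
  exact ⟨L, tendsto_avg_of_sq (fun i => h0 i ω) (fun i => h1 i ω) hLim⟩

end L2

section Arrays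

open scoped Classical

noncomputable def ib (p : Prop) : ℝ := if p then 1 else 0

lemma ib_nonneg (p : Prop) : 0 ≤ ib p := by unfold ib; split <;> norm_num
lemma ib_le_one (p : Prop) : ib p ≤ 1 := by unfold ib; split <;> norm_num
lemma ib_mem (p : Prop) : ib p = 0 ∨ ib p = 1 := by unfold ib; split <;> simp
lemma ib_pos {p : Prop} (h : p) : ib p = 1 := by simp [ib, h]
lemma ib_neg {p : Prop} (h : ¬ p) : ib p = 0 := by simp [ib, h]
lemma ib_eq_one_iff {p : Prop} : ib p = 1 ↔ p := by
  unfold ib; split <;> simp_all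
lemma ib_le_ib {p q : Prop} (h : p → q) : ib p ≤ ib q := by
  unfold ib
  by_cases hp : p
  · rw [if_pos hp, if_pos (h hp)]
  · rw [if_neg hp]; split <;> norm_num
lemma ib_abs_le (p : Prop) : |ib p| ≤ 1 := by
  rw [abs_of_nonneg (ib_nonneg p)]; exact ib_le_one p

abbrev Arr := ℤ → ℤ → Bool

def pb (f : ℤ → ℤ) (R : Arr) : Arr := fun m n => R (f m) (f n)

noncomputable def lseq (R : Arr) (c : ℤ) (j : ℕ) : ℝ := bre (R (c - 1 - (j:ℤ)) c)
noncomputable def rseq (R : Arr) (c : ℤ) (j : ℕ) : ℝ := bre (R (c + 1 + (j:ℤ)) c)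

noncomputable def XF (c : ℤ) (R : Arr) : ℝ := limA (avg (lseq R c))
noncomputable def YF (c : ℤ) (R : Arr) : ℝ := limA (avg (rseq R c))

lemma XF_nonneg (c : ℤ) (R : Arr) : 0 ≤ XF c R := ENNReal.toReal_nonneg
lemma YF_nonneg (c : ℤ) (R : Arr) : 0 ≤ YF c R := ENNReal.toReal_nonneg

/-- all limits exist -/
def Conv (R : Arr) : Prop :=
  ∀ c : ℤ, Tendsto (avg (lseq R c)) atTop (nhds (XF c R)) ∧
    Tendsto (avg (rseq R c)) atTop (nhds (YF c R))

lemma conv_of_exists {R : Arr}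
    (h : ∀ c : ℤ, (∃ L, Tendsto (avg (lseq R c)) atTop (nhds L)) ∧
      (∃ L, Tendsto (avg (rseq R c)) atTop (nhds L))) : Conv R := by
  intro c
  obtain ⟨⟨L1, h1⟩, ⟨L2, h2⟩⟩ := h c
  have hL1 : 0 ≤ L1 :=
    le_of_tendsto_of_tendsto' tendsto_const_nhds h1
      (fun N => avg_nonneg (fun j => bre_nonneg _) N)
  have hL2 : 0 ≤ L2 :=
    le_of_tendsto_of_tendsto' tendsto_const_nhds h2
      (fun N => avg_nonneg (fun j => bre_nonneg _) N)
  constructor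
  · rw [show XF c R = L1 from limA_spec hL1 h1]; exact h1
  · rw [show YF c R = L2 from limA_spec hL2 h2]; exact h2

lemma meas_coord (a b : ℤ) : Measurable (fun R : Arr => R a b) :=
  (measurable_pi_apply b).comp (measurable_pi_apply a)

lemma meas_bre_coord (a b : ℤ) : Measurable (fun R : Arr => bre (R a b)) := by
  have h : Measurable bre := measurable_from_top
  exact h.comp (meas_coord a b)

lemma meas_avg_lseq (c : ℤ) (N : ℕ) : Measurable (fun R : Arr => avg (lseq R c) N) := by
  apply Measurable.const_mul
  exact Finset.measurable_sum _ (fun j _ => meas_bre_coord _ _)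

lemma meas_avg_rseq (c : ℤ) (N : ℕ) : Measurable (fun R : Arr => avg (rseq R c) N) := by
  apply Measurable.const_mul
  exact Finset.measurable_sum _ (fun j _ => meas_bre_coord _ _)

lemma measurable_limA_of {α : Type*} [MeasurableSpace α] {u : ℕ → α → ℝ}
    (hu : ∀ N, Measurable (u N)) : Measurable (fun x => limA (fun N => u N x)) := by
  unfold limA
  apply Measurable.ennreal_toReal
  have heq : (fun x => limsup (fun N => ENNReal.ofReal (u N x)) atTop)
      = fun x => ⨅ n, ⨆ i, ⨆ (_ : i ≥ n), ENNReal.ofReal (u i x) := by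
    funext x; exact limsup_eq_iInf_iSup_of_nat
  rw [heq]
  apply Measurable.iInf
  intro n
  apply Measurable.iSup
  intro i
  apply Measurable.iSup
  intro _
  exact ENNReal.measurable_ofReal.comp (hu i)

lemma meas_XF (c : ℤ) : Measurable (XF c) := by
  unfold XF
  exact measurable_limA_of (fun N => meas_avg_lseq c N)

lemma meas_YF (c : ℤ) : Measurable (YF c) := by
  unfold YF
  exact measurable_limA_of (fun N => meas_avg_rseq c N)

lemma smono_gap {f : ℤ → ℤ} (hf : StrictMono f) :
    ∀ x y : ℤ, x ≤ y → f x + (y - x) ≤ f y := by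
  intro x y hxy
  refine Int.le_induction (motive := fun y _ => f x + (y - x) ≤ f y) ?_ ?_ y hxy
  · simp
  · intro n hn ih
    have h1 : f n < f (n+1) := hf (show n < n + 1 by omega)
    omega

lemma pb_left_tendsto {f : ℤ → ℤ} (hf : StrictMono f) {K s : ℤ}
    (htail : ∀ k : ℤ, k ≤ K → f k = k + s) (R : Arr) (c : ℤ) {L : ℝ}
    (hconv : Tendsto (avg (lseq R (f c))) atTop (nhds L)) :
    Tendsto (avg (lseq (pb f R) c)) atTop (nhds L) := by
  have hδ : 0 ≤ f c - (c + s) := by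
    by_cases h : c ≤ K
    · rw [htail c h]; omega
    · push_neg at h
      have h2 := smono_gap hf K c h.le
      rw [htail K le_rfl] at h2
      omega
  apply cesaro_congr ((c - K).toNat) ((f c - (c + s)).toNat)
    (fun j => by unfold lseq pb; exact bre_abs_le _)
    (fun j => by unfold lseq; exact bre_abs_le _)
    _ hconv
  intro j hj
  have hjc : (c - K) ≤ (j:ℤ) := le_trans (Int.self_le_toNat _) (by exact_mod_cast hj)
  unfold lseq pb
  have harg : f (c - 1 - (j:ℤ)) = c - 1 - (j:ℤ) + s := htail _ (by omega)
  have hcast : (((j + (f c - (c + s)).toNat : ℕ)):ℤ) = (j:ℤ) + (f c - (c+s)) := by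
    push_cast
    rw [Int.toNat_of_nonneg hδ]
  rw [harg, hcast]
  have heq2 : c - 1 - (j:ℤ) + s = f c - 1 - ((j:ℤ) + (f c - (c+s))) := by ring
  rw [heq2]

lemma pb_right_tendsto {f : ℤ → ℤ} (hf : StrictMono f) {K s : ℤ}
    (htail : ∀ k : ℤ, K ≤ k → f k = k + s) (R : Arr) (c : ℤ) {L : ℝ}
    (hconv : Tendsto (avg (rseq R (f c))) atTop (nhds L)) :
    Tendsto (avg (rseq (pb f R) c)) atTop (nhds L) := by
  have hδ : 0 ≤ (c + s) - f c := by
    by_cases h : K ≤ c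
    · rw [htail c h]; omega
    · push_neg at h
      have h2 := smono_gap hf c K h.le
      rw [htail K le_rfl] at h2
      omega
  apply cesaro_congr ((K - c - 1).toNat) (((c+s) - f c).toNat)
    (fun j => by unfold rseq pb; exact bre_abs_le _)
    (fun j => by unfold rseq; exact bre_abs_le _)
    _ hconv
  intro j hj
  have hjc : (K - c - 1) ≤ (j:ℤ) := le_trans (Int.self_le_toNat _) (by exact_mod_cast hj)
  unfold rseq pb
  have harg : f (c + 1 + (j:ℤ)) = c + 1 + (j:ℤ) + s := htail _ (by omega)
  have hcast : (((j + ((c+s) - f c).toNat : ℕ)):ℤ) = (j:ℤ) + ((c+s) - f c) := by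
    push_cast
    rw [Int.toNat_of_nonneg hδ]
  rw [harg, hcast]
  have heq2 : c + 1 + (j:ℤ) + s = f c + 1 + ((j:ℤ) + ((c+s) - f c)) := by ring
  rw [heq2]

/-! concrete monotone maps -/

def fpair (a b : ℤ) : ℤ → ℤ := fun k => if k ≤ 0 then k + a else k + (b - 1)

lemma fpair_mono {a b : ℤ} (h : a < b) : StrictMono (fpair a b) := by
  intro x y hxy
  unfold fpair
  split_ifs <;> omega

lemma fpair_zero (a b : ℤ) : fpair a b 0 = a := by simp [fpair]
lemma fpair_one (a b : ℤ) : fpair a b 1 = b := by norm_num [fpair]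
lemma fpair_tailL (a b : ℤ) : ∀ k : ℤ, k ≤ 0 → fpair a b k = k + a := by
  intro k hk; simp [fpair, hk]
lemma fpair_tailR (a b : ℤ) : ∀ k : ℤ, 1 ≤ k → fpair a b k = k + (b - 1) := by
  intro k hk; rw [fpair, if_neg (by omega)]

def ftriple (a b c : ℤ) : ℤ → ℤ := fun k =>
  if k ≤ 0 then k + a else if k = 1 then b else k + (c - 2)

lemma ftriple_mono {a b c : ℤ} (h1 : a < b) (h2 : b < c) : StrictMono (ftriple a b c) := by
  intro x y hxy
  unfold ftriple
  split_ifs <;> omega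

lemma ftriple_zero (a b c : ℤ) : ftriple a b c 0 = a := by simp [ftriple]
lemma ftriple_one (a b c : ℤ) : ftriple a b c 1 = b := by norm_num [ftriple]
lemma ftriple_two (a b c : ℤ) : ftriple a b c 2 = c := by norm_num [ftriple]
lemma ftriple_tailL (a b c : ℤ) : ∀ k : ℤ, k ≤ 0 → ftriple a b c k = k + a := by
  intro k hk; simp [ftriple, hk]
lemma ftriple_tailR (a b c : ℤ) : ∀ k : ℤ, 2 ≤ k → ftriple a b c k = k + (c - 2) := by
  intro k hk; rw [ftriple, if_neg (by omega), if_neg (by omega)]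

lemma fshift_mono (s : ℤ) : StrictMono (fun k : ℤ => k + s) := by
  intro x y h
  show x + s < y + s
  omega
lemma fshift_tail (s : ℤ) : ∀ k : ℤ, k ≤ 0 → (fun k : ℤ => k + s) k = k + s := fun k _ => rfl
lemma fshift_tail' (s : ℤ) : ∀ k : ℤ, 0 ≤ k → (fun k : ℤ => k + s) k = k + s := fun k _ => rfl

/-- shift acts exactly on `lseq`/`rseq`/`XF`/`YF` -/
lemma lseq_shift (r : ℤ) (R : Arr) (c : ℤ) :
    lseq (pb (fun k => k + r) R) c = lseq R (c + r) := by
  funext j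
  unfold lseq pb
  show bre (R (c - 1 - (j:ℤ) + r) (c + r)) = _
  have h : c - 1 - (j:ℤ) + r = c + r - 1 - (j:ℤ) := by ring
  rw [h]

lemma rseq_shift (r : ℤ) (R : Arr) (c : ℤ) :
    rseq (pb (fun k => k + r) R) c = rseq R (c + r) := by
  funext j
  unfold rseq pb
  show bre (R (c + 1 + (j:ℤ) + r) (c + r)) = _
  have h : c + 1 + (j:ℤ) + r = c + r + 1 + (j:ℤ) := by ring
  rw [h]

lemma XF_shift (r : ℤ) (R : Arr) (c : ℤ) : XF c (pb (fun k => k + r) R) = XF (c + r) R := by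
  unfold XF
  rw [lseq_shift]

lemma YF_shift (r : ℤ) (R : Arr) (c : ℤ) : YF c (pb (fun k => k + r) R) = YF (c + r) R := by
  unfold YF
  rw [rseq_shift]

/-- pullbacks preserve `Conv` and transform `XF/YF` covariantly, for the two-tailed maps -/
lemma conv_pb {f : ℤ → ℤ} (hf : StrictMono f) {K1 s1 K2 s2 : ℤ}
    (ht1 : ∀ k : ℤ, k ≤ K1 → f k = k + s1)
    (ht2 : ∀ k : ℤ, K2 ≤ k → f k = k + s2)
    {R : Arr} (hR : Conv R) :
    Conv (pb f R) ∧ (∀ c, XF c (pb f R) = XF (f c) R) ∧ (∀ c, YF c (pb f R) = YF (f c) R) := by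
  have hX : ∀ c, Tendsto (avg (lseq (pb f R) c)) atTop (nhds (XF (f c) R)) :=
    fun c => pb_left_tendsto hf ht1 R c (hR (f c)).1
  have hY : ∀ c, Tendsto (avg (rseq (pb f R) c)) atTop (nhds (YF (f c) R)) :=
    fun c => pb_right_tendsto hf ht2 R c (hR (f c)).2
  have hXe : ∀ c, XF c (pb f R) = XF (f c) R :=
    fun c => limA_spec (XF_nonneg _ _) (hX c)
  have hYe : ∀ c, YF c (pb f R) = YF (f c) R :=
    fun c => limA_spec (YF_nonneg _ _) (hY c)
  refine ⟨fun c => ⟨?_, ?_⟩, hXe, hYe⟩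
  · rw [hXe c]; exact hX c
  · rw [hYe c]; exact hY c

end Arrays

section Main

variable {Ω : Type*} [MeasurableSpace Ω] {P : Measure Ω} [IsProbabilityMeasure P]
  {T : Ω → Arr}

lemma meas_pbT (hmeas : Measurable T) (f : ℤ → ℤ) : Measurable fun ω => pb f (T ω) := by
  apply measurable_pi_lambda
  intro m
  apply measurable_pi_lambda
  intro n
  exact (measurable_pi_apply (f n)).comp ((measurable_pi_apply (f m)).comp hmeas)

lemma int_inv (hmeas : Measurable T)
    (hinv : ∀ f : ℤ → ℤ, StrictMono f →
      P.map (fun ω => fun m n => T ω (f m) (f n)) = P.map T)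
    {f : ℤ → ℤ} (hf : StrictMono f) {G : Arr → ℝ} (hG : Measurable G) :
    ∫ ω, G (pb f (T ω)) ∂P = ∫ ω, G (T ω) ∂P := by
  have h1 : Measurable fun ω => pb f (T ω) := meas_pbT hmeas f
  have h2 : P.map (fun ω => pb f (T ω)) = P.map T := hinv f hf
  rw [← integral_map h1.aemeasurable hG.aestronglyMeasurable,
    ← integral_map hmeas.aemeasurable hG.aestronglyMeasurable, h2]

lemma const_below (hmeas : Measurable T)
    (hinv : ∀ f : ℤ → ℤ, StrictMono f →
      P.map (fun ω => fun m n => T ω (f m) (f n)) = P.map T)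
    {a b : ℤ} (h : a < b) :
    ∫ ω, bre (T ω a b) ∂P = ∫ ω, bre (T ω 0 1) ∂P := by
  have h2 := int_inv hmeas hinv (fpair_mono h) (meas_bre_coord 0 1)
  have e : (fun ω => bre ((pb (fpair a b) (T ω)) 0 1)) = fun ω => bre (T ω a b) := by
    funext ω
    show bre (T ω (fpair a b 0) (fpair a b 1)) = _
    rw [fpair_zero, fpair_one]
  calc ∫ ω, bre (T ω a b) ∂P = ∫ ω, bre ((pb (fpair a b) (T ω)) 0 1) ∂P := by rw [e]
  _ = ∫ ω, bre (T ω 0 1) ∂P := h2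

lemma const_above (hmeas : Measurable T)
    (hinv : ∀ f : ℤ → ℤ, StrictMono f →
      P.map (fun ω => fun m n => T ω (f m) (f n)) = P.map T)
    {a b : ℤ} (h : a < b) :
    ∫ ω, bre (T ω b a) ∂P = ∫ ω, bre (T ω 1 0) ∂P := by
  have h2 := int_inv hmeas hinv (fpair_mono h) (meas_bre_coord 1 0)
  have e : (fun ω => bre ((pb (fpair a b) (T ω)) 1 0)) = fun ω => bre (T ω b a) := by
    funext ω
    show bre (T ω (fpair a b 1) (fpair a b 0)) = _
    rw [fpair_zero, fpair_one]
  calc ∫ ω, bre (T ω b a) ∂P = ∫ ω, bre ((pb (fpair a b) (T ω)) 1 0) ∂P := by rw [e]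
  _ = ∫ ω, bre (T ω 1 0) ∂P := h2

lemma const_tripleL (hmeas : Measurable T)
    (hinv : ∀ f : ℤ → ℤ, StrictMono f →
      P.map (fun ω => fun m n => T ω (f m) (f n)) = P.map T)
    {a b c : ℤ} (h1 : a < b) (h2 : b < c) :
    ∫ ω, bre (T ω a c) * bre (T ω b c) ∂P
      = ∫ ω, bre (T ω 0 2) * bre (T ω 1 2) ∂P := by
  have hG : Measurable (fun R : Arr => bre (R 0 2) * bre (R 1 2)) :=
    (meas_bre_coord 0 2).mul (meas_bre_coord 1 2)
  have h3 := int_inv hmeas hinv (ftriple_mono h1 h2) hG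
  have e : (fun ω => bre ((pb (ftriple a b c) (T ω)) 0 2) * bre ((pb (ftriple a b c) (T ω)) 1 2))
      = fun ω => bre (T ω a c) * bre (T ω b c) := by
    funext ω
    show bre (T ω (ftriple a b c 0) (ftriple a b c 2)) * bre (T ω (ftriple a b c 1) (ftriple a b c 2)) = _
    rw [ftriple_zero, ftriple_one, ftriple_two]
  calc ∫ ω, bre (T ω a c) * bre (T ω b c) ∂P
      = ∫ ω, bre ((pb (ftriple a b c) (T ω)) 0 2) * bre ((pb (ftriple a b c) (T ω)) 1 2) ∂P := by
        rw [e]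
  _ = ∫ ω, bre (T ω 0 2) * bre (T ω 1 2) ∂P := h3

lemma const_tripleR (hmeas : Measurable T)
    (hinv : ∀ f : ℤ → ℤ, StrictMono f →
      P.map (fun ω => fun m n => T ω (f m) (f n)) = P.map T)
    {a b c : ℤ} (h1 : a < b) (h2 : b < c) :
    ∫ ω, bre (T ω b a) * bre (T ω c a) ∂P
      = ∫ ω, bre (T ω 1 0) * bre (T ω 2 0) ∂P := by
  have hG : Measurable (fun R : Arr => bre (R 1 0) * bre (R 2 0)) :=
    (meas_bre_coord 1 0).mul (meas_bre_coord 2 0)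
  have h3 := int_inv hmeas hinv (ftriple_mono h1 h2) hG
  have e : (fun ω => bre ((pb (ftriple a b c) (T ω)) 1 0) * bre ((pb (ftriple a b c) (T ω)) 2 0))
      = fun ω => bre (T ω b a) * bre (T ω c a) := by
    funext ω
    show bre (T ω (ftriple a b c 1) (ftriple a b c 0)) * bre (T ω (ftriple a b c 2) (ftriple a b c 0)) = _
    rw [ftriple_zero, ftriple_one, ftriple_two]
  calc ∫ ω, bre (T ω b a) * bre (T ω c a) ∂P
      = ∫ ω, bre ((pb (ftriple a b c) (T ω)) 1 0) * bre ((pb (ftriple a b c) (T ω)) 2 0) ∂P := by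
        rw [e]
  _ = ∫ ω, bre (T ω 1 0) * bre (T ω 2 0) ∂P := h3

theorem ae_conv (hmeas : Measurable T)
    (hinv : ∀ f : ℤ → ℤ, StrictMono f →
      P.map (fun ω => fun m n => T ω (f m) (f n)) = P.map T) :
    ∀ᵐ ω ∂P, Conv (T ω) := by
  have hLc : ∀ c : ℤ, ∀ᵐ ω ∂P, ∃ L, Tendsto (avg (lseq (T ω) c)) atTop (nhds L) := by
    intro c
    have happ := L2main P (fun i ω => lseq (T ω) c i)
      (fun i => (meas_bre_coord (c - 1 - (i:ℤ)) c).comp hmeas)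
      (fun i ω => bre_mem _)
      (∫ ω, bre (T ω 0 1) ∂P) (∫ ω, bre (T ω 0 2) * bre (T ω 1 2) ∂P)
      (fun i => const_below hmeas hinv (by omega))
      ?_
    · apply happ.mono
      intro ω hω
      exact hω
    · intro i j hij
      rcases lt_or_gt_of_ne hij with h | h
      · have := const_tripleL hmeas hinv
          (show c - 1 - (j:ℤ) < c - 1 - (i:ℤ) by omega)
          (show c - 1 - (i:ℤ) < c by omega)
        calc ∫ ω, lseq (T ω) c i * lseq (T ω) c j ∂P
            = ∫ ω, bre (T ω (c-1-(j:ℤ)) c) * bre (T ω (c-1-(i:ℤ)) c) ∂P := by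
              unfold lseq; first | rfl | (congr 1; funext ω; ring)
        _ = _ := this
      · have := const_tripleL hmeas hinv
          (show c - 1 - (i:ℤ) < c - 1 - (j:ℤ) by omega)
          (show c - 1 - (j:ℤ) < c by omega)
        calc ∫ ω, lseq (T ω) c i * lseq (T ω) c j ∂P
            = ∫ ω, bre (T ω (c-1-(i:ℤ)) c) * bre (T ω (c-1-(j:ℤ)) c) ∂P := by
              unfold lseq; first | rfl | (congr 1; funext ω; ring)
        _ = _ := this
  have hRc : ∀ c : ℤ, ∀ᵐ ω ∂P, ∃ L, Tendsto (avg (rseq (T ω) c)) atTop (nhds L) := by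
    intro c
    have happ := L2main P (fun i ω => rseq (T ω) c i)
      (fun i => (meas_bre_coord (c + 1 + (i:ℤ)) c).comp hmeas)
      (fun i ω => bre_mem _)
      (∫ ω, bre (T ω 1 0) ∂P) (∫ ω, bre (T ω 1 0) * bre (T ω 2 0) ∂P)
      (fun i => const_above hmeas hinv (by omega))
      ?_
    · apply happ.mono
      intro ω hω
      exact hω
    · intro i j hij
      rcases lt_or_gt_of_ne hij with h | h
      · exact const_tripleR hmeas hinv
          (show c < c + 1 + (i:ℤ) by omega)
          (show c + 1 + (i:ℤ) < c + 1 + (j:ℤ) by omega)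
      · have := const_tripleR hmeas hinv
          (show c < c + 1 + (j:ℤ) by omega)
          (show c + 1 + (j:ℤ) < c + 1 + (i:ℤ) by omega)
        calc ∫ ω, rseq (T ω) c i * rseq (T ω) c j ∂P
            = ∫ ω, bre (T ω (c+1+(j:ℤ)) c) * bre (T ω (c+1+(i:ℤ)) c) ∂P := by
              unfold rseq; first | rfl | (congr 1; funext ω; ring)
        _ = _ := this
  have hall : ∀ᵐ ω ∂P, ∀ c : ℤ,
      (∃ L, Tendsto (avg (lseq (T ω) c)) atTop (nhds L)) ∧
      (∃ L, Tendsto (avg (rseq (T ω) c)) atTop (nhds L)) := by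
    rw [ae_all_iff]
    intro c
    exact (hLc c).and (hRc c)
  apply hall.mono
  intro ω hω
  exact conv_of_exists hω

end Main

section Det

lemma sto_total {R : Arr} (h : IsStrictTotalBool R) {a b : ℤ} (hne : a ≠ b)
    (hab : ¬ R a b = true) : R b a = true := by
  have h3 := h.2.2 a b hne
  cases hba : R b a
  · rw [hba] at h3
    simp at h3
    exact absurd h3 hab
  · rfl

lemma sto_asym {R : Arr} (h : IsStrictTotalBool R) {a b : ℤ} (h1 : R a b = true)
    (h2 : R b a = true) : False := by
  have h4 := h.2.1 a b a h1 h2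
  rw [h.1 a] at h4
  simp at h4

/-- smaller left-density forces being below -/
lemma detX {R : Arr} (h : IsStrictTotalBool R) (hR : Conv R) {x y : ℤ} (hxy : x ≠ y)
    (hlt : XF x R < XF y R) : R x y = true := by
  by_contra hxy'
  have hyx : R y x = true := sto_total h hxy hxy'
  set M := min x y with hM
  set u : ℕ → ℝ := fun j => bre (R (M - 1 - (j:ℤ)) y) with hu
  set w : ℕ → ℝ := fun j => bre (R (M - 1 - (j:ℤ)) x) with hw
  have hterm : ∀ j, u j ≤ w j := by
    intro j
    apply bre_le_bre
    intro hky
    exact h.2.1 _ _ _ hky hyx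
  have hucv : Tendsto (avg u) atTop (nhds (XF y R)) := by
    apply cesaro_congr 0 ((y - M).toNat) (fun j => bre_abs_le _)
      (fun j => by unfold lseq; exact bre_abs_le _) _ ((hR y).1)
    intro j _
    unfold lseq
    have e : M - 1 - (j:ℤ) = y - 1 - ((j + (y - M).toNat : ℕ):ℤ) := by
      push_cast [Int.toNat_of_nonneg (show (0:ℤ) ≤ y - M by omega)]
      ring
    show bre (R (M - 1 - (j:ℤ)) y) = _
    rw [e]
  have hwcv : Tendsto (avg w) atTop (nhds (XF x R)) := by
    apply cesaro_congr 0 ((x - M).toNat) (fun j => bre_abs_le _)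
      (fun j => by unfold lseq; exact bre_abs_le _) _ ((hR x).1)
    intro j _
    unfold lseq
    have e : M - 1 - (j:ℤ) = x - 1 - ((j + (x - M).toNat : ℕ):ℤ) := by
      push_cast [Int.toNat_of_nonneg (show (0:ℤ) ≤ x - M by omega)]
      ring
    show bre (R (M - 1 - (j:ℤ)) x) = _
    rw [e]
  have := le_of_tendsto_of_tendsto' hucv hwcv (fun N => avg_mono hterm N)
  linarith

/-- smaller right-density forces being below -/
lemma detY {R : Arr} (h : IsStrictTotalBool R) (hR : Conv R) {x y : ℤ} (hxy : x ≠ y)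
    (hlt : YF x R < YF y R) : R x y = true := by
  by_contra hxy'
  have hyx : R y x = true := sto_total h hxy hxy'
  set M := max x y with hM
  set u : ℕ → ℝ := fun j => bre (R (M + 1 + (j:ℤ)) y) with hu
  set w : ℕ → ℝ := fun j => bre (R (M + 1 + (j:ℤ)) x) with hw
  have hterm : ∀ j, u j ≤ w j := by
    intro j
    apply bre_le_bre
    intro hky
    exact h.2.1 _ _ _ hky hyx
  have hucv : Tendsto (avg u) atTop (nhds (YF y R)) := by
    apply cesaro_congr 0 ((M - y).toNat) (fun j => bre_abs_le _)
      (fun j => by unfold rseq; exact bre_abs_le _) _ ((hR y).2)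
    intro j _
    unfold rseq
    have e : M + 1 + (j:ℤ) = y + 1 + ((j + (M - y).toNat : ℕ):ℤ) := by
      push_cast [Int.toNat_of_nonneg (show (0:ℤ) ≤ M - y by omega)]
      ring
    show bre (R (M + 1 + (j:ℤ)) y) = _
    rw [e]
  have hwcv : Tendsto (avg w) atTop (nhds (YF x R)) := by
    apply cesaro_congr 0 ((M - x).toNat) (fun j => bre_abs_le _)
      (fun j => by unfold rseq; exact bre_abs_le _) _ ((hR x).2)
    intro j _
    unfold rseq
    have e : M + 1 + (j:ℤ) = x + 1 + ((j + (M - x).toNat : ℕ):ℤ) := by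
      push_cast [Int.toNat_of_nonneg (show (0:ℤ) ≤ M - x by omega)]
      ring
    show bre (R (M + 1 + (j:ℤ)) x) = _
    rw [e]
  have := le_of_tendsto_of_tendsto' hucv hwcv (fun N => avg_mono hterm N)
  linarith

end Det

section Bad

lemma limA_le_one {u : ℕ → ℝ} (h : ∀ N, u N ≤ 1) : limA u ≤ 1 := by
  unfold limA
  have h1 : limsup (fun N => ENNReal.ofReal (u N)) atTop ≤ 1 := by
    apply limsup_le_of_le
    · isBoundedDefault
    · filter_upwards with N
      calc ENNReal.ofReal (u N) ≤ ENNReal.ofReal 1 := ENNReal.ofReal_le_ofReal (h N)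
      _ = 1 := ENNReal.ofReal_one
  calc (limsup (fun N => ENNReal.ofReal (u N)) atTop).toReal
      ≤ (1:ENNReal).toReal := ENNReal.toReal_mono (by simp) h1
  _ = 1 := by simp

lemma XF_le_one (c : ℤ) (R : Arr) : XF c R ≤ 1 :=
  limA_le_one (fun N => avg_le_one (fun j => bre_le_one _) N)

lemma YF_le_one (c : ℤ) (R : Arr) : YF c R ≤ 1 :=
  limA_le_one (fun N => avg_le_one (fun j => bre_le_one _) N)

noncomputable def indB2 (x y : ℤ) (R : Arr) : ℝ :=
  ib (R y x = true ∧ XF x R = XF y R ∧ YF x R = YF y R ∧ YF x R < XF x R)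

noncomputable def indB1 (x y : ℤ) (R : Arr) : ℝ :=
  ib (R x y = true ∧ XF x R = XF y R ∧ YF x R = YF y R ∧ XF x R ≤ YF x R)

lemma meas_ib_set {α : Type*} [MeasurableSpace α] {p : α → Prop}
    (hp : MeasurableSet {a | p a}) : Measurable (fun a => ib (p a)) := by
  unfold ib
  exact Measurable.ite hp measurable_const measurable_const

lemma meas_indB2 (x y : ℤ) : Measurable (indB2 x y) := by
  apply meas_ib_set
  apply MeasurableSet.inter
  · exact meas_coord y x (measurableSet_singleton true)
  apply MeasurableSet.inter
  · exact measurableSet_eq_fun (meas_XF x) (meas_XF y)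
  apply MeasurableSet.inter
  · exact measurableSet_eq_fun (meas_YF x) (meas_YF y)
  · exact measurableSet_lt (meas_YF x) (meas_XF x)

lemma meas_indB1 (x y : ℤ) : Measurable (indB1 x y) := by
  apply meas_ib_set
  apply MeasurableSet.inter
  · exact meas_coord x y (measurableSet_singleton true)
  apply MeasurableSet.inter
  · exact measurableSet_eq_fun (meas_XF x) (meas_XF y)
  apply MeasurableSet.inter
  · exact measurableSet_eq_fun (meas_YF x) (meas_YF y)
  · exact measurableSet_le (meas_XF x) (meas_YF x)

lemma indB2_pb {f : ℤ → ℤ} (hf : StrictMono f) {K1 s1 K2 s2 : ℤ}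
    (ht1 : ∀ k : ℤ, k ≤ K1 → f k = k + s1)
    (ht2 : ∀ k : ℤ, K2 ≤ k → f k = k + s2)
    {R : Arr} (hR : Conv R) (x y : ℤ) :
    indB2 x y (pb f R) = indB2 (f x) (f y) R := by
  obtain ⟨_, hXe, hYe⟩ := conv_pb hf ht1 ht2 hR
  unfold indB2
  rw [hXe x, hXe y, hYe x, hYe y]
  rfl

lemma indB1_pb {f : ℤ → ℤ} (hf : StrictMono f) {K1 s1 K2 s2 : ℤ}
    (ht1 : ∀ k : ℤ, k ≤ K1 → f k = k + s1)
    (ht2 : ∀ k : ℤ, K2 ≤ k → f k = k + s2)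
    {R : Arr} (hR : Conv R) (x y : ℤ) :
    indB1 x y (pb f R) = indB1 (f x) (f y) R := by
  obtain ⟨_, hXe, hYe⟩ := conv_pb hf ht1 ht2 hR
  unfold indB1
  rw [hXe x, hXe y, hYe x, hYe y]
  rfl

/-- middle comparison: if `R n' 0` then the first `r` left-neighbour average of `n' = 1+r`
is dominated by the first `r` right-neighbour average of `0`. -/
lemma middle_sum_le {R : Arr} (h : IsStrictTotalBool R) {r : ℕ}
    (hts : R (1+(r:ℤ)) 0 = true) :
    ∑ j ∈ range r, lseq R (1+(r:ℤ)) j ≤ ∑ j ∈ range r, rseq R 0 j := by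
  have hrefl : ∑ j ∈ range r, lseq R (1+(r:ℤ)) j
      = ∑ j ∈ range r, bre (R (1+(j:ℤ)) (1+(r:ℤ))) := by
    rw [← Finset.sum_range_reflect (fun j => bre (R (1+(j:ℤ)) (1+(r:ℤ)))) r]
    apply Finset.sum_congr rfl
    intro j hj
    rw [Finset.mem_range] at hj
    unfold lseq
    have e : (1+(r:ℤ)) - 1 - (j:ℤ) = 1 + ((r - 1 - j : ℕ):ℤ) := by
      push_cast [Nat.cast_sub (by omega : 1 + j ≤ r)]
      omega
    rw [e]
  rw [hrefl]
  apply Finset.sum_le_sum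
  intro j _
  unfold rseq
  have e : (0:ℤ) + 1 + (j:ℤ) = 1 + (j:ℤ) := by ring
  rw [e]
  apply bre_le_bre
  intro hkn
  exact h.2.1 _ _ _ hkn hts

variable {Ω : Type*} [MeasurableSpace Ω] {P : Measure Ω} [IsProbabilityMeasure P]
  {T : Ω → Arr}

lemma int_of_bdd (hmeas : Measurable T) {G : Arr → ℝ} (hm : Measurable G) (C : ℝ)
    (hb : ∀ R, |G R| ≤ C) : Integrable (fun ω => G (T ω)) P :=
  Integrable.mono' (integrable_const C) (hm.comp hmeas).aestronglyMeasurable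
    (Filter.Eventually.of_forall (fun ω => by rw [Real.norm_eq_abs]; exact hb (T ω)))

lemma indB2_abs_le (x y : ℤ) (R : Arr) : |indB2 x y R| ≤ 1 := ib_abs_le _
lemma indB1_abs_le (x y : ℤ) (R : Arr) : |indB1 x y R| ≤ 1 := ib_abs_le _

lemma avgXdiff_abs_le (c : ℤ) (r : ℕ) (R : Arr) :
    |avg (lseq R c) r - XF c R| ≤ 2 := by
  have h1 : 0 ≤ avg (lseq R c) r := avg_nonneg (fun j => bre_nonneg _) r
  have h2 : avg (lseq R c) r ≤ 1 := avg_le_one (fun j => bre_le_one _) r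
  have h3 := XF_nonneg c R
  have h4 := XF_le_one c R
  rw [abs_le]
  constructor <;> linarith

lemma avgYdiff_abs_le (c : ℤ) (r : ℕ) (R : Arr) :
    |avg (rseq R c) r - YF c R| ≤ 2 := by
  have h1 : 0 ≤ avg (rseq R c) r := avg_nonneg (fun j => bre_nonneg _) r
  have h2 : avg (rseq R c) r ≤ 1 := avg_le_one (fun j => bre_le_one _) r
  have h3 := YF_nonneg c R
  have h4 := YF_le_one c R
  rw [abs_le]
  constructor <;> linarith

lemma prodbd {a b : ℝ} (ha : |a| ≤ 1) (hb : |b| ≤ 2) : |a*b| ≤ 2 := by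
  rw [abs_mul]
  calc |a| * |b| ≤ 1 * 2 := mul_le_mul ha hb (abs_nonneg _) zero_le_one
  _ = 2 := by norm_num

lemma XYdiff_abs_le (c : ℤ) (R : Arr) : |XF c R - YF c R| ≤ 2 := by
  have h1 := XF_nonneg c R; have h2 := XF_le_one c R
  have h3 := YF_nonneg c R; have h4 := YF_le_one c R
  rw [abs_le]; constructor <;> linarith

theorem B2_int_zero (hmeas : Measurable T)
    (hSTO : ∀ ω, IsStrictTotalBool (T ω))
    (hinv : ∀ f : ℤ → ℤ, StrictMono f →
      P.map (fun ω => fun m n => T ω (f m) (f n)) = P.map T) :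
    ∫ ω, indB2 0 1 (T ω) ∂P = 0 := by
  have hconv := ae_conv hmeas hinv
  set G2 : Arr → ℝ := fun R => indB2 0 1 R * (XF 0 R - YF 0 R) with hG2
  have hG2m : Measurable G2 := (meas_indB2 0 1).mul ((meas_XF 0).sub (meas_YF 0))
  have hG2b : ∀ R, |G2 R| ≤ 2 := fun R => prodbd (indB2_abs_le 0 1 R) (XYdiff_abs_le 0 R)
  have hG2nn : ∀ R, 0 ≤ G2 R := by
    intro R
    show 0 ≤ indB2 0 1 R * (XF 0 R - YF 0 R)
    by_cases hp : (R 1 0 = true ∧ XF 0 R = XF 1 R ∧ YF 0 R = YF 1 R ∧ YF 0 R < XF 0 R)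
    · rw [show indB2 0 1 R = 1 from ib_pos hp]
      have := hp.2.2.2
      linarith
    · rw [show indB2 0 1 R = 0 from ib_neg hp]
      simp
  set κ : ℝ := ∫ ω, G2 (T ω) ∂P with hκ
  have hκnn : 0 ≤ κ := integral_nonneg (fun ω => hG2nn (T ω))
  have hκr : ∀ r : ℕ,
      ∫ ω, indB2 0 (1+(r:ℤ)) (T ω) * (XF 0 (T ω) - YF 0 (T ω)) ∂P = κ := by
    intro r
    have hlt : (0:ℤ) < 1 + r := by omega
    have hf := fpair_mono hlt
    rw [hκ, ← int_inv hmeas hinv hf hG2m]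
    apply integral_congr_ae
    filter_upwards [hconv] with ω hω
    obtain ⟨_, hXe, hYe⟩ :=
      conv_pb hf (fpair_tailL 0 (1+(r:ℤ))) (fpair_tailR 0 (1+(r:ℤ))) hω
    have hpb := indB2_pb hf (fpair_tailL 0 (1+(r:ℤ))) (fpair_tailR 0 (1+(r:ℤ))) hω 0 1
    show indB2 0 (1+(r:ℤ)) (T ω) * (XF 0 (T ω) - YF 0 (T ω))
        = indB2 0 1 (pb (fpair 0 (1+(r:ℤ))) (T ω))
          * (XF 0 (pb (fpair 0 (1+(r:ℤ))) (T ω)) - YF 0 (pb (fpair 0 (1+(r:ℤ))) (T ω)))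
    rw [hpb, hXe 0, hYe 0, fpair_zero, fpair_one]
  have hptb : ∀ r : ℕ, ∀ ω,
      indB2 0 (1+(r:ℤ)) (T ω) * (XF 0 (T ω) - YF 0 (T ω))
        ≤ |avg (lseq (T ω) (1+(r:ℤ))) r - XF (1+(r:ℤ)) (T ω)|
          + |avg (rseq (T ω) 0) r - YF 0 (T ω)| := by
    intro r ω
    by_cases hp : (T ω (1+(r:ℤ)) 0 = true ∧ XF 0 (T ω) = XF (1+(r:ℤ)) (T ω)
        ∧ YF 0 (T ω) = YF (1+(r:ℤ)) (T ω) ∧ YF 0 (T ω) < XF 0 (T ω))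
    · rw [show indB2 0 (1+(r:ℤ)) (T ω) = 1 from ib_pos hp, one_mul]
      have havg : avg (lseq (T ω) (1+(r:ℤ))) r ≤ avg (rseq (T ω) 0) r := by
        unfold avg
        exact mul_le_mul_of_nonneg_left (middle_sum_le (hSTO ω) hp.1) (by positivity)
      have key : XF 0 (T ω) - YF 0 (T ω) = XF (1+(r:ℤ)) (T ω) - YF 0 (T ω) := by
        rw [hp.2.1]
      have b1 : XF (1+(r:ℤ)) (T ω) - avg (lseq (T ω) (1+(r:ℤ))) r
          ≤ |avg (lseq (T ω) (1+(r:ℤ))) r - XF (1+(r:ℤ)) (T ω)| := by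
        rw [abs_sub_comm]
        exact le_abs_self _
      have b2 : avg (rseq (T ω) 0) r - YF 0 (T ω)
          ≤ |avg (rseq (T ω) 0) r - YF 0 (T ω)| := le_abs_self _
      linarith
    · rw [show indB2 0 (1+(r:ℤ)) (T ω) = 0 from ib_neg hp, zero_mul]
      positivity
  have hmeasL : ∀ (c : ℤ) (r : ℕ),
      Measurable (fun R : Arr => |avg (lseq R c) r - XF c R|) :=
    fun c r => ((meas_avg_lseq c r).sub (meas_XF c)).abs
  have hmeasR : ∀ (c : ℤ) (r : ℕ),
      Measurable (fun R : Arr => |avg (rseq R c) r - YF c R|) :=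
    fun c r => ((meas_avg_rseq c r).sub (meas_YF c)).abs
  have hintL : ∀ (c : ℤ) (r : ℕ),
      Integrable (fun ω => |avg (lseq (T ω) c) r - XF c (T ω)|) P :=
    fun c r => int_of_bdd hmeas (hmeasL c r) 2
      (fun R => by rw [abs_abs]; exact avgXdiff_abs_le c r R)
  have hintR : ∀ (c : ℤ) (r : ℕ),
      Integrable (fun ω => |avg (rseq (T ω) c) r - YF c (T ω)|) P :=
    fun c r => int_of_bdd hmeas (hmeasR c r) 2
      (fun R => by rw [abs_abs]; exact avgYdiff_abs_le c r R)
  have hshift : ∀ r : ℕ, ∫ ω, |avg (lseq (T ω) (1+(r:ℤ))) r - XF (1+(r:ℤ)) (T ω)| ∂P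
      = ∫ ω, |avg (lseq (T ω) 1) r - XF 1 (T ω)| ∂P := by
    intro r
    rw [← int_inv hmeas hinv (fshift_mono (r:ℤ)) (hmeasL 1 r)]
    congr 1
    funext ω
    show |avg (lseq (T ω) (1+(r:ℤ))) r - XF (1+(r:ℤ)) (T ω)|
        = |avg (lseq (pb (fun k => k + (r:ℤ)) (T ω)) 1) r
            - XF 1 (pb (fun k => k + (r:ℤ)) (T ω))|
    rw [lseq_shift, XF_shift]
  have hκler : ∀ r : ℕ, κ ≤ (∫ ω, |avg (lseq (T ω) 1) r - XF 1 (T ω)| ∂P)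
      + ∫ ω, |avg (rseq (T ω) 0) r - YF 0 (T ω)| ∂P := by
    intro r
    rw [← hshift r, ← hκr r]
    have hint0 : Integrable
        (fun ω => indB2 0 (1+(r:ℤ)) (T ω) * (XF 0 (T ω) - YF 0 (T ω))) P :=
      int_of_bdd hmeas ((meas_indB2 0 _).mul ((meas_XF 0).sub (meas_YF 0))) 2
        (fun R => prodbd (indB2_abs_le _ _ R) (XYdiff_abs_le 0 R))
    calc ∫ ω, indB2 0 (1+(r:ℤ)) (T ω) * (XF 0 (T ω) - YF 0 (T ω)) ∂P
        ≤ ∫ ω, (|avg (lseq (T ω) (1+(r:ℤ))) r - XF (1+(r:ℤ)) (T ω)|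
            + |avg (rseq (T ω) 0) r - YF 0 (T ω)|) ∂P := by
          apply integral_mono hint0 ((hintL _ r).add (hintR 0 r)) (fun ω => hptb r ω)
    _ = _ := integral_add (hintL _ r) (hintR 0 r)
  have hδ1 : Tendsto (fun r : ℕ => ∫ ω, |avg (lseq (T ω) 1) r - XF 1 (T ω)| ∂P)
      atTop (nhds 0) := by
    have h := tendsto_integral_of_dominated_convergence (μ := P)
      (F := fun r ω => |avg (lseq (T ω) 1) r - XF 1 (T ω)|)
      (f := fun _ => (0:ℝ)) (bound := fun _ => 2)
      (fun r => ((hmeasL 1 r).comp hmeas).aestronglyMeasurable)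
      (integrable_const 2)
      (fun r => Filter.Eventually.of_forall (fun ω => by
        rw [Real.norm_eq_abs, abs_abs]
        exact avgXdiff_abs_le 1 r (T ω)))
      ?_
    · simpa using h
    · filter_upwards [hconv] with ω hω
      have h2 : Tendsto (fun r => avg (lseq (T ω) 1) r - XF 1 (T ω)) atTop (nhds 0) := by
        have h3 := (hω 1).1.sub (tendsto_const_nhds (x := XF 1 (T ω)))
        simpa using h3
      have h4 := h2.abs
      simpa using h4
  have hδ2 : Tendsto (fun r : ℕ => ∫ ω, |avg (rseq (T ω) 0) r - YF 0 (T ω)| ∂P)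
      atTop (nhds 0) := by
    have h := tendsto_integral_of_dominated_convergence (μ := P)
      (F := fun r ω => |avg (rseq (T ω) 0) r - YF 0 (T ω)|)
      (f := fun _ => (0:ℝ)) (bound := fun _ => 2)
      (fun r => ((hmeasR 0 r).comp hmeas).aestronglyMeasurable)
      (integrable_const 2)
      (fun r => Filter.Eventually.of_forall (fun ω => by
        rw [Real.norm_eq_abs, abs_abs]
        exact avgYdiff_abs_le 0 r (T ω)))
      ?_
    · simpa using h
    · filter_upwards [hconv] with ω hω
      have h2 : Tendsto (fun r => avg (rseq (T ω) 0) r - YF 0 (T ω)) atTop (nhds 0) := by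
        have h3 := (hω 0).2.sub (tendsto_const_nhds (x := YF 0 (T ω)))
        simpa using h3
      have h4 := h2.abs
      simpa using h4
  have hκ0 : κ ≤ 0 := by
    have hsum0 : Tendsto (fun r : ℕ => (∫ ω, |avg (lseq (T ω) 1) r - XF 1 (T ω)| ∂P)
        + ∫ ω, |avg (rseq (T ω) 0) r - YF 0 (T ω)| ∂P) atTop (nhds 0) := by
      have := hδ1.add hδ2
      simpa using this
    exact ge_of_tendsto hsum0 (Filter.Eventually.of_forall (fun r => hκler r))
  have hκeq : κ = 0 := le_antisymm hκ0 hκnn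
  have hae0 : ∀ᵐ ω ∂P, G2 (T ω) = 0 := by
    have := (integral_eq_zero_iff_of_nonneg (fun ω => hG2nn (T ω))
      (int_of_bdd hmeas hG2m 2 hG2b)).1 (by rw [← hκ]; exact hκeq)
    exact this
  have hae1 : ∀ᵐ ω ∂P, indB2 0 1 (T ω) = 0 := by
    filter_upwards [hae0] with ω hω
    by_cases hp : (T ω 1 0 = true ∧ XF 0 (T ω) = XF 1 (T ω)
        ∧ YF 0 (T ω) = YF 1 (T ω) ∧ YF 0 (T ω) < XF 0 (T ω))
    · exfalso
      have hω' : indB2 0 1 (T ω) * (XF 0 (T ω) - YF 0 (T ω)) = 0 := hω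
      rw [show indB2 0 1 (T ω) = 1 from ib_pos hp, one_mul] at hω'
      have := hp.2.2.2
      linarith [hω']
    · exact ib_neg hp
  calc ∫ ω, indB2 0 1 (T ω) ∂P = ∫ _ω, (0:ℝ) ∂P := integral_congr_ae hae1
  _ = 0 := integral_zero _ _

lemma measL (c : ℤ) (r : ℕ) : Measurable (fun R : Arr => |avg (lseq R c) r - XF c R|) :=
  ((meas_avg_lseq c r).sub (meas_XF c)).abs

lemma measR (c : ℤ) (r : ℕ) : Measurable (fun R : Arr => |avg (rseq R c) r - YF c R|) :=
  ((meas_avg_rseq c r).sub (meas_YF c)).abs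

lemma intL (hmeas : Measurable T) (c : ℤ) (r : ℕ) :
    Integrable (fun ω => |avg (lseq (T ω) c) r - XF c (T ω)|) P :=
  int_of_bdd hmeas (measL c r) 2
    (fun R => by rw [abs_abs]; exact avgXdiff_abs_le c r R)

lemma intR (hmeas : Measurable T) (c : ℤ) (r : ℕ) :
    Integrable (fun ω => |avg (rseq (T ω) c) r - YF c (T ω)|) P :=
  int_of_bdd hmeas (measR c r) 2
    (fun R => by rw [abs_abs]; exact avgYdiff_abs_le c r R)

lemma shiftL (hmeas : Measurable T)
    (hinv : ∀ f : ℤ → ℤ, StrictMono f →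
      P.map (fun ω => fun m n => T ω (f m) (f n)) = P.map T) (r : ℕ) :
    ∫ ω, |avg (lseq (T ω) (1+(r:ℤ))) r - XF (1+(r:ℤ)) (T ω)| ∂P
      = ∫ ω, |avg (lseq (T ω) 1) r - XF 1 (T ω)| ∂P := by
  rw [← int_inv hmeas hinv (fshift_mono (r:ℤ)) (measL 1 r)]
  congr 1
  funext ω
  show |avg (lseq (T ω) (1+(r:ℤ))) r - XF (1+(r:ℤ)) (T ω)|
      = |avg (lseq (pb (fun k => k + (r:ℤ)) (T ω)) 1) r
          - XF 1 (pb (fun k => k + (r:ℤ)) (T ω))|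
  rw [lseq_shift, XF_shift]

lemma tendL (hmeas : Measurable T)
    (hinv : ∀ f : ℤ → ℤ, StrictMono f →
      P.map (fun ω => fun m n => T ω (f m) (f n)) = P.map T) :
    Tendsto (fun r : ℕ => ∫ ω, |avg (lseq (T ω) 1) r - XF 1 (T ω)| ∂P)
      atTop (nhds 0) := by
  have hconv := ae_conv hmeas hinv
  have h := tendsto_integral_of_dominated_convergence (μ := P)
    (F := fun r ω => |avg (lseq (T ω) 1) r - XF 1 (T ω)|)
    (f := fun _ => (0:ℝ)) (bound := fun _ => 2)
    (fun r => ((measL 1 r).comp hmeas).aestronglyMeasurable)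
    (integrable_const 2)
    (fun r => Filter.Eventually.of_forall (fun ω => by
      rw [Real.norm_eq_abs, abs_abs]
      exact avgXdiff_abs_le 1 r (T ω)))
    ?_
  · simpa using h
  · filter_upwards [hconv] with ω hω
    have h2 : Tendsto (fun r => avg (lseq (T ω) 1) r - XF 1 (T ω)) atTop (nhds 0) := by
      have h3 := (hω 1).1.sub (tendsto_const_nhds (x := XF 1 (T ω)))
      simpa using h3
    have h4 := h2.abs
    simpa using h4

lemma tendR (hmeas : Measurable T)
    (hinv : ∀ f : ℤ → ℤ, StrictMono f →
      P.map (fun ω => fun m n => T ω (f m) (f n)) = P.map T) :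
    Tendsto (fun r : ℕ => ∫ ω, |avg (rseq (T ω) 0) r - YF 0 (T ω)| ∂P)
      atTop (nhds 0) := by
  have hconv := ae_conv hmeas hinv
  have h := tendsto_integral_of_dominated_convergence (μ := P)
    (F := fun r ω => |avg (rseq (T ω) 0) r - YF 0 (T ω)|)
    (f := fun _ => (0:ℝ)) (bound := fun _ => 2)
    (fun r => ((measR 0 r).comp hmeas).aestronglyMeasurable)
    (integrable_const 2)
    (fun r => Filter.Eventually.of_forall (fun ω => by
      rw [Real.norm_eq_abs, abs_abs]
      exact avgYdiff_abs_le 0 r (T ω)))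
    ?_
  · simpa using h
  · filter_upwards [hconv] with ω hω
    have h2 : Tendsto (fun r => avg (rseq (T ω) 0) r - YF 0 (T ω)) atTop (nhds 0) := by
      have h3 := (hω 0).2.sub (tendsto_const_nhds (x := YF 0 (T ω)))
      simpa using h3
    have h4 := h2.abs
    simpa using h4

/-- `θ` is pattern-constant -/
lemma theta_const (hmeas : Measurable T)
    (hinv : ∀ f : ℤ → ℤ, StrictMono f →
      P.map (fun ω => fun m n => T ω (f m) (f n)) = P.map T)
    {a b : ℤ} (ha : 0 < a) (hab : a < b) :
    ∫ ω, indB1 0 a (T ω) * indB1 a b (T ω) ∂P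
      = ∫ ω, indB1 0 1 (T ω) * indB1 1 2 (T ω) ∂P := by
  have hconv := ae_conv hmeas hinv
  have hGm : Measurable (fun R : Arr => indB1 0 1 R * indB1 1 2 R) :=
    (meas_indB1 0 1).mul (meas_indB1 1 2)
  have hf := ftriple_mono (show (0:ℤ) < a from ha) hab
  rw [← int_inv hmeas hinv hf hGm]
  apply integral_congr_ae
  filter_upwards [hconv] with ω hω
  have hpb1 := indB1_pb hf (ftriple_tailL 0 a b) (ftriple_tailR 0 a b) hω 0 1
  have hpb2 := indB1_pb hf (ftriple_tailL 0 a b) (ftriple_tailR 0 a b) hω 1 2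
  show indB1 0 a (T ω) * indB1 a b (T ω)
      = indB1 0 1 (pb (ftriple 0 a b) (T ω)) * indB1 1 2 (pb (ftriple 0 a b) (T ω))
  rw [hpb1, hpb2, ftriple_zero, ftriple_one, ftriple_two]

lemma lsum_eq (R : Arr) (r : ℕ) :
    ∑ j ∈ range r, lseq R (1+(r:ℤ)) j = ∑ j ∈ range r, bre (R (1+(j:ℤ)) (1+(r:ℤ))) := by
  rw [← Finset.sum_range_reflect (fun j => bre (R (1+(j:ℤ)) (1+(r:ℤ)))) r]
  apply Finset.sum_congr rfl
  intro j hj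
  rw [Finset.mem_range] at hj
  unfold lseq
  have e : (1+(r:ℤ)) - 1 - (j:ℤ) = 1 + ((r - 1 - j : ℕ):ℤ) := by
    push_cast [Nat.cast_sub (by omega : 1 + j ≤ r)]
    omega
  rw [e]

lemma rsum_eq (R : Arr) (r : ℕ) :
    ∑ j ∈ range r, rseq R 0 j = ∑ j ∈ range r, bre (R (1+(j:ℤ)) 0) := by
  apply Finset.sum_congr rfl
  intro j _
  unfold rseq
  have e : (0:ℤ) + 1 + (j:ℤ) = 1 + (j:ℤ) := by ring
  rw [e]

/-- pointwise chain bound -/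
lemma chain_pt {R : Arr} (hR : IsStrictTotalBool R) (k n' : ℤ) :
    indB1 0 k R * indB1 k n' R ≤ indB1 0 n' R * (bre (R k n') - bre (R k 0)) := by
  have hRHSnn : 0 ≤ indB1 0 n' R * (bre (R k n') - bre (R k 0)) := by
    by_cases hp3 : (R 0 n' = true ∧ XF 0 R = XF n' R ∧ YF 0 R = YF n' R ∧ XF 0 R ≤ YF 0 R)
    · rw [show indB1 0 n' R = 1 from ib_pos hp3, one_mul]
      have hb : bre (R k 0) ≤ bre (R k n') :=
        bre_le_bre (fun h => hR.2.1 k 0 n' h hp3.1)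
      linarith [hb]
    · rw [show indB1 0 n' R = 0 from ib_neg hp3, zero_mul]
  by_cases hp1 : (R 0 k = true ∧ XF 0 R = XF k R ∧ YF 0 R = YF k R ∧ XF 0 R ≤ YF 0 R)
  · by_cases hp2 : (R k n' = true ∧ XF k R = XF n' R ∧ YF k R = YF n' R ∧ XF k R ≤ YF k R)
    · have hp3 : (R 0 n' = true ∧ XF 0 R = XF n' R ∧ YF 0 R = YF n' R ∧ XF 0 R ≤ YF 0 R) :=
        ⟨hR.2.1 _ _ _ hp1.1 hp2.1, hp1.2.1.trans hp2.2.1,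
          hp1.2.2.1.trans hp2.2.2.1, hp1.2.2.2⟩
      have hk0 : R k 0 = false := by
        cases h : R k 0
        · rfl
        · exact absurd h (fun h' => sto_asym hR hp1.1 h')
      rw [show indB1 0 k R = 1 from ib_pos hp1, show indB1 k n' R = 1 from ib_pos hp2,
        show indB1 0 n' R = 1 from ib_pos hp3, bre_true hp2.1, bre_false hk0]
      norm_num
    · rw [show indB1 k n' R = 0 from ib_neg hp2, mul_zero]
      exact hRHSnn
  · rw [show indB1 0 k R = 0 from ib_neg hp1, zero_mul]
    exact hRHSnn

theorem theta_zero (hmeas : Measurable T)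
    (hSTO : ∀ ω, IsStrictTotalBool (T ω))
    (hinv : ∀ f : ℤ → ℤ, StrictMono f →
      P.map (fun ω => fun m n => T ω (f m) (f n)) = P.map T) :
    ∫ ω, indB1 0 1 (T ω) * indB1 1 2 (T ω) ∂P = 0 := by
  set θ : ℝ := ∫ ω, indB1 0 1 (T ω) * indB1 1 2 (T ω) ∂P with hθ
  have hθnn : 0 ≤ θ := integral_nonneg (fun ω =>
    mul_nonneg (ib_nonneg _) (ib_nonneg _))
  have hintprod : ∀ (a b c d : ℤ), Integrable (fun ω => indB1 a b (T ω) * indB1 c d (T ω)) P :=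
    fun a b c d => int_of_bdd hmeas ((meas_indB1 a b).mul (meas_indB1 c d)) 1
      (fun R => by
        rw [Pi.mul_apply, abs_mul]
        calc |indB1 a b R| * |indB1 c d R| ≤ 1 * 1 :=
          mul_le_mul (indB1_abs_le _ _ _) (indB1_abs_le _ _ _) (abs_nonneg _) zero_le_one
        _ = 1 := by norm_num)
  have hθle : ∀ r : ℕ, 1 ≤ r → θ ≤ ∫ ω, indB1 0 (1+(r:ℤ)) (T ω)
      * (avg (lseq (T ω) (1+(r:ℤ))) r - avg (rseq (T ω) 0) r) ∂P := by
    intro r hr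
    have hrr : (0:ℝ) < r := by exact_mod_cast hr
    have hIint : Integrable (fun ω => ∑ j ∈ range r,
        indB1 0 (1+(j:ℤ)) (T ω) * indB1 (1+(j:ℤ)) (1+(r:ℤ)) (T ω)) P :=
      integrable_finset_sum _ (fun j _ => hintprod _ _ _ _)
    have hJint : Integrable (fun ω => indB1 0 (1+(r:ℤ)) (T ω)
        * ((∑ j ∈ range r, lseq (T ω) (1+(r:ℤ)) j) - ∑ j ∈ range r, rseq (T ω) 0 j)) P := by
      apply int_of_bdd hmeas
        ((meas_indB1 0 _).mul ((Finset.measurable_sum _ (fun j _ => meas_bre_coord _ _)).sub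
          (Finset.measurable_sum _ (fun j _ => meas_bre_coord _ _))))
      intro R
      rw [Pi.mul_apply, abs_mul]
      calc |indB1 0 (1+(r:ℤ)) R| * |(∑ j ∈ range r, lseq R (1+(r:ℤ)) j) - ∑ j ∈ range r, rseq R 0 j|
          ≤ 1 * (2*r) := by
            apply mul_le_mul (indB1_abs_le _ _ _) ?_ (abs_nonneg _) zero_le_one
            have b1 : |∑ j ∈ range r, lseq R (1+(r:ℤ)) j| ≤ r := by
              calc |∑ j ∈ range r, lseq R (1+(r:ℤ)) j|
                  ≤ ∑ j ∈ range r, |lseq R (1+(r:ℤ)) j| := Finset.abs_sum_le_sum_abs _ _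
              _ ≤ ∑ _j ∈ range r, (1:ℝ) := Finset.sum_le_sum (fun j _ => bre_abs_le _)
              _ = r := by simp
            have b2 : |∑ j ∈ range r, rseq R 0 j| ≤ r := by
              calc |∑ j ∈ range r, rseq R 0 j|
                  ≤ ∑ j ∈ range r, |rseq R 0 j| := Finset.abs_sum_le_sum_abs _ _
              _ ≤ ∑ _j ∈ range r, (1:ℝ) := Finset.sum_le_sum (fun j _ => bre_abs_le _)
              _ = r := by simp
            calc |(∑ j ∈ range r, lseq R (1+(r:ℤ)) j) - ∑ j ∈ range r, rseq R 0 j|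
                ≤ |∑ j ∈ range r, lseq R (1+(r:ℤ)) j| + |∑ j ∈ range r, rseq R 0 j| :=
                  abs_sub _ _
            _ ≤ (r:ℝ) + r := add_le_add b1 b2
            _ = 2*r := by ring
      _ = 2*r := by norm_num
    have hsum : (r:ℝ) * θ = ∫ ω, ∑ j ∈ range r,
        indB1 0 (1+(j:ℤ)) (T ω) * indB1 (1+(j:ℤ)) (1+(r:ℤ)) (T ω) ∂P := by
      rw [integral_finset_sum _ (fun j _ => hintprod _ _ _ _)]
      have e : ∀ j ∈ range r, ∫ ω, indB1 0 (1+(j:ℤ)) (T ω) * indB1 (1+(j:ℤ)) (1+(r:ℤ)) (T ω) ∂P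
          = θ := by
        intro j hj
        have hjr := Finset.mem_range.1 hj
        rw [hθ]
        exact theta_const hmeas hinv (by omega) (by push_cast; omega)
      rw [Finset.sum_congr rfl e, Finset.sum_const, Finset.card_range, nsmul_eq_mul]
    have hptw : ∀ ω, ∑ j ∈ range r, indB1 0 (1+(j:ℤ)) (T ω) * indB1 (1+(j:ℤ)) (1+(r:ℤ)) (T ω)
        ≤ indB1 0 (1+(r:ℤ)) (T ω)
          * ((∑ j ∈ range r, lseq (T ω) (1+(r:ℤ)) j) - ∑ j ∈ range r, rseq (T ω) 0 j) := by
      intro ω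
      rw [lsum_eq, rsum_eq, ← Finset.sum_sub_distrib, Finset.mul_sum]
      exact Finset.sum_le_sum (fun j _ => chain_pt (hSTO ω) (1+(j:ℤ)) (1+(r:ℤ)))
    have hrne : (r:ℝ) ≠ 0 := ne_of_gt hrr
    have hintIA : Integrable (fun ω => indB1 0 (1+(r:ℤ)) (T ω)
        * (avg (lseq (T ω) (1+(r:ℤ))) r - avg (rseq (T ω) 0) r)) P := by
      apply int_of_bdd hmeas
        ((meas_indB1 0 _).mul ((meas_avg_lseq _ r).sub (meas_avg_rseq 0 r))) 2
      intro R
      simp only [Pi.mul_apply, Pi.sub_apply]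
      apply prodbd (indB1_abs_le _ _ _)
      have l1 : 0 ≤ avg (lseq R (1+(r:ℤ))) r := avg_nonneg (fun j => bre_nonneg _) _
      have l2 : avg (lseq R (1+(r:ℤ))) r ≤ 1 := avg_le_one (fun j => bre_le_one _) _
      have l3 : 0 ≤ avg (rseq R 0) r := avg_nonneg (fun j => bre_nonneg _) _
      have l4 : avg (rseq R 0) r ≤ 1 := avg_le_one (fun j => bre_le_one _) _
      rw [abs_le]
      constructor <;> linarith
    have hkey : (r:ℝ) * θ ≤ (r:ℝ) * ∫ ω, indB1 0 (1+(r:ℤ)) (T ω)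
        * (avg (lseq (T ω) (1+(r:ℤ))) r - avg (rseq (T ω) 0) r) ∂P := by
      rw [hsum, ← integral_const_mul]
      apply integral_mono hIint (hintIA.const_mul _)
      intro ω
      show ∑ j ∈ range r, indB1 0 (1+(j:ℤ)) (T ω) * indB1 (1+(j:ℤ)) (1+(r:ℤ)) (T ω)
          ≤ (r:ℝ) * (indB1 0 (1+(r:ℤ)) (T ω)
            * (avg (lseq (T ω) (1+(r:ℤ))) r - avg (rseq (T ω) 0) r))
      calc ∑ j ∈ range r, indB1 0 (1+(j:ℤ)) (T ω) * indB1 (1+(j:ℤ)) (1+(r:ℤ)) (T ω)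
          ≤ indB1 0 (1+(r:ℤ)) (T ω)
            * ((∑ j ∈ range r, lseq (T ω) (1+(r:ℤ)) j) - ∑ j ∈ range r, rseq (T ω) 0 j) :=
            hptw ω
      _ = (r:ℝ) * (indB1 0 (1+(r:ℤ)) (T ω)
            * (avg (lseq (T ω) (1+(r:ℤ))) r - avg (rseq (T ω) 0) r)) := by
          unfold avg
          field_simp
          try ring
    exact le_of_mul_le_mul_left hkey hrr
  have hIr : ∀ r : ℕ, 1 ≤ r → ∫ ω, indB1 0 (1+(r:ℤ)) (T ω)
      * (avg (lseq (T ω) (1+(r:ℤ))) r - avg (rseq (T ω) 0) r) ∂P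
      ≤ (∫ ω, |avg (lseq (T ω) 1) r - XF 1 (T ω)| ∂P)
        + ∫ ω, |avg (rseq (T ω) 0) r - YF 0 (T ω)| ∂P := by
    intro r hr
    rw [← shiftL hmeas hinv r]
    have hintIA : Integrable (fun ω => indB1 0 (1+(r:ℤ)) (T ω)
        * (avg (lseq (T ω) (1+(r:ℤ))) r - avg (rseq (T ω) 0) r)) P := by
      apply int_of_bdd hmeas
        ((meas_indB1 0 _).mul ((meas_avg_lseq _ r).sub (meas_avg_rseq 0 r))) 2
      intro R
      simp only [Pi.mul_apply, Pi.sub_apply]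
      apply prodbd (indB1_abs_le _ _ _)
      have l1 : 0 ≤ avg (lseq R (1+(r:ℤ))) r := avg_nonneg (fun j => bre_nonneg _) _
      have l2 : avg (lseq R (1+(r:ℤ))) r ≤ 1 := avg_le_one (fun j => bre_le_one _) _
      have l3 : 0 ≤ avg (rseq R 0) r := avg_nonneg (fun j => bre_nonneg _) _
      have l4 : avg (rseq R 0) r ≤ 1 := avg_le_one (fun j => bre_le_one _) _
      rw [abs_le]
      constructor <;> linarith
    calc ∫ ω, indB1 0 (1+(r:ℤ)) (T ω)
        * (avg (lseq (T ω) (1+(r:ℤ))) r - avg (rseq (T ω) 0) r) ∂P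
        ≤ ∫ ω, (|avg (lseq (T ω) (1+(r:ℤ))) r - XF (1+(r:ℤ)) (T ω)|
            + |avg (rseq (T ω) 0) r - YF 0 (T ω)|) ∂P := by
          apply integral_mono hintIA ((intL hmeas (1+(r:ℤ)) r).add (intR hmeas 0 r))
          intro ω
          show indB1 0 (1+(r:ℤ)) (T ω)
              * (avg (lseq (T ω) (1+(r:ℤ))) r - avg (rseq (T ω) 0) r)
            ≤ |avg (lseq (T ω) (1+(r:ℤ))) r - XF (1+(r:ℤ)) (T ω)|
              + |avg (rseq (T ω) 0) r - YF 0 (T ω)|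
          by_cases hp : (T ω 0 (1+(r:ℤ)) = true ∧ XF 0 (T ω) = XF (1+(r:ℤ)) (T ω)
              ∧ YF 0 (T ω) = YF (1+(r:ℤ)) (T ω) ∧ XF 0 (T ω) ≤ YF 0 (T ω))
          · rw [show indB1 0 (1+(r:ℤ)) (T ω) = 1 from ib_pos hp, one_mul]
            have b1 : avg (lseq (T ω) (1+(r:ℤ))) r - XF (1+(r:ℤ)) (T ω)
                ≤ |avg (lseq (T ω) (1+(r:ℤ))) r - XF (1+(r:ℤ)) (T ω)| := le_abs_self _
            have b2 : YF 0 (T ω) - avg (rseq (T ω) 0) r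
                ≤ |avg (rseq (T ω) 0) r - YF 0 (T ω)| := by
              rw [abs_sub_comm]
              exact le_abs_self _
            have hXY : XF (1+(r:ℤ)) (T ω) ≤ YF 0 (T ω) := by
              rw [← hp.2.1]
              exact hp.2.2.2
            linarith
          · rw [show indB1 0 (1+(r:ℤ)) (T ω) = 0 from ib_neg hp, zero_mul]
            positivity
    _ = _ := integral_add (intL hmeas _ r) (intR hmeas 0 r)
  have hθ0 : θ ≤ 0 := by
    have hsum0 : Tendsto (fun r : ℕ => (∫ ω, |avg (lseq (T ω) 1) r - XF 1 (T ω)| ∂P)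
        + ∫ ω, |avg (rseq (T ω) 0) r - YF 0 (T ω)| ∂P) atTop (nhds 0) := by
      have h7 := (tendL hmeas hinv).add (tendR hmeas hinv)
      simpa using h7
    apply ge_of_tendsto hsum0
    filter_upwards [eventually_ge_atTop 1] with r hr
    exact (hθle r hr).trans (hIr r hr)
  exact le_antisymm hθ0 hθnn

lemma bre_eq_one_iff {b : Bool} : bre b = 1 ↔ b = true := by
  unfold bre; cases b <;> simp

theorem chain_free (hmeas : Measurable T)
    (hSTO : ∀ ω, IsStrictTotalBool (T ω))
    (hinv : ∀ f : ℤ → ℤ, StrictMono f →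
      P.map (fun ω => fun m n => T ω (f m) (f n)) = P.map T) :
    ∀ᵐ ω ∂P, ∀ a b : ℤ, 0 < a → a < b →
      ¬(indB1 0 a (T ω) = 1 ∧ indB1 0 b (T ω) = 1 ∧ T ω a b = true) := by
  rw [ae_all_iff]
  intro a
  rw [ae_all_iff]
  intro b
  by_cases hcond : 0 < a ∧ a < b
  · obtain ⟨ha, hab⟩ := hcond
    have hFnn : ∀ ω, 0 ≤ indB1 0 a (T ω) * indB1 0 b (T ω) * bre (T ω a b) :=
      fun ω => mul_nonneg (mul_nonneg (ib_nonneg _) (ib_nonneg _)) (bre_nonneg _)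
    have hFint : Integrable (fun ω => indB1 0 a (T ω) * indB1 0 b (T ω) * bre (T ω a b)) P := by
      apply int_of_bdd hmeas
        (((meas_indB1 0 a).mul (meas_indB1 0 b)).mul (meas_bre_coord a b)) 1
      intro R
      rw [Pi.mul_apply, Pi.mul_apply, abs_mul, abs_mul]
      have h1 : |indB1 0 a R| * |indB1 0 b R| ≤ 1 :=
        mul_le_one₀ (indB1_abs_le _ _ _) (abs_nonneg _) (indB1_abs_le _ _ _)
      exact mul_le_one₀ h1 (abs_nonneg _) (bre_abs_le _)
    have hGint : Integrable (fun ω => indB1 0 a (T ω) * indB1 a b (T ω)) P := by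
      apply int_of_bdd hmeas ((meas_indB1 0 a).mul (meas_indB1 a b)) 1
      intro R
      rw [Pi.mul_apply, abs_mul]
      exact mul_le_one₀ (indB1_abs_le _ _ _) (abs_nonneg _) (indB1_abs_le _ _ _)
    have hFle : ∀ ω, indB1 0 a (T ω) * indB1 0 b (T ω) * bre (T ω a b)
        ≤ indB1 0 a (T ω) * indB1 a b (T ω) := by
      intro ω
      by_cases hp : (indB1 0 a (T ω) = 1 ∧ indB1 0 b (T ω) = 1 ∧ T ω a b = true)
      · obtain ⟨h1, h2, h3⟩ := hp
        have hq1 := ib_eq_one_iff.1 h1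
        have hq2 := ib_eq_one_iff.1 h2
        have hq3 : (T ω a b = true ∧ XF a (T ω) = XF b (T ω) ∧ YF a (T ω) = YF b (T ω)
            ∧ XF a (T ω) ≤ YF a (T ω)) := by
          refine ⟨h3, ?_, ?_, ?_⟩
          · rw [← hq1.2.1, ← hq2.2.1]
          · rw [← hq1.2.2.1, ← hq2.2.2.1]
          · rw [← hq1.2.1, ← hq1.2.2.1]
            exact hq1.2.2.2
        rw [h1, h2, show indB1 a b (T ω) = 1 from ib_pos hq3, bre_true h3]
        norm_num
      · have hz : indB1 0 a (T ω) * indB1 0 b (T ω) * bre (T ω a b) = 0 := by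
          rcases ib_mem (T ω 0 a = true ∧ XF 0 (T ω) = XF a (T ω) ∧ YF 0 (T ω) = YF a (T ω)
              ∧ XF 0 (T ω) ≤ YF 0 (T ω)) with h1 | h1
          · rw [show indB1 0 a (T ω) = 0 from h1]; ring
          · rcases ib_mem (T ω 0 b = true ∧ XF 0 (T ω) = XF b (T ω) ∧ YF 0 (T ω) = YF b (T ω)
                ∧ XF 0 (T ω) ≤ YF 0 (T ω)) with h2 | h2
            · rw [show indB1 0 b (T ω) = 0 from h2]; ring
            · rcases bre_mem (T ω a b) with h3 | h3
              · rw [h3]; ring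
              · exact absurd ⟨h1, h2, bre_eq_one_iff.1 h3⟩ hp
        rw [hz]
        exact mul_nonneg (ib_nonneg _) (ib_nonneg _)
    have hzero : ∫ ω, indB1 0 a (T ω) * indB1 0 b (T ω) * bre (T ω a b) ∂P = 0 := by
      have hle := integral_mono hFint hGint hFle
      rw [theta_const hmeas hinv ha hab, theta_zero hmeas hSTO hinv] at hle
      exact le_antisymm hle (integral_nonneg hFnn)
    have hae := (integral_eq_zero_iff_of_nonneg hFnn hFint).1 hzero
    filter_upwards [hae] with ω hω
    intro _ _ hcon
    obtain ⟨h1, h2, h3⟩ := hcon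
    have hω' : indB1 0 a (T ω) * indB1 0 b (T ω) * bre (T ω a b) = 0 := hω
    rw [h1, h2, bre_true h3] at hω'
    norm_num at hω'
  · filter_upwards with ω
    intro ha' hab'
    exact absurd ⟨ha', hab'⟩ hcond

lemma beta_const (hmeas : Measurable T)
    (hinv : ∀ f : ℤ → ℤ, StrictMono f →
      P.map (fun ω => fun m n => T ω (f m) (f n)) = P.map T)
    {a : ℤ} (ha : 0 < a) :
    ∫ ω, indB1 0 a (T ω) ∂P = ∫ ω, indB1 0 1 (T ω) ∂P := by
  have hconv := ae_conv hmeas hinv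
  have hf := fpair_mono (show (0:ℤ) < a from ha)
  rw [← int_inv hmeas hinv hf (meas_indB1 0 1)]
  apply integral_congr_ae
  filter_upwards [hconv] with ω hω
  have hpb := indB1_pb hf (fpair_tailL 0 a) (fpair_tailR 0 a) hω 0 1
  show indB1 0 a (T ω) = indB1 0 1 (pb (fpair 0 a) (T ω))
  rw [hpb, fpair_zero, fpair_one]

lemma prod_const (hmeas : Measurable T)
    (hinv : ∀ f : ℤ → ℤ, StrictMono f →
      P.map (fun ω => fun m n => T ω (f m) (f n)) = P.map T)
    {a b : ℤ} (ha : 0 < a) (hab : a < b) :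
    ∫ ω, indB1 0 a (T ω) * indB1 0 b (T ω) ∂P
      = ∫ ω, indB1 0 1 (T ω) * indB1 0 2 (T ω) ∂P := by
  have hconv := ae_conv hmeas hinv
  have hf := ftriple_mono (show (0:ℤ) < a from ha) hab
  rw [← int_inv hmeas hinv hf (G := fun R => indB1 0 1 R * indB1 0 2 R) ((meas_indB1 0 1).mul (meas_indB1 0 2))]
  apply integral_congr_ae
  filter_upwards [hconv] with ω hω
  have hpb1 := indB1_pb hf (ftriple_tailL 0 a b) (ftriple_tailR 0 a b) hω 0 1
  have hpb2 := indB1_pb hf (ftriple_tailL 0 a b) (ftriple_tailR 0 a b) hω 0 2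
  show indB1 0 a (T ω) * indB1 0 b (T ω)
      = indB1 0 1 (pb (ftriple 0 a b) (T ω)) * indB1 0 2 (pb (ftriple 0 a b) (T ω))
  rw [hpb1, hpb2, ftriple_zero, ftriple_one, ftriple_two]

set_option maxHeartbeats 1000000 in
theorem B1_int_zero (hmeas : Measurable T)
    (hSTO : ∀ ω, IsStrictTotalBool (T ω))
    (hinv : ∀ f : ℤ → ℤ, StrictMono f →
      P.map (fun ω => fun m n => T ω (f m) (f n)) = P.map T) :
    ∫ ω, indB1 0 1 (T ω) ∂P = 0 := by
  have hconv := ae_conv hmeas hinv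
  have hcf := chain_free hmeas hSTO hinv
  have hcprod : ∀ i j : ℕ, i ≠ j →
      ∫ ω, indB1 0 (1+(i:ℤ)) (T ω) * indB1 0 (1+(j:ℤ)) (T ω) ∂P
        = ∫ ω, indB1 0 1 (T ω) * indB1 0 2 (T ω) ∂P := by
    intro i j hij
    rcases lt_or_gt_of_ne hij with h | h
    · exact prod_const hmeas hinv (by omega) (by omega)
    · have h2 := prod_const hmeas hinv (a := 1+(j:ℤ)) (b := 1+(i:ℤ)) (by omega) (by omega)
      calc ∫ ω, indB1 0 (1+(i:ℤ)) (T ω) * indB1 0 (1+(j:ℤ)) (T ω) ∂P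
          = ∫ ω, indB1 0 (1+(j:ℤ)) (T ω) * indB1 0 (1+(i:ℤ)) (T ω) ∂P := by
            congr 1; funext ω; ring
      _ = _ := h2
  have hL2 := L2main P (fun j ω => indB1 0 (1+(j:ℤ)) (T ω))
    (fun j => (meas_indB1 0 _).comp hmeas)
    (fun j ω => ib_mem _)
    (∫ ω, indB1 0 1 (T ω) ∂P) (∫ ω, indB1 0 1 (T ω) * indB1 0 2 (T ω) ∂P)
    (fun j => beta_const hmeas hinv (by omega))
    hcprod
  have haeT : ∀ᵐ ω ∂P, Tendsto (avg (fun j => indB1 0 (1+(j:ℤ)) (T ω))) atTop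
      (nhds (limA (avg (fun j => indB1 0 (1+(j:ℤ)) (T ω))))) := by
    filter_upwards [hL2] with ω hω
    obtain ⟨L, hL⟩ := hω
    have hL0 : 0 ≤ L := le_of_tendsto_of_tendsto' tendsto_const_nhds hL
      (fun N => avg_nonneg (fun j => ib_nonneg _) N)
    rw [show limA (avg (fun j => indB1 0 (1+(j:ℤ)) (T ω))) = L from limA_spec hL0 hL]
    exact hL
  have haeD0 : ∀ᵐ ω ∂P, limA (avg (fun j => indB1 0 (1+(j:ℤ)) (T ω))) = 0 := by
    filter_upwards [haeT, hconv, hcf] with ω hT hω hchain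
    by_contra hne
    have hD0 : 0 ≤ limA (avg (fun j => indB1 0 (1+(j:ℤ)) (T ω))) := ENNReal.toReal_nonneg
    have hex : ∃ a : ℤ, 0 < a ∧ indB1 0 a (T ω) = 1 := by
      by_contra hnex
      push_neg at hnex
      have hz : ∀ j : ℕ, indB1 0 (1+(j:ℤ)) (T ω) = 0 := by
        intro j
        rcases ib_mem (T ω 0 (1+(j:ℤ)) = true ∧ XF 0 (T ω) = XF (1+(j:ℤ)) (T ω)
            ∧ YF 0 (T ω) = YF (1+(j:ℤ)) (T ω) ∧ XF 0 (T ω) ≤ YF 0 (T ω)) with h | h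
        · exact h
        · exact absurd h (hnex (1+(j:ℤ)) (by omega))
      have hzz : Tendsto (avg (fun j => indB1 0 (1+(j:ℤ)) (T ω))) atTop (nhds 0) := by
        have he : (avg (fun j => indB1 0 (1+(j:ℤ)) (T ω))) = fun _ => 0 := by
          funext N
          unfold avg
          rw [Finset.sum_congr rfl (fun j _ => hz j)]
          simp
        rw [he]
        exact tendsto_const_nhds
      exact hne (tendsto_nhds_unique hT hzz)
    obtain ⟨c, hc0, hcB⟩ := hex
    have hprop := ib_eq_one_iff.1 hcB
    have hterm : ∀ j : ℕ, c.toNat ≤ j →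
        indB1 0 (1+(j:ℤ)) (T ω) ≤ bre (T ω (1+(j:ℤ)) c) - bre (T ω (1+(j:ℤ)) 0) := by
      intro j hj
      have hc1 : (c.toNat : ℤ) = c := Int.toNat_of_nonneg hc0.le
      have hc2 : (c.toNat : ℤ) ≤ (j:ℤ) := by exact_mod_cast hj
      have hcj : c < 1 + (j:ℤ) := by omega
      by_cases hAj : indB1 0 (1+(j:ℤ)) (T ω) = 1
      · have hpj := ib_eq_one_iff.1 hAj
        have hnot := hchain c (1+(j:ℤ)) hc0 hcj
        have hTbc : ¬ T ω c (1+(j:ℤ)) = true := fun h => hnot ⟨hcB, hAj, h⟩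
        have h1 : T ω (1+(j:ℤ)) c = true := sto_total (hSTO ω) (by omega) hTbc
        have h2 : T ω (1+(j:ℤ)) 0 = false := by
          cases h : T ω (1+(j:ℤ)) 0
          · rfl
          · exact absurd h (fun h' => sto_asym (hSTO ω) hpj.1 h')
        rw [hAj, bre_true h1, bre_false h2]
        norm_num
      · have h0 : indB1 0 (1+(j:ℤ)) (T ω) = 0 := by
          rcases ib_mem (T ω 0 (1+(j:ℤ)) = true ∧ XF 0 (T ω) = XF (1+(j:ℤ)) (T ω)
              ∧ YF 0 (T ω) = YF (1+(j:ℤ)) (T ω) ∧ XF 0 (T ω) ≤ YF 0 (T ω)) with h | h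
          · exact h
          · exact absurd h hAj
        rw [h0]
        have hb : bre (T ω (1+(j:ℤ)) 0) ≤ bre (T ω (1+(j:ℤ)) c) :=
          bre_le_bre (fun h => (hSTO ω).2.1 _ _ _ h hprop.1)
        linarith
    have hucv : Tendsto (avg (fun j => bre (T ω (1+(j:ℤ)) c))) atTop
        (nhds (YF c (T ω))) := by
      apply cesaro_congr' (c.toNat) (fun j => bre_abs_le _) _ ((hω c).2)
      intro i
      unfold rseq
      have e : c + 1 + (i:ℤ) = 1 + ((i + c.toNat : ℕ):ℤ) := by
        push_cast [Int.toNat_of_nonneg hc0.le]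
        ring
      rw [e]
    have hwcv : Tendsto (avg (fun j => bre (T ω (1+(j:ℤ)) 0))) atTop
        (nhds (YF 0 (T ω))) := by
      have he : (fun j : ℕ => bre (T ω (1+(j:ℤ)) 0)) = rseq (T ω) 0 := by
        funext j
        unfold rseq
        have e : (0:ℤ) + 1 + (j:ℤ) = 1 + (j:ℤ) := by ring
        rw [e]
      rw [he]
      exact (hω 0).2
    have hub : ∀ j : ℕ, |indB1 0 (1+(j:ℤ)) (T ω)| ≤ 1 := fun j => ib_abs_le _
    have huw : ∀ j : ℕ, |bre (T ω (1+(j:ℤ)) c) - bre (T ω (1+(j:ℤ)) 0)| ≤ 1 := by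
      intro j
      rcases bre_mem (T ω (1+(j:ℤ)) c) with h1 | h1 <;>
        rcases bre_mem (T ω (1+(j:ℤ)) 0) with h2 | h2 <;>
        rw [h1, h2] <;> norm_num
    have hineq := avg_le_avg_tail (c.toNat) hub huw hterm
    have hrhs : Tendsto (fun N => avg (fun j => bre (T ω (1+(j:ℤ)) c)
        - bre (T ω (1+(j:ℤ)) 0)) N + 2*((c.toNat):ℝ)/N) atTop
        (nhds ((YF c (T ω) - YF 0 (T ω)) + 0)) := by
      apply Tendsto.add
      · exact (hucv.sub hwcv).congr (fun N => (avg_sub _ _ N).symm)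
      · exact Tendsto.const_div_atTop tendsto_natCast_atTop_atTop _
    have hD_le : limA (avg (fun j => indB1 0 (1+(j:ℤ)) (T ω)))
        ≤ (YF c (T ω) - YF 0 (T ω)) + 0 :=
      le_of_tendsto_of_tendsto' hT hrhs hineq
    have hYeq : YF 0 (T ω) = YF c (T ω) := hprop.2.2.1
    rw [← hYeq] at hD_le
    simp only [sub_self, add_zero] at hD_le
    exact hne (le_antisymm hD_le hD0)
  have hDL0 : ∫ ω, limA (avg (fun j => indB1 0 (1+(j:ℤ)) (T ω))) ∂P = 0 := by
    rw [integral_congr_ae haeD0]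
    simp
  have hdom : Tendsto (fun N => ∫ ω, avg (fun j => indB1 0 (1+(j:ℤ)) (T ω)) N ∂P) atTop
      (nhds (∫ ω, limA (avg (fun j => indB1 0 (1+(j:ℤ)) (T ω))) ∂P)) := by
    apply tendsto_integral_of_dominated_convergence (bound := fun _ => 1)
    · intro N
      exact (Measurable.const_mul
        (Finset.measurable_sum _ (fun j _ => (meas_indB1 0 _).comp hmeas)) _).aestronglyMeasurable
    · exact integrable_const 1
    · intro N
      apply Filter.Eventually.of_forall
      intro ω
      rw [Real.norm_eq_abs]
      exact abs_avg_le_one (fun j => ib_nonneg _) (fun j => ib_le_one _) N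
    · exact haeT
  have hconst : ∀ N : ℕ, 1 ≤ N →
      ∫ ω, avg (fun j => indB1 0 (1+(j:ℤ)) (T ω)) N ∂P = ∫ ω, indB1 0 1 (T ω) ∂P := by
    intro N hN
    have hNr : (N:ℝ) ≠ 0 := by positivity
    unfold avg
    rw [integral_const_mul]
    rw [integral_finset_sum _ (fun j _ => int_of_bdd hmeas (meas_indB1 0 _) 1
      (fun R => indB1_abs_le _ _ _))]
    have e : ∀ j ∈ range N, ∫ ω, indB1 0 (1+(j:ℤ)) (T ω) ∂P
        = ∫ ω, indB1 0 1 (T ω) ∂P := fun j _ => beta_const hmeas hinv (by omega)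
    rw [Finset.sum_congr rfl e, Finset.sum_const, Finset.card_range, nsmul_eq_mul]
    field_simp
  have h1 : Tendsto (fun N => ∫ ω, avg (fun j => indB1 0 (1+(j:ℤ)) (T ω)) N ∂P) atTop
      (nhds (∫ ω, indB1 0 1 (T ω) ∂P)) := by
    apply tendsto_const_nhds.congr'
    filter_upwards [eventually_ge_atTop 1] with N hN
    exact (hconst N hN).symm
  have h2 := tendsto_nhds_unique h1 hdom
  rw [hDL0] at h2
  exact h2

theorem bad_null (hmeas : Measurable T)
    (hSTO : ∀ ω, IsStrictTotalBool (T ω))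
    (hinv : ∀ f : ℤ → ℤ, StrictMono f →
      P.map (fun ω => fun m n => T ω (f m) (f n)) = P.map T) :
    ∀ᵐ ω ∂P, ∀ x : ℤ, ∀ y : ℤ, x < y →
      indB1 x y (T ω) = 0 ∧ indB2 x y (T ω) = 0 := by
  rw [ae_all_iff]
  intro x
  rw [ae_all_iff]
  intro y
  by_cases hxy : x < y
  · have hf := fpair_mono hxy
    have h1 : ∫ ω, indB1 x y (T ω) ∂P = 0 := by
      have ht := int_inv hmeas hinv hf (meas_indB1 0 1)
      have he : ∫ ω, indB1 x y (T ω) ∂P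
          = ∫ ω, indB1 0 1 (pb (fpair x y) (T ω)) ∂P := by
        apply integral_congr_ae
        filter_upwards [ae_conv hmeas hinv] with ω hω
        have hpb := indB1_pb hf (fpair_tailL x y) (fpair_tailR x y) hω 0 1
        rw [hpb, fpair_zero, fpair_one]
      rw [he, ht, B1_int_zero hmeas hSTO hinv]
    have h2 : ∫ ω, indB2 x y (T ω) ∂P = 0 := by
      have ht := int_inv hmeas hinv hf (meas_indB2 0 1)
      have he : ∫ ω, indB2 x y (T ω) ∂P
          = ∫ ω, indB2 0 1 (pb (fpair x y) (T ω)) ∂P := by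
        apply integral_congr_ae
        filter_upwards [ae_conv hmeas hinv] with ω hω
        have hpb := indB2_pb hf (fpair_tailL x y) (fpair_tailR x y) hω 0 1
        rw [hpb, fpair_zero, fpair_one]
      rw [he, ht, B2_int_zero hmeas hSTO hinv]
    have hae1 := (integral_eq_zero_iff_of_nonneg (fun ω => ib_nonneg _)
      (int_of_bdd hmeas (meas_indB1 x y) 1 (fun R => indB1_abs_le _ _ _))).1 h1
    have hae2 := (integral_eq_zero_iff_of_nonneg (fun ω => ib_nonneg _)
      (int_of_bdd hmeas (meas_indB2 x y) 1 (fun R => indB2_abs_le _ _ _))).1 h2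
    filter_upwards [hae1, hae2] with ω g1 g2
    intro _
    exact ⟨g1, g2⟩
  · filter_upwards with ω h
    exact absurd h hxy

end Bad

section Final

lemma ite_eq_bre (b : Bool) : (if b then (1:ℝ) else 0) = bre b := rfl

lemma sum_Icc_lseq (R : Arr) (n : ℤ) (hnn : R n n = false) (N : ℕ) (hNn : -(N:ℤ) ≤ n) :
    ∑ k ∈ Finset.Icc (-(N:ℤ)) n, (if R k n then (1:ℝ) else 0)
      = ∑ j ∈ range ((n + (N:ℤ)).toNat), lseq R n j := by
  set M := (n + (N:ℤ)).toNat with hMdef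
  have hM : ((M : ℕ):ℤ) = n + (N:ℤ) := Int.toNat_of_nonneg (by omega)
  have hIcc : Finset.Icc (-(N:ℤ)) n
      = Finset.map ⟨fun (j:ℕ) => n - (j:ℤ), show Function.Injective (fun (j:ℕ) => n - (j:ℤ)) from fun a b hab => by
          have h9 : n - (a:ℤ) = n - (b:ℤ) := hab
          omega⟩ (range (M+1)) := by
    ext k
    simp only [Finset.mem_Icc, Finset.mem_map, Finset.mem_range,
      Function.Embedding.coeFn_mk]
    constructor
    · rintro ⟨h1, h2⟩
      refine ⟨(n - k).toNat, ?_, ?_⟩ <;> omega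
    · rintro ⟨j, hj, rfl⟩
      have hj' : (j:ℤ) < (M:ℤ) + 1 := by exact_mod_cast hj
      omega
  rw [hIcc, Finset.sum_map]
  simp only [Function.Embedding.coeFn_mk]
  rw [Finset.sum_range_succ' (fun j => if R (n - (j:ℤ)) n then (1:ℝ) else 0) M]
  have h00 : (if R (n - ((0:ℕ):ℤ)) n then (1:ℝ) else 0) = 0 := by
    have h1 : n - ((0:ℕ):ℤ) = n := by push_cast; ring
    rw [h1, hnn]
    simp
  rw [h00, add_zero]
  apply Finset.sum_congr rfl
  intro j _
  rw [ite_eq_bre]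
  unfold lseq
  have e : n - ((j+1 : ℕ):ℤ) = n - 1 - (j:ℤ) := by push_cast; ring
  rw [e]

lemma sum_Icc_rseq (R : Arr) (n : ℤ) (hnn : R n n = false) (N : ℕ) (hNn : n ≤ (N:ℤ)) :
    ∑ k ∈ Finset.Icc n (N:ℤ), (if R k n then (1:ℝ) else 0)
      = ∑ j ∈ range (((N:ℤ) - n).toNat), rseq R n j := by
  set M := ((N:ℤ) - n).toNat with hMdef
  have hM : ((M : ℕ):ℤ) = (N:ℤ) - n := Int.toNat_of_nonneg (by omega)
  have hIcc : Finset.Icc n (N:ℤ)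
      = Finset.map ⟨fun (j:ℕ) => n + (j:ℤ), show Function.Injective (fun (j:ℕ) => n + (j:ℤ)) from fun a b hab => by
          have h9 : n + (a:ℤ) = n + (b:ℤ) := hab
          omega⟩ (range (M+1)) := by
    ext k
    simp only [Finset.mem_Icc, Finset.mem_map, Finset.mem_range,
      Function.Embedding.coeFn_mk]
    constructor
    · rintro ⟨h1, h2⟩
      refine ⟨(k - n).toNat, ?_, ?_⟩ <;> omega
    · rintro ⟨j, hj, rfl⟩
      have hj' : (j:ℤ) < (M:ℤ) + 1 := by exact_mod_cast hj
      omega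
  rw [hIcc, Finset.sum_map]
  simp only [Function.Embedding.coeFn_mk]
  rw [Finset.sum_range_succ' (fun j => if R (n + (j:ℤ)) n then (1:ℝ) else 0) M]
  have h00 : (if R (n + ((0:ℕ):ℤ)) n then (1:ℝ) else 0) = 0 := by
    have h1 : n + ((0:ℕ):ℤ) = n := by push_cast; ring
    rw [h1, hnn]
    simp
  rw [h00, add_zero]
  apply Finset.sum_congr rfl
  intro j _
  rw [ite_eq_bre]
  unfold rseq
  have e : n + ((j+1 : ℕ):ℤ) = n + 1 + (j:ℤ) := by push_cast; ring
  rw [e]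

lemma ratio_tendsto (n : ℤ) :
    Tendsto (fun N : ℕ => (((n + (N:ℤ)).toNat : ℝ)/(N:ℝ))) atTop (nhds 1) := by
  have he : ∀ᶠ N : ℕ in atTop,
      (((n + (N:ℤ)).toNat : ℝ)/(N:ℝ)) = 1 + (n:ℝ)/(N:ℝ) := by
    filter_upwards [eventually_ge_atTop (max 1 (-n).toNat)] with N hN
    have hN1 : 1 ≤ N := le_trans (le_max_left _ _) hN
    have hNn : (-n) ≤ (N:ℤ) := by
      have h1 := le_trans (le_max_right _ _) hN
      have h2 : ((-n).toNat:ℤ) ≤ (N:ℤ) := by exact_mod_cast h1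
      have h3 := Int.self_le_toNat (-n)
      omega
    have h0 : (0:ℤ) ≤ n + (N:ℤ) := by omega
    have h4 : (((n + (N:ℤ)).toNat : ℕ):ℤ) = n + (N:ℤ) := Int.toNat_of_nonneg h0
    have hcast : (((n + (N:ℤ)).toNat : ℕ):ℝ) = (n:ℝ) + (N:ℝ) := by
      have h5 : ((((n + (N:ℤ)).toNat : ℕ):ℤ):ℝ) = ((n + (N:ℤ) : ℤ):ℝ) := by
        exact_mod_cast congrArg (fun z : ℤ => (z:ℝ)) h4
      push_cast at h5
      exact h5
    rw [hcast]
    have hNr : (N:ℝ) ≠ 0 := by positivity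
    field_simp
    ring
  rw [tendsto_congr' he]
  have h6 := Tendsto.const_div_atTop (tendsto_natCast_atTop_atTop (R := ℝ)) (n:ℝ)
  have h7 := Tendsto.const_add (1:ℝ) h6
  simpa using h7

lemma ratio_tendsto' (n : ℤ) :
    Tendsto (fun N : ℕ => ((((N:ℤ) - n).toNat : ℝ)/(N:ℝ))) atTop (nhds 1) := by
  have := ratio_tendsto (-n)
  have he : (fun N : ℕ => (((-n + (N:ℤ)).toNat : ℝ)/(N:ℝ)))
      = fun N : ℕ => ((((N:ℤ) - n).toNat : ℝ)/(N:ℝ)) := by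
    funext N
    have : -n + (N:ℤ) = (N:ℤ) - n := by ring
    rw [this]
  rw [he] at this
  exact this

end Final

end IIOR

open IIOR

/-- If `⊲` is a random strict total order on `ℤ` with law invariant under all strictly
increasing maps of `ℤ`, then a.s. for every `n` the limits
`X_n = lim (1/N) Σ_{k=-N}^{n} 1_{k ⊲ n}` and `Y_n = lim (1/N) Σ_{k=n}^{N} 1_{k ⊲ n}` exist,
and for all `m < n`, `m ⊲ n` iff `X_m < X_n`, or `Y_m < Y_n`, or
(`X_m = X_n` and `Y_m = Y_n` and `X_m > Y_m`). -/
theorem I_invariant_order_representation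
    {Ω : Type*} [MeasurableSpace Ω] (P : Measure Ω) [IsProbabilityMeasure P]
    (T : Ω → ℤ → ℤ → Bool) (hmeas : Measurable T)
    (hSTO : ∀ ω, IsStrictTotalBool (T ω))
    (hinv : ∀ f : ℤ → ℤ, StrictMono f →
      P.map (fun ω => fun m n => T ω (f m) (f n)) = P.map T) :
    ∀ᵐ ω ∂P, ∃ X Y : ℤ → ℝ,
      (∀ n : ℤ,
        Tendsto (fun N : ℕ => (N : ℝ)⁻¹ *
            ∑ k ∈ Finset.Icc (-(N:ℤ)) n, if T ω k n then (1:ℝ) else 0)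
          atTop (nhds (X n)) ∧
        Tendsto (fun N : ℕ => (N : ℝ)⁻¹ *
            ∑ k ∈ Finset.Icc n (N:ℤ), if T ω k n then (1:ℝ) else 0)
          atTop (nhds (Y n))) ∧
      ∀ m n : ℤ, m < n →
        (T ω m n = true ↔
          X m < X n ∨ Y m < Y n ∨ (X m = X n ∧ Y m = Y n ∧ Y m < X m)) := by
  have hconv := ae_conv (P := P) (T := T) hmeas hinv
  have hbad := bad_null (P := P) (T := T) hmeas hSTO hinv
  filter_upwards [hconv, hbad] with ω hω hbadω
  refine ⟨fun c => XF c (T ω), fun c => YF c (T ω), fun n => ⟨?_, ?_⟩, ?_⟩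
  · have hdil := cesaro_dil (hω n).1 (fun N => (n + (N:ℤ)).toNat) (ratio_tendsto n)
    apply hdil.congr'
    filter_upwards [eventually_ge_atTop (-n).toNat] with N hN
    have hNn : -(N:ℤ) ≤ n := by
      have h2 : ((-n).toNat:ℤ) ≤ (N:ℤ) := by exact_mod_cast hN
      have h3 := Int.self_le_toNat (-n)
      omega
    congr 1
    exact (sum_Icc_lseq (T ω) n ((hSTO ω).1 n) N hNn).symm
  · have hdil := cesaro_dil (hω n).2 (fun N => ((N:ℤ) - n).toNat) (ratio_tendsto' n)
    apply hdil.congr'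
    filter_upwards [eventually_ge_atTop n.toNat] with N hN
    have hNn : n ≤ (N:ℤ) := by
      have h2 : (n.toNat:ℤ) ≤ (N:ℤ) := by exact_mod_cast hN
      have h3 := Int.self_le_toNat n
      omega
    congr 1
    exact (sum_Icc_rseq (T ω) n ((hSTO ω).1 n) N hNn).symm
  · intro m n hmn
    have hne : m ≠ n := ne_of_lt hmn
    have h1 := hbadω m n hmn
    constructor
    · intro hT
      by_cases hX : XF m (T ω) < XF n (T ω)
      · exact Or.inl hX
      by_cases hY : YF m (T ω) < YF n (T ω)
      · exact Or.inr (Or.inl hY)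
      have hX1 : ¬ XF n (T ω) < XF m (T ω) := fun h =>
        sto_asym (hSTO ω) hT (detX (hSTO ω) hω (Ne.symm hne) h)
      have hY1 : ¬ YF n (T ω) < YF m (T ω) := fun h =>
        sto_asym (hSTO ω) hT (detY (hSTO ω) hω (Ne.symm hne) h)
      have hXeq : XF m (T ω) = XF n (T ω) := le_antisymm (not_lt.1 hX1) (not_lt.1 hX)
      have hYeq : YF m (T ω) = YF n (T ω) := le_antisymm (not_lt.1 hY1) (not_lt.1 hY)
      refine Or.inr (Or.inr ⟨hXeq, hYeq, ?_⟩)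
      by_contra hYX
      push_neg at hYX
      have h2 : indB1 m n (T ω) = 1 := ib_pos ⟨hT, hXeq, hYeq, hYX⟩
      rw [h1.1] at h2
      norm_num at h2
    · rintro (h | h | ⟨hXeq, hYeq, hYX⟩)
      · exact detX (hSTO ω) hω hne h
      · exact detY (hSTO ω) hω hne h
      · by_contra hT
        have hnm : T ω n m = true := sto_total (hSTO ω) hne hT
        have h2 : indB2 m n (T ω) = 1 := ib_pos ⟨hnm, hXeq, hYeq, hYX⟩
        rw [h1.2] at h2
        norm_num at h2
end
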